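/- arXiv:1604.06859 — 5 statements merged into one kernel-verified Lean document; each statement's English description precedes it below -/
import Mathlib

section
/- Let p be the transition kernel of a random walk on a connected finite graph G = (V,E) (transitions only between neighbors or self-loops), equipped with the graph distance d. If (V,p,d) has coarse Ricci curvature at least 1/α > 0, then the stationary measure π satisfies W₁(μ,π)² ≤ (2α/(2−1/α))·H(μ‖π) for every probability measure μ on V. -/
open scoped BigOperators

noncomputable section

/-- A probability mass function on a (countable) space. -/
def IsProb {Ω : Type*} (μ : Ω → ℝ) : Prop :=
  (∀ x, 0 ≤ μ x) ∧ HasSum μ 1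

/-- A coupling of two probability mass functions. -/
def IsCoupling {Ω : Type*} (γ : Ω × Ω → ℝ) (μ ν : Ω → ℝ) : Prop :=
  (∀ z, 0 ≤ γ z) ∧ (∀ x, HasSum (fun y => γ (x, y)) (μ x)) ∧
    (∀ y, HasSum (fun x => γ (x, y)) (ν y))

/-- Wasserstein 1-distance with cost `d`: infimum of the expected cost over couplings. -/
def W1 {Ω : Type*} (d : Ω → Ω → ℝ) (μ ν : Ω → ℝ) : ℝ :=
  sInf { r | ∃ γ, IsCoupling γ μ ν ∧ HasSum (fun z : Ω × Ω => γ z * d z.1 z.2) r }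

/-- Relative entropy (Kullback divergence) `H(ν‖μ)` on a countable space. -/
def relent {Ω : Type*} (ν μ : Ω → ℝ) : ℝ :=
  ∑' x, ν x * Real.log (ν x / μ x)

/-- Absolute continuity of pmfs. -/
def AC {Ω : Type*} (ν μ : Ω → ℝ) : Prop := ∀ x, ν x ≠ 0 → μ x ≠ 0

/-- `f` is `L`-Lipschitz with respect to the cost `d`. -/
def LipWith {Ω : Type*} (d : Ω → Ω → ℝ) (L : ℝ) (f : Ω → ℝ) : Prop :=
  ∀ x y, |f x - f y| ≤ L * d x y

/-- The Lipschitz seminorm `‖f‖_Lip` (least Lipschitz constant). -/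
def lipNorm {Ω : Type*} (d : Ω → Ω → ℝ) (f : Ω → ℝ) : ℝ :=
  sInf { L | 0 ≤ L ∧ LipWith d L f }


section ConeClosed

variable {E : Type*} [NormedAddCommGroup E] [NormedSpace ℝ E] [FiniteDimensional ℝ E]


variable {E : Type*} [NormedAddCommGroup E] [NormedSpace ℝ E] [FiniteDimensional ℝ E]

lemma conic_caratheodory {ι : Type*} [Fintype ι] [DecidableEq ι] (v : ι → E) :
    ∀ (S : Finset ι) (a : ι → ℝ), (∀ i, 0 ≤ a i) → (∀ i ∉ S, a i = 0) →
    ∃ (T : Finset ι) (b : ι → ℝ), LinearIndependent ℝ (fun i : T => v i) ∧ (∀ i, 0 ≤ b i) ∧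
      (∀ i ∉ T, b i = 0) ∧ ∑ i, b i • v i = ∑ i, a i • v i := by
  intro S
  induction S using Finset.strongInduction with
  | _ S ih =>
  intro a ha ha0
  by_cases hind : LinearIndependent ℝ (fun i : S => v i)
  · exact ⟨S, a, hind, ha, ha0, rfl⟩
  · obtain ⟨g, hg0, j, hgj⟩ := Fintype.not_linearIndependent_iff.mp hind
    set c : ι → ℝ := fun i => if h : i ∈ S then g ⟨i, h⟩ else 0 with hc
    have hcsum : ∑ i, c i • v i = 0 := by
      rw [← Finset.sum_subset (Finset.subset_univ S)
        (by intro i _ hi; simp [hc, hi])]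
      rw [← Finset.sum_attach S (fun i => c i • v i)]
      simpa [hc] using hg0
    have hcj : c (j : ι) ≠ 0 := by simp [hc, j.2, hgj]
    -- WLOG there is a positive coordinate (else replace c by -c)
    have key : ∀ c : ι → ℝ, (∀ i ∉ S, c i = 0) → (∑ i, c i • v i = 0) →
        (∃ i ∈ S, 0 < c i) →
        ∃ (T : Finset ι) (b : ι → ℝ), LinearIndependent ℝ (fun i : T => v i) ∧ (∀ i, 0 ≤ b i) ∧
          (∀ i ∉ T, b i = 0) ∧ ∑ i, b i • v i = ∑ i, a i • v i := by
      intro c hc0 hcsum ⟨i₁, hi₁S, hi₁⟩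
      set P : Finset ι := S.filter (fun i => 0 < c i) with hP
      have hPne : P.Nonempty := ⟨i₁, by simp [hP, hi₁S, hi₁]⟩
      obtain ⟨i₀, hi₀P, hi₀min⟩ := P.exists_min_image (fun i => a i / c i) hPne
      have hci₀ : 0 < c i₀ := (Finset.mem_filter.mp hi₀P).2
      set τ := a i₀ / c i₀ with hτ
      have hτ0 : 0 ≤ τ := div_nonneg (ha i₀) hci₀.le
      set b : ι → ℝ := fun i => a i - τ * c i with hb
      have hbnn : ∀ i, 0 ≤ b i := by
        intro i
        by_cases hiP : i ∈ P
        · have hci : 0 < c i := (Finset.mem_filter.mp hiP).2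
          have h1 := hi₀min i hiP
          rw [div_le_div_iff₀ hci₀ hci] at h1
          have h2 : τ * c i ≤ a i := by
            rw [hτ, div_mul_eq_mul_div, div_le_iff₀ hci₀]; linarith
          simp only [hb]; linarith
        · by_cases hiS : i ∈ S
          · have : ¬ 0 < c i := fun h => hiP (Finset.mem_filter.mpr ⟨hiS, h⟩)
            have : c i ≤ 0 := not_lt.mp this
            simp only [hb]; nlinarith [ha i]
          · simp [hb, hc0 i hiS, ha i]
      have hb0 : ∀ i ∉ S.erase i₀, b i = 0 := by
        intro i hi
        by_cases hii : i = i₀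
        · subst hii
          simp only [hb, hτ]
          field_simp
          ring
        · have h : i ∉ S := by
            intro hiS
            exact hi (Finset.mem_erase.mpr ⟨hii, hiS⟩)
          simp [hb, ha0 i h, hc0 i h]
      have hbsum : ∑ i, b i • v i = ∑ i, a i • v i := by
        simp only [hb, sub_smul, Finset.sum_sub_distrib, mul_smul]
        rw [← Finset.smul_sum, hcsum, smul_zero, sub_zero]
      obtain ⟨T, b', h1, h2, h3, h4⟩ := ih (S.erase i₀) (Finset.erase_ssubset (Finset.mem_filter.mp hi₀P).1) b hbnn hb0
      exact ⟨T, b', h1, h2, h3, h4.trans hbsum⟩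
    rcases lt_or_gt_of_ne hcj with hneg | hpos
    · exact key (fun i => - c i) (fun i hi => by simp [hc, hi])
        (by simp only [neg_smul, Finset.sum_neg_distrib, hcsum, neg_zero])
        ⟨j, j.2, by simpa using hneg⟩
    · exact key c (by intro i hi; simp [hc, hi]) hcsum ⟨j, j.2, hpos⟩

lemma isClosed_conicHull {ι : Type*} [Fintype ι] [DecidableEq ι] (v : ι → E) :
    IsClosed {x : E | ∃ a : ι → ℝ, (∀ i, 0 ≤ a i) ∧ ∑ i, a i • v i = x} := by
  have hrw : {x : E | ∃ a : ι → ℝ, (∀ i, 0 ≤ a i) ∧ ∑ i, a i • v i = x} =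
      ⋃ T : {T : Finset ι // LinearIndependent ℝ (fun i : T => v i)},
        {x : E | ∃ a : ι → ℝ, (∀ i, 0 ≤ a i) ∧ (∀ i ∉ T.1, a i = 0) ∧ ∑ i, a i • v i = x} := by
    ext x
    simp only [Set.mem_setOf_eq, Set.mem_iUnion]
    constructor
    · rintro ⟨a, ha, rfl⟩
      obtain ⟨T, b, h1, h2, h3, h4⟩ := conic_caratheodory v Finset.univ a ha (by simp)
      exact ⟨⟨T, h1⟩, b, h2, h3, h4⟩
    · rintro ⟨T, a, ha, _, rfl⟩
      exact ⟨a, ha, rfl⟩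
  rw [hrw]
  apply isClosed_iUnion_of_finite
  rintro ⟨T, hT⟩
  -- the simplicial cone on T is the image of the nonnegative orthant under
  -- an injective linear map
  set L : (T → ℝ) →ₗ[ℝ] E :=
    { toFun := fun c => ∑ i : T, c i • v i
      map_add' := by intro c c'; simp only [Pi.add_apply, add_smul, Finset.sum_add_distrib]
      map_smul' := by
        intro r c
        simp only [Pi.smul_apply, smul_eq_mul, mul_smul, Finset.smul_sum, RingHom.id_apply] } with hL
  have hinj : Function.Injective L := by
    rw [injective_iff_map_eq_zero]
    intro c hc
    rw [Fintype.linearIndependent_iff] at hT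
    exact funext (hT c hc)
  show IsClosed {x : E | ∃ a : ι → ℝ, (∀ i, 0 ≤ a i) ∧ (∀ i ∉ T, a i = 0) ∧ ∑ i, a i • v i = x}
  have himg : {x : E | ∃ a : ι → ℝ, (∀ i, 0 ≤ a i) ∧ (∀ i ∉ T, a i = 0) ∧ ∑ i, a i • v i = x}
      = L '' {c : T → ℝ | ∀ i, 0 ≤ c i} := by
    ext x
    simp only [Set.mem_setOf_eq, Set.mem_image, hL, LinearMap.coe_mk, AddHom.coe_mk]
    constructor
    · rintro ⟨a, ha, ha0, rfl⟩
      refine ⟨fun i => a i, fun i => ha i, ?_⟩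
      rw [Finset.sum_coe_sort T (fun i => a i • v i)]
      exact (Finset.sum_subset (Finset.subset_univ T)
        (fun i _ hi => by simp [ha0 i hi]))
    · rintro ⟨c, hc, rfl⟩
      refine ⟨fun i => if h : i ∈ T then c ⟨i, h⟩ else 0, ?_, ?_, ?_⟩
      · intro i; by_cases h : i ∈ T <;> simp [h, hc]
      · intro i hi; simp [hi]
      · rw [← Finset.sum_subset (Finset.subset_univ T)
          (fun i _ hi => by simp [hi])]
        rw [← Finset.sum_coe_sort T fun i => (if h : i ∈ T then c ⟨i, h⟩ else 0) • v i]
        exact Finset.sum_congr rfl fun i _ => by simp [i.2]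
  rw [himg]
  have : Topology.IsClosedEmbedding L :=
    LinearMap.isClosedEmbedding_of_injective (LinearMap.ker_eq_bot.mpr hinj)
  have hcl : IsClosed {c : T → ℝ | ∀ i, 0 ≤ c i} := by
    have : {c : T → ℝ | ∀ i, 0 ≤ c i} = ⋂ i, {c : T → ℝ | 0 ≤ c i} := by
      ext c; simp
    rw [this]
    exact isClosed_iInter fun i => isClosed_le continuous_const (continuous_apply i)
  exact this.isClosedMap _ hcl

end ConeClosed

section HoeffdingLemma
open Real

lemma hoeffding_core {p : ℝ} (hp0 : 0 ≤ p) (hp1 : p ≤ 1) (h : ℝ) :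
    Real.log (1 - p + p * Real.exp h) ≤ p * h + h ^ 2 / 8 := by
  set D : ℝ → ℝ := fun s => 1 - p + p * Real.exp s with hD
  have hDpos : ∀ s, 0 < D s := by
    intro s
    rcases eq_or_lt_of_le hp1 with h1 | h1
    · have : p * Real.exp s > 0 := mul_pos (by linarith) (Real.exp_pos s)
      simp only [hD]; linarith
    · have : 0 ≤ p * Real.exp s := mul_nonneg hp0 (Real.exp_pos s).le
      simp only [hD]; linarith
  set ψ : ℝ → ℝ := fun s => p * Real.exp s / D s - p with hψ
  set φ : ℝ → ℝ := fun s => Real.log (D s) - p * s with hφ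
  have hDderiv : ∀ s, HasDerivAt D (p * Real.exp s) s := fun s =>
    ((Real.hasDerivAt_exp s).const_mul p).const_add (1 - p)
  have hφderiv : ∀ s, HasDerivAt φ (ψ s) s := by
    intro s
    have h1 : HasDerivAt (fun s => Real.log (D s)) (p * Real.exp s / D s) s :=
      (hDderiv s).log (hDpos s).ne'
    have h2 : HasDerivAt (fun s : ℝ => p * s) p s := by
      simpa using (hasDerivAt_id s).const_mul p
    exact h1.sub h2
  have hψderiv : ∀ s, HasDerivAt ψ (p * Real.exp s * (1 - p) / (D s) ^ 2) s := by
    intro s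
    have h1 : HasDerivAt (fun s => p * Real.exp s) (p * Real.exp s) s :=
      (Real.hasDerivAt_exp s).const_mul p
    have h2 := h1.div (hDderiv s) (hDpos s).ne'
    have hDe : D s - p * Real.exp s = 1 - p := by simp only [hD]; ring
    have he : (p * Real.exp s * D s - p * Real.exp s * (p * Real.exp s)) / (D s) ^ 2
        = p * Real.exp s * (1 - p) / (D s) ^ 2 := by
      rw [← mul_sub, hDe]
    rw [he] at h2
    exact h2.sub_const p
  have hψbound : ∀ s, |p * Real.exp s * (1 - p) / (D s) ^ 2| ≤ 1 / 4 := by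
    intro s
    have hnum : 0 ≤ p * Real.exp s * (1 - p) :=
      mul_nonneg (mul_nonneg hp0 (Real.exp_pos s).le) (by linarith)
    have hden : 0 < (D s) ^ 2 := pow_pos (hDpos s) 2
    rw [abs_of_nonneg (div_nonneg hnum hden.le), div_le_iff₀ hden]
    have hDs : D s = (1 - p) + p * Real.exp s := by simp only [hD]
    nlinarith [sq_nonneg ((1 - p) - p * Real.exp s)]
  have hψ0 : ψ 0 = 0 := by
    have : D 0 = 1 := by simp [hD]
    simp [hψ, this]
  -- |ψ s| ≤ |s| / 4
  have hψle : ∀ s, |ψ s| ≤ |s| / 4 := by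
    intro s
    have := Convex.norm_image_sub_le_of_norm_hasDerivWithin_le
      (fun x _ => (hψderiv x).hasDerivWithinAt) (fun x _ => hψbound x)
      (convex_univ) (Set.mem_univ 0) (Set.mem_univ s)
    rw [hψ0, sub_zero] at this
    rw [Real.norm_eq_abs, Real.norm_eq_abs, sub_zero] at this
    linarith
  -- now compare φ with s^2/8
  set χ : ℝ → ℝ := fun s => s ^ 2 / 8 - φ s with hχ
  have hχderiv : ∀ s, HasDerivAt χ (s / 4 - ψ s) s := by
    intro s
    have h1 : HasDerivAt (fun s : ℝ => s ^ 2 / 8) (s / 4) s := by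
      have h2 := (hasDerivAt_pow 2 s).div_const 8
      exact h2.congr_deriv (by rw [show (2:ℕ) - 1 = 1 from rfl, pow_one]; push_cast; ring)
    exact h1.sub (hφderiv s)
  have hχ0 : χ 0 = 0 := by
    have : D 0 = 1 := by simp [hD]
    simp [hχ, hφ, this]
  have hφle : ∀ s, φ s ≤ s ^ 2 / 8 := by
    intro s
    rcases le_or_gt 0 s with hs | hs
    · have hmono : MonotoneOn χ (Set.Ici 0) := by
        refine monotoneOn_of_deriv_nonneg (convex_Ici 0)
          (Continuous.continuousOn
            (Differentiable.continuous fun x => (hχderiv x).differentiableAt))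
          (fun x _ => ((hχderiv x).differentiableAt).differentiableWithinAt) ?_
        · intro x hx
          rw [(hχderiv x).deriv]
          have := hψle x
          have hx0 : 0 ≤ x := le_of_lt (by simpa using hx)
          rw [abs_of_nonneg hx0] at this
          have := abs_le.mp (hψle x)
          rw [abs_of_nonneg hx0] at this
          linarith [this.2]
      have := hmono (Set.mem_Ici.mpr le_rfl) (Set.mem_Ici.mpr hs) hs
      rw [hχ0] at this
      simp only [hχ] at this
      linarith
    · have hmono : AntitoneOn χ (Set.Iic 0) := by
        refine antitoneOn_of_deriv_nonpos (convex_Iic 0)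
          (Continuous.continuousOn
            (Differentiable.continuous fun x => (hχderiv x).differentiableAt))
          (fun x _ => ((hχderiv x).differentiableAt).differentiableWithinAt) ?_
        · intro x hx
          rw [(hχderiv x).deriv]
          have hx0 : x ≤ 0 := le_of_lt (by simpa using hx)
          have := abs_le.mp (hψle x)
          rw [abs_of_nonpos hx0] at this
          linarith [this.1]
      have := hmono (Set.mem_Iic.mpr hs.le) (Set.mem_Iic.mpr le_rfl) hs.le
      rw [hχ0] at this
      simp only [hχ] at this
      linarith
  have := hφle h
  simp only [hφ] at this
  linarith

lemma hoeffding_pmf {V : Type*} [Fintype V] (w : V → ℝ) (hw : ∀ x, 0 ≤ w x)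
    (hw1 : ∑ x, w x = 1) (g : V → ℝ) (a L t : ℝ) (hL : 0 ≤ L)
    (hg : ∀ x, w x ≠ 0 → a ≤ g x ∧ g x ≤ a + 2 * L) :
    ∑ x, w x * Real.exp (t * g x) ≤ Real.exp (t * (∑ x, w x * g x) + t ^ 2 * L ^ 2 / 2) := by
  rcases eq_or_lt_of_le hL with hL0 | hLpos
  · -- degenerate case L = 0
    have hga : ∀ x, w x ≠ 0 → g x = a := by
      intro x hx; have := hg x hx; rw [← hL0] at this
      have h1 := this.1; have h2 := this.2; linarith
    have h1 : ∑ x, w x * Real.exp (t * g x) = Real.exp (t * a) := by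
      rw [show Real.exp (t*a) = ∑ x, w x * Real.exp (t*a) by
        rw [← Finset.sum_mul, hw1, one_mul]]
      refine Finset.sum_congr rfl fun x _ => ?_
      by_cases hx : w x = 0
      · rw [hx]; ring
      · rw [hga x hx]
    have h2 : ∑ x, w x * g x = a := by
      rw [show a = ∑ x, w x * a by rw [← Finset.sum_mul, hw1, one_mul]]
      refine Finset.sum_congr rfl fun x _ => ?_
      by_cases hx : w x = 0
      · rw [hx]; ring
      · rw [hga x hx]
    rw [h1, h2, ← hL0]
    norm_num
  · -- nondegenerate case
    set b := a + 2 * L with hb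
    have hba : b - a = 2 * L := by rw [hb]; ring
    have hbapos : 0 < b - a := by rw [hba]; linarith
    set EX := ∑ x, w x * g x with hEX
    have hEXa : a ≤ EX := by
      rw [hEX, show a = ∑ x, w x * a by rw [← Finset.sum_mul, hw1, one_mul]]
      refine Finset.sum_le_sum fun x _ => ?_
      by_cases hx : w x = 0
      · rw [hx]; simp
      · exact mul_le_mul_of_nonneg_left (hg x hx).1 (hw x)
    have hEXb : EX ≤ b := by
      rw [hEX, show b = ∑ x, w x * b by rw [← Finset.sum_mul, hw1, one_mul]]
      refine Finset.sum_le_sum fun x _ => ?_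
      by_cases hx : w x = 0
      · rw [hx]; simp
      · exact mul_le_mul_of_nonneg_left (hg x hx).2 (hw x)
    set p := (EX - a) / (b - a) with hp
    have hp0 : 0 ≤ p := div_nonneg (by linarith) hbapos.le
    have hp1 : p ≤ 1 := by
      rw [hp, div_le_one hbapos]; linarith
    -- convexity step
    have hconv : ∀ x, w x ≠ 0 → Real.exp (t * g x) ≤
        (b - g x) / (b - a) * Real.exp (t * a) + (g x - a) / (b - a) * Real.exp (t * b) := by
      intro x hx
      obtain ⟨h1, h2⟩ := hg x hx
      have hwa : 0 ≤ (b - g x) / (b - a) := div_nonneg (by rw [hb]; linarith) hbapos.le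
      have hwb : 0 ≤ (g x - a) / (b - a) := div_nonneg (by linarith) hbapos.le
      have hsum : (b - g x) / (b - a) + (g x - a) / (b - a) = 1 := by
        field_simp
        ring
      have := convexOn_exp.2 (Set.mem_univ (t * a)) (Set.mem_univ (t * b)) hwa hwb hsum
      simp only [smul_eq_mul] at this
      have harg : (b - g x) / (b - a) * (t * a) + (g x - a) / (b - a) * (t * b) = t * g x := by
        field_simp
        ring
      rw [harg] at this
      exact this
    -- sum the convexity bounds
    have hstep : ∑ x, w x * Real.exp (t * g x) ≤
        (1 - p) * Real.exp (t * a) + p * Real.exp (t * b) := by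
      have h1 : ∑ x, w x * Real.exp (t * g x) ≤
          ∑ x, w x * ((b - g x) / (b - a) * Real.exp (t * a)
            + (g x - a) / (b - a) * Real.exp (t * b)) := by
        refine Finset.sum_le_sum fun x _ => ?_
        by_cases hx : w x = 0
        · rw [hx]; simp
        · exact mul_le_mul_of_nonneg_left (hconv x hx) (hw x)
      refine h1.trans_eq ?_
      have expand : ∀ x, w x * ((b - g x) / (b - a) * Real.exp (t * a)
            + (g x - a) / (b - a) * Real.exp (t * b))
          = (w x * b - w x * g x) * (Real.exp (t * a) / (b - a))
            + (w x * g x - w x * a) * (Real.exp (t * b) / (b - a)) := fun x => by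
        field_simp
      rw [Finset.sum_congr rfl fun x _ => expand x, Finset.sum_add_distrib,
        ← Finset.sum_mul, ← Finset.sum_mul]
      have e1 : ∑ x, (w x * b - w x * g x) = b - EX := by
        rw [Finset.sum_sub_distrib, ← Finset.sum_mul, hw1, one_mul, hEX]
      have e2 : ∑ x, (w x * g x - w x * a) = EX - a := by
        rw [Finset.sum_sub_distrib, ← Finset.sum_mul, hw1, one_mul, hEX]
      rw [e1, e2]
      have hp' : 1 - p = (b - EX) / (b - a) := by
        rw [hp]; field_simp; ring
      rw [hp', hp]
      field_simp
    -- apply the core inequality with h = t * (b - a)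
    set hh := t * (b - a) with hhh
    have hcore := hoeffding_core hp0 hp1 hh
    have hDpos : 0 < 1 - p + p * Real.exp hh := by
      rcases eq_or_lt_of_le hp1 with h1 | h1
      · have : p * Real.exp hh > 0 := mul_pos (by rw [h1]; norm_num) (Real.exp_pos _)
        linarith
      · have : 0 ≤ p * Real.exp hh := mul_nonneg hp0 (Real.exp_pos _).le
        linarith
    have hfinal : (1 - p) * Real.exp (t * a) + p * Real.exp (t * b)
        = Real.exp (t * a) * (1 - p + p * Real.exp hh) := by
      have e : Real.exp (t * b) = Real.exp (t * a) * Real.exp hh := by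
        rw [← Real.exp_add, hhh]
        congr 1
        ring
      rw [e]
      ring
    have hexp : 1 - p + p * Real.exp hh ≤ Real.exp (p * hh + hh ^ 2 / 8) := by
      calc 1 - p + p * Real.exp hh = Real.exp (Real.log (1 - p + p * Real.exp hh)) :=
            (Real.exp_log hDpos).symm
        _ ≤ Real.exp (p * hh + hh ^ 2 / 8) := Real.exp_le_exp.mpr hcore
    calc ∑ x, w x * Real.exp (t * g x)
        ≤ (1 - p) * Real.exp (t * a) + p * Real.exp (t * b) := hstep
      _ = Real.exp (t * a) * (1 - p + p * Real.exp hh) := hfinal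
      _ ≤ Real.exp (t * a) * Real.exp (p * hh + hh ^ 2 / 8) :=
          mul_le_mul_of_nonneg_left hexp (Real.exp_pos _).le
      _ = Real.exp (t * a + p * hh + hh ^ 2 / 8) := by
          rw [← Real.exp_add]; ring_nf
      _ = Real.exp (t * EX + t ^ 2 * L ^ 2 / 2) := by
          congr 1
          have hph : p * hh = t * (EX - a) := by
            rw [hp, hhh]
            field_simp
          rw [hph, hhh, hba]
          ring

end HoeffdingLemma

section FiniteHelpers

variable {V : Type*} [Fintype V]


variable {V : Type*} [Fintype V]

lemma sum_eq_of_hasSum {f : V → ℝ} {a : ℝ} (h : HasSum f a) : ∑ x, f x = a :=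
  (hasSum_fintype f).unique h

lemma prob_sum {μ : V → ℝ} (h : IsProb μ) : ∑ x, μ x = 1 := sum_eq_of_hasSum h.2

lemma coupling_fst {γ : V × V → ℝ} {μ ν : V → ℝ} (h : IsCoupling γ μ ν) (x : V) :
    ∑ y, γ (x, y) = μ x := sum_eq_of_hasSum (h.2.1 x)

lemma coupling_snd {γ : V × V → ℝ} {μ ν : V → ℝ} (h : IsCoupling γ μ ν) (y : V) :
    ∑ x, γ (x, y) = ν y := sum_eq_of_hasSum (h.2.2 y)

lemma coupling_sum_fst {γ : V × V → ℝ} {μ ν : V → ℝ} (h : IsCoupling γ μ ν) (f : V → ℝ) :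
    ∑ z : V × V, γ z * f z.1 = ∑ x, f x * μ x := by
  rw [Fintype.sum_prod_type]
  refine Finset.sum_congr rfl fun x _ => ?_
  rw [← coupling_fst h x, Finset.mul_sum]
  exact Finset.sum_congr rfl fun y _ => by show γ (x,y) * f x = f x * γ (x,y); ring

lemma coupling_sum_snd {γ : V × V → ℝ} {μ ν : V → ℝ} (h : IsCoupling γ μ ν) (f : V → ℝ) :
    ∑ z : V × V, γ z * f z.2 = ∑ y, f y * ν y := by
  rw [Fintype.sum_prod_type_right]
  refine Finset.sum_congr rfl fun y _ => ?_
  rw [← coupling_snd h y, Finset.mul_sum]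
  exact Finset.sum_congr rfl fun x _ => by show γ (x,y) * f y = f y * γ (x,y); ring

lemma prod_coupling {μ ν : V → ℝ} (hμ : IsProb μ) (hν : IsProb ν) :
    IsCoupling (fun z : V × V => μ z.1 * ν z.2) μ ν := by
  refine ⟨fun z => mul_nonneg (hμ.1 z.1) (hν.1 z.2), fun x => ?_, fun y => ?_⟩
  · simpa using hν.2.mul_left (μ x)
  · simpa using hμ.2.mul_right (ν y)

lemma W1_le_cost {d : V → V → ℝ} (hd : ∀ x y, 0 ≤ d x y) {μ ν : V → ℝ}
    {γ : V × V → ℝ} (hγ : IsCoupling γ μ ν) :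
    W1 d μ ν ≤ ∑ z : V × V, γ z * d z.1 z.2 := by
  apply csInf_le
  · refine ⟨0, fun r hr => ?_⟩
    obtain ⟨γ', hγ', hr⟩ := hr
    rw [← sum_eq_of_hasSum hr]
    exact Finset.sum_nonneg fun z _ => mul_nonneg (hγ'.1 z) (hd z.1 z.2)
  · exact ⟨γ, hγ, hasSum_fintype _⟩

lemma le_W1 {d : V → V → ℝ} {μ ν : V → ℝ} (hμ : IsProb μ) (hν : IsProb ν) {b : ℝ}
    (hb : ∀ γ : V × V → ℝ, IsCoupling γ μ ν → b ≤ ∑ z : V × V, γ z * d z.1 z.2) :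
    b ≤ W1 d μ ν := by
  refine le_csInf ⟨∑ z : V × V, (μ z.1 * ν z.2) * d z.1 z.2,
    ⟨_, prod_coupling hμ hν, hasSum_fintype _⟩⟩ ?_
  rintro r ⟨γ, hγ, hr⟩
  rw [← sum_eq_of_hasSum hr]
  exact hb γ hγ

lemma W1_nonneg {d : V → V → ℝ} (hd : ∀ x y, 0 ≤ d x y) {μ ν : V → ℝ}
    (hμ : IsProb μ) (hν : IsProb ν) : 0 ≤ W1 d μ ν :=
  le_W1 hμ hν fun γ hγ => Finset.sum_nonneg fun z _ => mul_nonneg (hγ.1 z) (hd z.1 z.2)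


lemma dual_le_W1 (d : V → V → ℝ) (hdnn : ∀ x y, 0 ≤ d x y)
    {μ ν : V → ℝ} (hμ : IsProb μ) (hν : IsProb ν) {f : V → ℝ} {L : ℝ} (hL : 0 ≤ L)
    (hf : LipWith d L f) :
    ∑ x, f x * μ x - ∑ x, f x * ν x ≤ L * W1 d μ ν := by
  have key : ∀ γ : V × V → ℝ, IsCoupling γ μ ν →
      ∑ x, f x * μ x - ∑ x, f x * ν x ≤ L * ∑ z : V × V, γ z * d z.1 z.2 := by
    intro γ hγ
    rw [← coupling_sum_fst hγ f, ← coupling_sum_snd hγ f, ← Finset.sum_sub_distrib,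
      Finset.mul_sum]
    refine Finset.sum_le_sum fun z _ => ?_
    have h2 : f z.1 - f z.2 ≤ L * d z.1 z.2 := le_trans (le_abs_self _) (hf z.1 z.2)
    calc γ z * f z.1 - γ z * f z.2 = γ z * (f z.1 - f z.2) := by ring
      _ ≤ γ z * (L * d z.1 z.2) := mul_le_mul_of_nonneg_left h2 (hγ.1 z)
      _ = L * (γ z * d z.1 z.2) := by ring
  rcases eq_or_lt_of_le hL with hL0 | hLpos
  · have h := key _ (prod_coupling hμ hν)
    rw [← hL0, zero_mul] at h ⊢
    exact h
  · have hw := le_W1 (d := d) hμ hν (b := (∑ x, f x * μ x - ∑ x, f x * ν x) / L)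
      (fun γ hγ => by
        rw [div_le_iff₀ hLpos]
        exact (key γ hγ).trans (le_of_eq (mul_comm _ _)))
    exact (div_le_iff₀' hLpos).mp hw


end FiniteHelpers

section GibbsSection

variable {V : Type*} [Fintype V]

lemma prob_sum' {μ : V → ℝ} (h : IsProb μ) : ∑ x, μ x = 1 := (hasSum_fintype μ).unique h.2


lemma gibbs_ineq (μ π : V → ℝ) (hμ : IsProb μ) (hπ : IsProb π) (hAC : AC μ π) (g : V → ℝ) :
    ∑ x, μ x * g x ≤ (∑ x, μ x * Real.log (μ x / π x)) +
      Real.log (∑ x, π x * Real.exp (g x)) := by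
  classical
  set S : Finset V := Finset.univ.filter (fun x => μ x ≠ 0) with hS
  have hμpos : ∀ x ∈ S, 0 < μ x := fun x hx =>
    lt_of_le_of_ne (hμ.1 x) (Ne.symm (Finset.mem_filter.mp hx).2)
  have hπpos : ∀ x ∈ S, 0 < π x := fun x hx =>
    lt_of_le_of_ne (hπ.1 x) (Ne.symm (hAC x (Finset.mem_filter.mp hx).2))
  have hSsum : ∑ x ∈ S, μ x = 1 := by
    rw [← prob_sum' hμ]
    exact Finset.sum_filter_ne_zero Finset.univ
  have hSne : S.Nonempty := by
    by_contra h
    rw [Finset.not_nonempty_iff_eq_empty] at h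
    rw [h] at hSsum
    simp at hSsum
  set y : V → ℝ := fun x => Real.exp (g x) * π x / μ x with hy
  have hymem : ∀ x ∈ S, y x ∈ Set.Ioi (0:ℝ) := fun x hx =>
    Set.mem_Ioi.mpr (div_pos (mul_pos (Real.exp_pos _) (hπpos x hx)) (hμpos x hx))
  have hjensen := (strictConcaveOn_log_Ioi.concaveOn).le_map_sum
    (t := S) (w := fun x => μ x) (p := y) (fun x hx => (hμpos x hx).le) hSsum hymem
  -- identify the two sides
  have hlog : ∀ x ∈ S, Real.log (y x) = g x - Real.log (μ x / π x) := by
    intro x hx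
    rw [hy]
    rw [Real.log_div (mul_pos (Real.exp_pos _) (hπpos x hx)).ne' (hμpos x hx).ne',
      Real.log_mul (Real.exp_pos _).ne'
      (hπpos x hx).ne', Real.log_exp, Real.log_div (hμpos x hx).ne' (hπpos x hx).ne']
    ring
  have hcomb : ∑ x ∈ S, μ x • y x = ∑ x ∈ S, Real.exp (g x) * π x := by
    refine Finset.sum_congr rfl fun x hx => ?_
    rw [smul_eq_mul, hy, mul_div_assoc']
    rw [mul_comm (μ x) _, mul_div_assoc]
    rw [div_self (hμpos x hx).ne', mul_one]
  have hle2 : ∑ x ∈ S, Real.exp (g x) * π x ≤ ∑ x, π x * Real.exp (g x) := by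
    rw [Finset.sum_congr rfl (fun x _ => mul_comm (Real.exp (g x)) (π x))]
    exact Finset.sum_le_sum_of_subset_of_nonneg (Finset.subset_univ S)
      (fun x _ _ => mul_nonneg (hπ.1 x) (Real.exp_pos _).le)
  have hpos2 : 0 < ∑ x ∈ S, Real.exp (g x) * π x := by
    obtain ⟨x, hx⟩ := hSne
    refine Finset.sum_pos' (fun x hx => mul_nonneg (Real.exp_pos _).le (hπpos x hx).le)
      ⟨x, hx, mul_pos (Real.exp_pos _) (hπpos x hx)⟩
  have hloglog : Real.log (∑ x ∈ S, Real.exp (g x) * π x)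
      ≤ Real.log (∑ x, π x * Real.exp (g x)) :=
    Real.log_le_log hpos2 hle2
  have hLHS : ∑ x ∈ S, μ x • Real.log (y x)
      = ∑ x, μ x * g x - ∑ x, μ x * Real.log (μ x / π x) := by
    rw [Finset.sum_congr rfl (fun x hx => by
      rw [smul_eq_mul, hlog x hx, mul_sub])]
    rw [Finset.sum_sub_distrib]
    have hzero : ∀ x, x ∉ S → μ x = 0 := fun x hx => by
      by_contra h
      exact hx (Finset.mem_filter.mpr ⟨Finset.mem_univ x, h⟩)
    congr 1
    · exact Finset.sum_subset (Finset.subset_univ S)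
        (fun x _ hx => by rw [hzero x hx, zero_mul])
    · exact Finset.sum_subset (Finset.subset_univ S)
        (fun x _ hx => by rw [hzero x hx, zero_mul])
  have hmain := (hjensen.trans_eq (congrArg Real.log hcomb)).trans hloglog
  rw [hLHS] at hmain
  linarith

lemma relent_sum_nonneg (μ π : V → ℝ) (hμ : IsProb μ) (hπ : IsProb π) (hAC : AC μ π) :
    0 ≤ ∑ x, μ x * Real.log (μ x / π x) := by
  have h := gibbs_ineq μ π hμ hπ hAC (fun _ => 0)
  simp only [mul_zero, Finset.sum_const_zero, Real.exp_zero, mul_one] at h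
  rw [prob_sum' hπ, Real.log_one, add_zero] at h
  exact h

lemma delta_le_sqrt {K₀ H Δ : ℝ} (hK : 0 < K₀) (hH : 0 ≤ H)
    (h : ∀ t : ℝ, 0 < t → Δ ≤ H / t + t * K₀ / 2) :
    Δ ≤ Real.sqrt (2 * K₀ * H) := by
  rcases eq_or_lt_of_le hH with hH0 | hHpos
  · rw [← hH0, mul_zero, Real.sqrt_zero]
    by_contra hc
    push_neg at hc
    have ht := h (Δ / K₀) (div_pos hc hK)
    rw [← hH0, zero_div, zero_add] at ht
    have : Δ / K₀ * K₀ = Δ := div_mul_cancel₀ Δ hK.ne'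
    rw [this] at ht
    linarith
  · set s := Real.sqrt (2 * K₀ * H) with hs
    have hs2 : s ^ 2 = 2 * K₀ * H := Real.sq_sqrt (by positivity)
    have hspos : 0 < s := Real.sqrt_pos.mpr (by positivity)
    have ht := h (s / K₀) (div_pos hspos hK)
    calc Δ ≤ H / (s / K₀) + (s / K₀) * K₀ / 2 := ht
      _ = s := by
        field_simp
        nlinarith [hs2]

end GibbsSection

open scoped RealInnerProductSpace

lemma euclid_sum_apply {ι κ : Type*} [Fintype ι] [Fintype κ] (v : ι → EuclideanSpace ℝ κ)
    (a : ι → ℝ) (j : κ) : (∑ i, a i • v i) j = ∑ i, a i * v i j := by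
  induction (Finset.univ : Finset ι) using Finset.cons_induction with
  | empty => simp
  | cons i s hi ih => rw [Finset.sum_cons, Finset.sum_cons, ← ih]; rfl

lemma euclid_inner {κ : Type*} [Fintype κ] (x y : EuclideanSpace ℝ κ) :
    ⟪x, y⟫ = ∑ j, x j * y j := by
  rw [PiLp.inner_apply]; simp [RCLike.inner_apply]; exact Finset.sum_congr rfl fun _ _ => mul_comm _ _

/-- Kantorovich duality, the hard direction, on a finite space. -/
theorem W1_le_of_dual {V : Type*} [Fintype V] [DecidableEq V] [Nonempty V]
    (d : V → V → ℝ) (hd0 : ∀ x, d x x = 0) (hdnn : ∀ x y, 0 ≤ d x y)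
    (hdsymm : ∀ x y, d x y = d y x) (htri : ∀ x y z, d x z ≤ d x y + d y z)
    (μ ν : V → ℝ) (hμ : IsProb μ) (hν : IsProb ν) (B : ℝ)
    (hB : ∀ f : V → ℝ, LipWith d 1 f → ∑ x, f x * μ x - ∑ x, f x * ν x ≤ B) :
    W1 d μ ν ≤ B := by
  classical
  by_contra hW
  push_neg at hW
  -- there is no coupling of cost ≤ B
  have hnc : ∀ γ : V × V → ℝ, IsCoupling γ μ ν → B < ∑ z : V × V, γ z * d z.1 z.2 := by
    intro γ hγ
    by_contra h
    push_neg at h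
    exact absurd ((W1_le_cost hdnn hγ).trans h) (not_le.mpr hW)
  -- set up the cone
  set κ := ((V ⊕ V) ⊕ Unit)
  set ι := (V × V ⊕ Unit)
  set vec : ι → EuclideanSpace ℝ κ := fun i =>
    Sum.elim
      (fun xy : V × V => WithLp.toLp 2 (Sum.elim
        (Sum.elim (fun z => if z = xy.1 then (1:ℝ) else 0)
                  (fun z => if z = xy.2 then (1:ℝ) else 0))
        (fun _ => d xy.1 xy.2) : κ → ℝ))
      (fun _ => WithLp.toLp 2 (Sum.elim (fun _ => (0:ℝ)) (fun _ => (1:ℝ)) : κ → ℝ)) i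
    with hvec
  set m : EuclideanSpace ℝ κ :=
    WithLp.toLp 2 (Sum.elim (Sum.elim μ ν) (fun _ => B) : κ → ℝ) with hm
  set Kset : Set (EuclideanSpace ℝ κ) :=
    {x | ∃ a : ι → ℝ, (∀ i, 0 ≤ a i) ∧ ∑ i, a i • vec i = x} with hKset
  set K : ConvexCone ℝ (EuclideanSpace ℝ κ) :=
    { carrier := Kset
      smul_mem' := by
        rintro c hc x ⟨a, ha, rfl⟩
        exact ⟨fun i => c * a i, fun i => mul_nonneg hc.le (ha i), by
          rw [Finset.smul_sum]; exact Finset.sum_congr rfl fun i _ => (smul_smul c (a i) _).symm⟩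
      add_mem' := by
        rintro x ⟨a, ha, rfl⟩ y ⟨b, hb, rfl⟩
        exact ⟨fun i => a i + b i, fun i => add_nonneg (ha i) (hb i), by
          rw [← Finset.sum_add_distrib]
          exact Finset.sum_congr rfl fun i _ => (add_smul (a i) (b i) _)⟩ } with hK
  have hKne : (K : Set (EuclideanSpace ℝ κ)).Nonempty := by
    refine ⟨0, ?_⟩
    show (0 : EuclideanSpace ℝ κ) ∈ Kset
    exact ⟨fun _ => 0, fun i => le_rfl, by simp⟩
  have hKcl : IsClosed (K : Set (EuclideanSpace ℝ κ)) := isClosed_conicHull vec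
  -- m is not in the cone
  have hmK : m ∉ K := by
    rintro ⟨a, ha, hsum⟩
    set γ : V × V → ℝ := fun z => a (Sum.inl z) with hγdef
    have key : ∀ j : κ, ∑ i, a i * vec i j = m j := fun j => by
      rw [← euclid_sum_apply vec a j, hsum]
    have hfst : ∀ x, ∑ y, γ (x, y) = μ x := by
      intro x
      have h1 := key (Sum.inl (Sum.inl x))
      rw [Fintype.sum_sum_type, Fintype.sum_prod_type] at h1
      simp only [hvec, hm, PiLp.toLp_apply, Sum.elim_inl, Sum.elim_inr, mul_ite, mul_one, mul_zero,
        Finset.sum_const_zero, add_zero] at h1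
      rw [Finset.sum_eq_single x
        (fun b _ hb => Finset.sum_eq_zero fun z2 _ => if_neg fun h => hb h.symm)
        (fun h => absurd (Finset.mem_univ x) h)] at h1
      simpa using h1
    have hsnd : ∀ y, ∑ x, γ (x, y) = ν y := by
      intro y
      have h1 := key (Sum.inl (Sum.inr y))
      rw [Fintype.sum_sum_type, Fintype.sum_prod_type_right] at h1
      simp only [hvec, hm, PiLp.toLp_apply, Sum.elim_inl, Sum.elim_inr, mul_ite, mul_one, mul_zero,
        Finset.sum_const_zero, add_zero] at h1
      rw [Finset.sum_eq_single y
        (fun b _ hb => Finset.sum_eq_zero fun z1 _ => if_neg fun h => hb h.symm)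
        (fun h => absurd (Finset.mem_univ y) h)] at h1
      simpa using h1
    have hcoup : IsCoupling γ μ ν :=
      ⟨fun z => ha _, fun x => hfst x ▸ hasSum_fintype _, fun y => hsnd y ▸ hasSum_fintype _⟩
    have hcost := key (Sum.inr ())
    rw [Fintype.sum_sum_type] at hcost
    simp only [hvec, hm, PiLp.toLp_apply, Sum.elim_inl, Sum.elim_inr, mul_one, mul_zero,
      Finset.sum_const_zero, zero_add, Finset.univ_unique, Finset.sum_singleton] at hcost
    have hlt := hnc γ hcoup
    have hann := ha (Sum.inr ())
    have hcost' : ∑ z : V × V, γ z * d z.1 z.2 + a (Sum.inr ()) = B := by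
      rw [← hcost]
    linarith
  -- separate m from the cone
  obtain ⟨y, hy, hyb⟩ :=
    ProperCone.hyperplane_separation' (E := EuclideanSpace ℝ κ) (x₀ := m)
      ({ carrier := Kset
         add_mem' := fun hx hy => K.add_mem hx hy
         zero_mem' := ⟨fun _ => 0, fun _ => le_rfl, by simp⟩
         smul_mem' := by
           rintro c x ⟨a, ha, rfl⟩
           exact ⟨fun i => (c : ℝ) * a i, fun i => mul_nonneg c.2 (ha i), by
             rw [show c • ∑ i, a i • vec i = (c : ℝ) • ∑ i, a i • vec i from rfl, Finset.smul_sum]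
             exact Finset.sum_congr rfl fun i _ => mul_smul _ _ _⟩
         isClosed' := hKcl } : ProperCone ℝ (EuclideanSpace ℝ κ)) hmK
  set f₀ : V → ℝ := fun z => y (Sum.inl (Sum.inl z)) with hf₀
  set g₀ : V → ℝ := fun z => y (Sum.inl (Sum.inr z)) with hg₀
  set β : ℝ := y (Sum.inr ()) with hβ
  have hgen : ∀ i, vec i ∈ K := by
    intro i
    refine ⟨fun j => if j = i then 1 else 0, fun j => by by_cases h : j = i <;> simp [h], ?_⟩
    simp [ite_smul, Finset.sum_ite_eq']
    rw [Finset.sum_ite_eq']; simp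
  have hβnn : 0 ≤ β := by
    have h := hy _ (hgen (Sum.inr ()))
    rw [euclid_inner, Fintype.sum_sum_type, Fintype.sum_sum_type] at h
    simpa [hvec, Sum.elim_inl, Sum.elim_inr] using h
  have hpos : ∀ x y', 0 ≤ f₀ x + g₀ y' + d x y' * β := by
    intro x y'
    have h := hy _ (hgen (Sum.inl (x, y')))
    rw [euclid_inner, Fintype.sum_sum_type, Fintype.sum_sum_type] at h
    simpa [hvec, hf₀, hg₀, hβ, Sum.elim_inl, Sum.elim_inr, ite_mul, one_mul, zero_mul,
      Finset.sum_ite_eq', Finset.mem_univ] using h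
  have hneg : ∑ z, f₀ z * μ z + ∑ z, g₀ z * ν z + β * B < 0 := by
    rw [real_inner_comm, euclid_inner, Fintype.sum_sum_type, Fintype.sum_sum_type] at hyb
    simpa [hm, hf₀, hg₀, hβ, Sum.elim_inl, Sum.elim_inr] using hyb
  rcases eq_or_lt_of_le hβnn with hβ0 | hβpos
  · -- β = 0 : contradiction with the product coupling
    have h1 : 0 ≤ ∑ z : V × V, (μ z.1 * ν z.2) * (f₀ z.1 + g₀ z.2) := by
      refine Finset.sum_nonneg fun z _ => mul_nonneg (mul_nonneg (hμ.1 z.1) (hν.1 z.2)) ?_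
      have := hpos z.1 z.2
      rw [← hβ0] at this
      linarith
    have h2 : ∑ z : V × V, (μ z.1 * ν z.2) * (f₀ z.1 + g₀ z.2)
        = ∑ z, f₀ z * μ z + ∑ z, g₀ z * ν z := by
      have e : ∀ z : V × V, (μ z.1 * ν z.2) * (f₀ z.1 + g₀ z.2)
          = (μ z.1 * ν z.2) * f₀ z.1 + (μ z.1 * ν z.2) * g₀ z.2 := fun z => by ring
      rw [Finset.sum_congr rfl fun z _ => e z, Finset.sum_add_distrib,
        coupling_sum_fst (prod_coupling hμ hν) f₀, coupling_sum_snd (prod_coupling hμ hν) g₀]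
    rw [← hβ0] at hneg
    rw [h2] at h1
    linarith
  · -- β > 0 : build a 1-Lipschitz function beating B
    have hβne : β ≠ 0 := ne_of_gt hβpos
    set g : V → ℝ := fun z => -(g₀ z / β) with hg
    set F : V → ℝ := fun x => Finset.univ.inf' Finset.univ_nonempty (fun y' => d x y' - g y')
      with hF
    have hFle : ∀ x y', F x ≤ d x y' - g y' := fun x y' =>
      Finset.inf'_le _ (Finset.mem_univ y')
    have hFlip : LipWith d 1 F := by
      intro x x'
      rw [abs_sub_le_iff]
      constructor
      · obtain ⟨y', -, hyeq⟩ := Finset.exists_mem_eq_inf' Finset.univ_nonempty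
          (fun y' => d x' y' - g y')
        have h1 : F x ≤ d x y' - g y' := hFle x y'
        have h2 : d x y' ≤ d x x' + d x' y' := htri x x' y'
        have hEq : F x' = d x' y' - g y' := hyeq
        rw [one_mul]; linarith
      · obtain ⟨y', -, hyeq⟩ := Finset.exists_mem_eq_inf' Finset.univ_nonempty
          (fun y' => d x y' - g y')
        have h1 : F x' ≤ d x' y' - g y' := hFle x' y'
        have h2 : d x' y' ≤ d x' x + d x y' := htri x' x y'
        have h3 : d x' x = d x x' := hdsymm x' x
        have hEq : F x = d x y' - g y' := hyeq
        rw [one_mul]; linarith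
    have hfF : ∀ x, -(f₀ x / β) ≤ F x := by
      intro x
      refine Finset.le_inf' _ _ fun y' _ => ?_
      have h := hpos x y'
      have h' : 0 ≤ (f₀ x + g₀ y' + d x y' * β) / β := div_nonneg h hβpos.le
      have he : (f₀ x + g₀ y' + d x y' * β) / β = f₀ x / β + g₀ y' / β + d x y' := by
        field_simp
      rw [he] at h'
      simp only [hg]
      linarith
    have hFg : ∀ z, F z ≤ -(g z) := by
      intro z
      have := hFle z z
      rw [hd0 z] at this
      linarith
    have hBF := hB F hFlip
    have h5 : ∑ z, -(f₀ z / β) * μ z ≤ ∑ z, F z * μ z :=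
      Finset.sum_le_sum fun z _ => mul_le_mul_of_nonneg_right (hfF z) (hμ.1 z)
    have h6 : ∑ z, F z * ν z ≤ ∑ z, -(g z) * ν z :=
      Finset.sum_le_sum fun z _ => mul_le_mul_of_nonneg_right (hFg z) (hν.1 z)
    have e1 : ∑ z, -(f₀ z / β) * μ z = -(∑ z, f₀ z * μ z) / β := by
      have h : ∀ z : V, -(f₀ z / β) * μ z = -(f₀ z * μ z) / β := fun z => by
        field_simp
      rw [Finset.sum_congr rfl fun z _ => h z, ← Finset.sum_div, Finset.sum_neg_distrib]
    have e2 : ∑ z, -(g z) * ν z = (∑ z, g₀ z * ν z) / β := by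
      have h : ∀ z : V, -(g z) * ν z = g₀ z * ν z / β := fun z => by
        simp only [hg]; field_simp
      rw [Finset.sum_congr rfl fun z _ => h z, ← Finset.sum_div]
    have hneg' : -(∑ z, f₀ z * μ z) / β - (∑ z, g₀ z * ν z) / β > B := by
      have h : (-(∑ z, f₀ z * μ z + ∑ z, g₀ z * ν z + β * B)) / β > 0 :=
        div_pos (by linarith) hβpos
      have he : (-(∑ z, f₀ z * μ z + ∑ z, g₀ z * ν z + β * B)) / β
          = -(∑ z, f₀ z * μ z) / β - (∑ z, g₀ z * ν z) / β - B := by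
        field_simp
        ring
      rw [he] at h
      linarith
    linarith


/-- for a random walk on a connected finite graph (moving only along
edges or staying put) with coarse Ricci curvature at least `1/α` for the graph
distance, the stationary measure satisfies `W₁(μ,π)² ≤ (2α/(2−1/α))·H(μ‖π)`. -/
theorem transport_entropy_graph {V : Type*} [Fintype V] [DecidableEq V]
    (G : SimpleGraph V) (hG : G.Connected)
    (p : V → V → ℝ) (π : V → ℝ) (α : ℝ)
    (hp : ∀ x, IsProb (p x))
    (hedge : ∀ x y, p x y ≠ 0 → G.Adj x y ∨ x = y)
    (hα : 1 ≤ α)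
    (hcurv : ∀ x y : V,
      W1 (fun a b => (G.dist a b : ℝ)) (p x) (p y) ≤ (1 - 1/α) * (G.dist x y : ℝ))
    (hπ : IsProb π)
    (hstat : ∀ y, HasSum (fun x => π x * p x y) (π y)) :
    ∀ μ : V → ℝ, IsProb μ → AC μ π →
      (W1 (fun a b => (G.dist a b : ℝ)) μ π) ^ 2 ≤ (2 * α / (2 - 1/α)) * relent μ π := by
  intro μ hμ hAC
  classical
  have hVne : Nonempty V := hG.nonempty
  set d : V → V → ℝ := fun a b => (G.dist a b : ℝ) with hd
  have hα0 : 0 < α := lt_of_lt_of_le one_pos hα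
  have hκpos : 0 < 1/α := by positivity
  have hκle : 1/α ≤ 1 := by rw [div_le_one hα0]; exact hα
  have hd0 : ∀ x, d x x = 0 := fun x => by simp [hd]
  have hdnn : ∀ x y, 0 ≤ d x y := fun x y => Nat.cast_nonneg _
  have hdsymm : ∀ x y, d x y = d y x := fun x y => by
    simp [hd, SimpleGraph.dist_comm]
  have htri : ∀ x y z, d x z ≤ d x y + d y z := fun x y z => by
    have h := hG.dist_triangle (u := x) (v := y) (w := z)
    simp only [hd]
    exact_mod_cast h
  have hsupp : ∀ x z, p x z ≠ 0 → d x z ≤ 1 := by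
    intro x z hz
    rcases hedge x z hz with hadj | heq
    · simp only [hd]
      have h1 : G.dist x z = 1 := SimpleGraph.dist_eq_one_iff_adj.mpr hadj
      rw [h1]; norm_num
    · rw [heq, hd0]; norm_num
  have hjump : ∀ x, ∑ z, p x z * d x z ≤ 1 := by
    intro x
    calc ∑ z, p x z * d x z ≤ ∑ z, p x z * 1 := by
          refine Finset.sum_le_sum fun z _ => ?_
          by_cases hz : p x z = 0
          · rw [hz]; simp
          · exact mul_le_mul_of_nonneg_left (hsupp x z hz) ((hp x).1 z)
      _ = 1 := by
          rw [Finset.sum_congr rfl fun z _ => mul_one (p x z)]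
          exact prob_sum (hp x)
  have hcoup_total : ∀ (μ' ν' : V → ℝ), IsProb μ' →
      ∀ γ : V × V → ℝ, IsCoupling γ μ' ν' → ∑ z : V × V, γ z = 1 := by
    intro μ' ν' hμ' γ hγ
    rw [Fintype.sum_prod_type, Finset.sum_congr rfl fun a _ => coupling_fst hγ a]
    exact prob_sum hμ'
  have hdiam : ∀ x y, d x y ≤ 2*α := by
    intro x y
    have hlow : d x y - 2 ≤ W1 d (p x) (p y) := by
      apply le_W1 (hp x) (hp y)
      intro γ hγ
      have h1 : ∑ z : V × V, γ z * (d x y - d x z.1 - d y z.2)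
          ≤ ∑ z : V × V, γ z * d z.1 z.2 := by
        refine Finset.sum_le_sum fun z _ => mul_le_mul_of_nonneg_left ?_ (hγ.1 z)
        have t1 : d x y ≤ d x z.1 + d z.1 y := htri x z.1 y
        have t2 : d z.1 y ≤ d z.1 z.2 + d z.2 y := htri z.1 z.2 y
        have t3 : d z.2 y = d y z.2 := hdsymm z.2 y
        linarith
      have h2 : ∑ z : V × V, γ z * (d x y - d x z.1 - d y z.2)
          = d x y - (∑ z : V × V, γ z * d x z.1) - ∑ z : V × V, γ z * d y z.2 := by
        rw [Finset.sum_congr rfl fun z _ => (by ring :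
          γ z * (d x y - d x z.1 - d y z.2)
            = γ z * d x y - γ z * d x z.1 - γ z * d y z.2)]
        rw [Finset.sum_sub_distrib, Finset.sum_sub_distrib, ← Finset.sum_mul,
          hcoup_total (p x) (p y) (hp x) γ hγ, one_mul]
      have h3 : ∑ z : V × V, γ z * d x z.1 ≤ 1 := by
        rw [coupling_sum_fst hγ (fun a => d x a)]
        calc ∑ a, d x a * p x a = ∑ a, p x a * d x a :=
              Finset.sum_congr rfl fun a _ => mul_comm _ _
          _ ≤ 1 := hjump x
      have h4 : ∑ z : V × V, γ z * d y z.2 ≤ 1 := by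
        rw [coupling_sum_snd hγ (fun a => d y a)]
        calc ∑ a, d y a * p y a = ∑ a, p y a * d y a :=
              Finset.sum_congr rfl fun a _ => mul_comm _ _
          _ ≤ 1 := hjump y
      linarith
    have hle : d x y - 2 ≤ (1 - 1/α) * d x y := hlow.trans (hcurv x y)
    have h5 : d x y * (1/α) ≤ 2 := by nlinarith [hle]
    have h6 : d x y * (1/α) * α = d x y := by field_simp
    calc d x y = d x y * (1/α) * α := h6.symm
      _ ≤ 2 * α := mul_le_mul_of_nonneg_right h5 hα0.le
  -- Markov operator
  set P : (V → ℝ) → (V → ℝ) := fun f x => ∑ z, p x z * f z with hP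
  have hcontract : ∀ (L : ℝ) (f : V → ℝ), 0 ≤ L → LipWith d L f →
      LipWith d ((1 - 1/α) * L) (P f) := by
    intro L f hL hf x y
    have hone : ∀ a b : V, P f a - P f b ≤ L * W1 d (p a) (p b) := by
      intro a b
      have hthis := dual_le_W1 d hdnn (hp a) (hp b) hL hf
      have e1 : P f a = ∑ z, f z * p a z := Finset.sum_congr rfl fun z _ => mul_comm _ _
      have e2 : P f b = ∑ z, f z * p b z := Finset.sum_congr rfl fun z _ => mul_comm _ _
      rw [e1, e2]
      exact hthis
    rw [abs_sub_le_iff]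
    constructor
    · calc P f x - P f y ≤ L * W1 d (p x) (p y) := hone x y
        _ ≤ L * ((1 - 1/α) * d x y) := mul_le_mul_of_nonneg_left (hcurv x y) hL
        _ = (1 - 1/α) * L * d x y := by ring
    · calc P f y - P f x ≤ L * W1 d (p y) (p x) := hone y x
        _ ≤ L * ((1 - 1/α) * d y x) := mul_le_mul_of_nonneg_left (hcurv y x) hL
        _ = (1 - 1/α) * L * d x y := by rw [hdsymm y x]; ring
  have hPexp : ∀ (L t : ℝ) (f : V → ℝ), 0 ≤ L → LipWith d L f → ∀ x,
      P (fun z => Real.exp (t * f z)) x ≤ Real.exp (t * P f x + t^2 * L^2 / 2) := by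
    intro L t f hL hf x
    have hg : ∀ z, p x z ≠ 0 → f x - L ≤ f z ∧ f z ≤ (f x - L) + 2 * L := by
      intro z hz
      have h1 := hf z x
      have h2 : d z x ≤ 1 := by rw [hdsymm z x]; exact hsupp x z hz
      have h3 : |f z - f x| ≤ L := by
        calc |f z - f x| ≤ L * d z x := h1
          _ ≤ L * 1 := mul_le_mul_of_nonneg_left h2 hL
          _ = L := mul_one L
      have h4 := abs_le.mp h3
      exact ⟨by linarith [h4.1], by linarith [h4.2]⟩
    exact hoeffding_pmf (p x) ((hp x).1) (prob_sum (hp x)) f (f x - L) L t hL hg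
  have hPmono : ∀ f g : V → ℝ, (∀ z, f z ≤ g z) → ∀ x, P f x ≤ P g x := by
    intro f g hfg x
    exact Finset.sum_le_sum fun z _ => mul_le_mul_of_nonneg_left (hfg z) ((hp x).1 z)
  have hstat1 : ∀ g : V → ℝ, ∑ x, π x * P g x = ∑ x, π x * g x := by
    intro g
    calc ∑ x, π x * P g x = ∑ x, ∑ z, π x * (p x z * g z) := by
          exact Finset.sum_congr rfl fun x _ => Finset.mul_sum _ _ _
      _ = ∑ z, (∑ x, π x * p x z) * g z := by
          rw [Finset.sum_comm]
          refine Finset.sum_congr rfl fun z _ => ?_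
          rw [Finset.sum_mul]
          exact Finset.sum_congr rfl fun x _ => by ring
      _ = ∑ z, π z * g z := by
          refine Finset.sum_congr rfl fun z _ => ?_
          rw [sum_eq_of_hasSum (hstat z)]
  have hstatn : ∀ (g : V → ℝ) (n : ℕ), ∑ x, π x * (P^[n] g) x = ∑ x, π x * g x := by
    intro g n
    induction n with
    | zero => simp
    | succ n ih =>
      rw [Function.iterate_succ_apply', hstat1 (P^[n] g), ih]
  have hlipn : ∀ (f : V → ℝ), LipWith d 1 f → ∀ (n : ℕ),
      LipWith d ((1 - 1/α)^n) (P^[n] f) := by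
    intro f hf n
    induction n with
    | zero => simpa using hf
    | succ n ih =>
      rw [Function.iterate_succ_apply']
      intro x y
      have h := hcontract ((1 - 1/α)^n) (P^[n] f) (pow_nonneg (by linarith) n) ih x y
      calc |P (P^[n] f) x - P (P^[n] f) y| ≤ (1 - 1/α) * (1 - 1/α)^n * d x y := h
        _ = (1 - 1/α)^(n+1) * d x y := by ring
  set q : ℝ := (1 - 1/α)^2 with hq
  have hexpn : ∀ (f : V → ℝ) (t : ℝ), LipWith d 1 f → ∀ (n : ℕ) (x : V),
      (P^[n] (fun z => Real.exp (t * f z))) x ≤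
        Real.exp (t * (P^[n] f) x + t^2/2 * ∑ k ∈ Finset.range n, q^k) := by
    intro f t hf n
    induction n with
    | zero => intro x; simp
    | succ n ih =>
      intro x
      rw [Function.iterate_succ_apply']
      calc (P (P^[n] (fun z => Real.exp (t * f z)))) x
          ≤ P (fun z => Real.exp (t * (P^[n] f) z + t^2/2 * ∑ k ∈ Finset.range n, q^k)) x :=
            hPmono _ _ (fun z => ih z) x
        _ = Real.exp (t^2/2 * ∑ k ∈ Finset.range n, q^k)
              * P (fun z => Real.exp (t * (P^[n] f) z)) x := by
            simp only [hP]
            rw [Finset.mul_sum Finset.univ (fun z => p x z * Real.exp (t * (P^[n] f) z))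
              (Real.exp (t^2/2 * ∑ k ∈ Finset.range n, q^k))]
            refine Finset.sum_congr rfl fun z _ => ?_
            rw [Real.exp_add]
            ring
        _ ≤ Real.exp (t^2/2 * ∑ k ∈ Finset.range n, q^k) *
              Real.exp (t * (P (P^[n] f)) x + t^2 * ((1 - 1/α)^n)^2 / 2) := by
            refine mul_le_mul_of_nonneg_left ?_ (Real.exp_pos _).le
            exact hPexp ((1 - 1/α)^n) t (P^[n] f) (pow_nonneg (by linarith) n)
              (hlipn f hf n) x
        _ = Real.exp (t * (P^[n+1] f) x + t^2/2 * ∑ k ∈ Finset.range (n+1), q^k) := by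
            rw [← Real.exp_add, Function.iterate_succ_apply']
            congr 1
            have epow : ((1 - 1/α)^n)^2 = q^n := by
              rw [hq, ← pow_mul, ← pow_mul, Nat.mul_comm]
            rw [Finset.sum_range_succ, epow]
            ring
  have hosc : ∀ (f : V → ℝ), LipWith d 1 f → ∀ (n : ℕ) (x : V),
      |(P^[n] f) x - ∑ y, π y * f y| ≤ (1 - 1/α)^n * (2*α) := by
    intro f hf n x
    have h1 : (P^[n] f) x - ∑ y, π y * f y = ∑ y, π y * ((P^[n] f) x - (P^[n] f) y) := by
      rw [← hstatn f n]
      rw [Finset.sum_congr rfl fun y (_ : y ∈ Finset.univ) => mul_sub (π y) ((P^[n] f) x) ((P^[n] f) y),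
        Finset.sum_sub_distrib, ← Finset.sum_mul, prob_sum hπ, one_mul]
    rw [h1]
    calc |∑ y, π y * ((P^[n] f) x - (P^[n] f) y)|
        ≤ ∑ y, |π y * ((P^[n] f) x - (P^[n] f) y)| := Finset.abs_sum_le_sum_abs _ _
      _ ≤ ∑ y, π y * ((1 - 1/α)^n * (2*α)) := by
          refine Finset.sum_le_sum fun y _ => ?_
          rw [abs_mul, abs_of_nonneg (hπ.1 y)]
          refine mul_le_mul_of_nonneg_left ?_ (hπ.1 y)
          calc |(P^[n] f) x - (P^[n] f) y| ≤ (1 - 1/α)^n * d x y := hlipn f hf n x y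
            _ ≤ (1 - 1/α)^n * (2*α) :=
                mul_le_mul_of_nonneg_left (hdiam x y) (pow_nonneg (by linarith) n)
      _ = (1 - 1/α)^n * (2*α) := by rw [← Finset.sum_mul, prob_sum hπ, one_mul]
  set K₀ : ℝ := α / (2 - 1/α) with hK₀
  have h2κ : 0 < 2 - 1/α := by linarith
  have hK₀pos : 0 < K₀ := div_pos hα0 h2κ
  have hqnn : 0 ≤ q := sq_nonneg _
  have hqlt : q < 1 := by
    rw [hq]
    nlinarith [hκpos, hκle]
  have hgeom : ∀ n : ℕ, ∑ k ∈ Finset.range n, q^k ≤ 1/(1-q) := by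
    intro n
    have h2 : 0 ≤ q^n := pow_nonneg hqnn n
    have h3 : 0 < 1 - q := by linarith
    have h1 : ∑ k ∈ Finset.range n, q^k = (1 - q^n)/(1-q) := by
      have e : (q^n - 1)/(q - 1) = (1 - q^n)/(1 - q) := by
        rw [← neg_div_neg_eq]
        ring_nf
      exact (geom_sum_eq hqlt.ne n).trans e
    rw [h1, div_le_div_iff₀ h3 h3]
    nlinarith [h2]
  have hKq : 1/(1-q) = K₀ := by
    have hne1 : (1:ℝ) - q ≠ 0 := by nlinarith [hqlt]
    rw [hq, hK₀]
    field_simp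
    ring
  have hlaplace : ∀ (f : V → ℝ), LipWith d 1 f → ∀ t : ℝ,
      ∑ x, π x * Real.exp (t * f x) ≤ Real.exp (t * ∑ x, π x * f x + t^2 * K₀ / 2) := by
    intro f hf t
    have hbound : ∀ n : ℕ, ∑ x, π x * Real.exp (t * f x) ≤
        Real.exp (t * ∑ x, π x * f x + |t| * ((1 - 1/α)^n * (2*α)) + t^2 * K₀/2) := by
      intro n
      have e0 : ∑ x, π x * Real.exp (t * f x)
          = ∑ x, π x * (P^[n] (fun z => Real.exp (t * f z))) x :=
        (hstatn (fun z => Real.exp (t * f z)) n).symm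
      rw [e0]
      have step1 : ∀ x, π x * (P^[n] (fun z => Real.exp (t * f z))) x ≤
          π x * Real.exp (t * ∑ y, π y * f y + |t| * ((1 - 1/α)^n * (2*α)) + t^2 * K₀/2) := by
        intro x
        refine mul_le_mul_of_nonneg_left ?_ (hπ.1 x)
        refine (hexpn f t hf n x).trans ?_
        rw [Real.exp_le_exp]
        have h2 := hosc f hf n x
        have h3 : t * ((P^[n] f) x - ∑ y, π y * f y) ≤ |t| * ((1 - 1/α)^n * (2*α)) := by
          calc t * ((P^[n] f) x - ∑ y, π y * f y)
              ≤ |t * ((P^[n] f) x - ∑ y, π y * f y)| := le_abs_self _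
            _ = |t| * |(P^[n] f) x - ∑ y, π y * f y| := abs_mul t _
            _ ≤ |t| * ((1 - 1/α)^n * (2*α)) :=
                mul_le_mul_of_nonneg_left h2 (abs_nonneg t)
        have h4 : t * (P^[n] f) x - t * ∑ y, π y * f y ≤ |t| * ((1 - 1/α)^n * (2*α)) := by
          nlinarith [h3]
        have h5 : t^2/2 * ∑ k ∈ Finset.range n, q^k ≤ t^2 * K₀ / 2 := by
          have h6 := hgeom n
          rw [hKq] at h6
          calc t^2/2 * ∑ k ∈ Finset.range n, q^k ≤ t^2/2 * K₀ :=
                mul_le_mul_of_nonneg_left h6 (by positivity)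
            _ = t^2 * K₀/2 := by ring
        linarith
      calc ∑ x, π x * (P^[n] (fun z => Real.exp (t * f z))) x
          ≤ ∑ x, π x * Real.exp (t * ∑ y, π y * f y
              + |t| * ((1 - 1/α)^n * (2*α)) + t^2 * K₀/2) :=
            Finset.sum_le_sum fun x _ => step1 x
        _ = Real.exp (t * ∑ y, π y * f y + |t| * ((1 - 1/α)^n * (2*α)) + t^2 * K₀/2) := by
            rw [← Finset.sum_mul, prob_sum hπ, one_mul]
    have hlim : Filter.Tendsto
        (fun n : ℕ => Real.exp (t * ∑ x, π x * f x + |t| * ((1 - 1/α)^n * (2*α)) + t^2 * K₀/2))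
        Filter.atTop
        (nhds (Real.exp (t * ∑ x, π x * f x + |t| * (0 * (2*α)) + t^2 * K₀/2))) := by
      have hpow : Filter.Tendsto (fun n : ℕ => (1 - 1/α)^n) Filter.atTop (nhds 0) :=
        tendsto_pow_atTop_nhds_zero_of_lt_one (by linarith) (by linarith)
      refine (Real.continuous_exp.tendsto _).comp ?_
      refine Filter.Tendsto.add (Filter.Tendsto.add tendsto_const_nhds ?_) tendsto_const_nhds
      exact Filter.Tendsto.const_mul _ (hpow.mul_const _)
    have hfinal := ge_of_tendsto' hlim hbound
    simpa using hfinal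
  set H : ℝ := ∑ x, μ x * Real.log (μ x / π x) with hH
  have hrelent : relent μ π = H := by
    rw [relent]
    exact tsum_fintype _
  have hHnn : 0 ≤ H := relent_sum_nonneg μ π hμ hπ hAC
  have hdual : ∀ f : V → ℝ, LipWith d 1 f →
      ∑ x, f x * μ x - ∑ x, f x * π x ≤ Real.sqrt (2 * K₀ * H) := by
    intro f hf
    apply delta_le_sqrt hK₀pos hHnn
    intro t ht
    have hg := gibbs_ineq μ π hμ hπ hAC (fun x => t * f x)
    have hlap := hlaplace f hf t
    have hπpos : 0 < ∑ x, π x * Real.exp (t * f x) := by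
      have hex : ∃ x, 0 < π x := by
        by_contra h
        push_neg at h
        have hz : ∀ x, π x = 0 := fun x => le_antisymm (h x) (hπ.1 x)
        have := prob_sum hπ
        rw [Finset.sum_congr rfl fun x _ => hz x] at this
        simp at this
      obtain ⟨x₀, hx₀⟩ := hex
      refine Finset.sum_pos' (fun x _ => mul_nonneg (hπ.1 x) (Real.exp_pos _).le)
        ⟨x₀, Finset.mem_univ x₀, mul_pos hx₀ (Real.exp_pos _)⟩
    have hlog : Real.log (∑ x, π x * Real.exp (t * f x))
        ≤ t * ∑ x, π x * f x + t^2 * K₀/2 := by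
      calc Real.log (∑ x, π x * Real.exp (t * f x))
          ≤ Real.log (Real.exp (t * ∑ x, π x * f x + t^2 * K₀/2)) :=
            Real.log_le_log hπpos hlap
        _ = t * ∑ x, π x * f x + t^2 * K₀/2 := Real.log_exp _
    have e1 : ∑ x, μ x * (t * f x) = t * ∑ x, f x * μ x := by
      rw [Finset.mul_sum]
      exact Finset.sum_congr rfl fun x _ => by ring
    have e2 : ∑ x, π x * f x = ∑ x, f x * π x :=
      Finset.sum_congr rfl fun x _ => mul_comm _ _
    rw [e1] at hg
    rw [e2] at hlog
    have h6 : t * (∑ x, f x * μ x - ∑ x, f x * π x) ≤ H + t^2 * K₀ / 2 := by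
      nlinarith [hg, hlog]
    have h8 : t * (H/t + t*K₀/2) = H + t^2*K₀/2 := by
      field_simp
    have h9 : t * (∑ x, f x * μ x - ∑ x, f x * π x) ≤ t * (H/t + t*K₀/2) := by
      rw [h8]; exact h6
    exact le_of_mul_le_mul_left h9 ht
  have hW1 : W1 d μ π ≤ Real.sqrt (2 * K₀ * H) :=
    W1_le_of_dual d hd0 hdnn hdsymm htri μ π hμ hπ _ hdual
  have hW1nn : 0 ≤ W1 d μ π := W1_nonneg hdnn hμ hπ
  have hsq : (W1 d μ π)^2 ≤ 2 * K₀ * H := by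
    calc (W1 d μ π)^2 ≤ (Real.sqrt (2*K₀*H))^2 := pow_le_pow_left₀ hW1nn hW1 2
      _ = 2*K₀*H := Real.sq_sqrt (by positivity)
  rw [hrelent]
  calc (W1 d μ π)^2 ≤ 2*K₀*H := hsq
    _ = 2*α/(2 - 1/α) * H := by rw [hK₀]; ring
end
end

section
/- Let p be a Markov kernel on a graph G = (Ω,E) with graph distance d such that p(x,y) > 0 implies d(x,y) ≤ 1. Then for all x,y ∈ Ω, d(x,y) ≤ W₁(p(x,·),p(y,·)) + 2. Consequently, if (Ω,p,d) has coarse Ricci curvature at least 1/α, then the diameter of (Ω,d) is at most 2α. -/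
open scoped BigOperators

noncomputable section

/-- if transitions move by distance at most `1`, then
`d(x,y) ≤ W₁(p(x,·),p(y,·)) + 2`; consequently coarse Ricci curvature at least `1/α`
forces the diameter to be at most `2α`. -/
theorem dist_le_W1_add_two_and_diam_bound {Ω : Type*} [MetricSpace Ω]
    (p : Ω → Ω → ℝ)
    (hp : ∀ x, IsProb (p x))
    (hstep : ∀ x y, p x y ≠ 0 → dist x y ≤ 1) :
    (∀ x y : Ω, dist x y ≤ W1 (fun a b => dist a b) (p x) (p y) + 2) ∧
    (∀ α : ℝ, 1 ≤ α →
      (∀ x y : Ω, W1 (fun a b => dist a b) (p x) (p y) ≤ (1 - 1/α) * dist x y) →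
      ∀ x y : Ω, dist x y ≤ 2 * α) := by
  have key : ∀ x y : Ω, dist x y ≤ W1 (fun a b => dist a b) (p x) (p y) + 2 := by
    intro x y
    set S : Set ℝ :=
      { r | ∃ γ, IsCoupling γ (p x) (p y) ∧
          HasSum (fun z : Ω × Ω => γ z * dist z.1 z.2) r } with hS
    -- the product coupling shows S is nonempty
    have hγ0sum : Summable fun z : Ω × Ω => p x z.1 * p y z.2 :=
      (hp x).2.summable.mul_of_nonneg (hp y).2.summable (hp x).1 (hp y).1
    have hcost_le : ∀ z : Ω × Ω,
        p x z.1 * p y z.2 * dist z.1 z.2 ≤ p x z.1 * p y z.2 * (dist x y + 2) := by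
      intro ⟨a, b⟩
      by_cases h : p x a * p y b = 0
      · simp [h]
      · have ha : p x a ≠ 0 := fun h' => h (by simp [h'])
        have hb : p y b ≠ 0 := fun h' => h (by simp [h'])
        have h1 : dist x a ≤ 1 := hstep x a ha
        have h2 : dist y b ≤ 1 := hstep y b hb
        have hd : dist a b ≤ dist x y + 2 := by
          have := dist_triangle a x b
          have := dist_triangle x y b
          have := dist_comm x a
          have := dist_comm y b
          linarith [dist_triangle a x b, dist_triangle x y b]
        exact mul_le_mul_of_nonneg_left hd (mul_nonneg ((hp x).1 a) ((hp y).1 b))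
    have hcost_sum : Summable fun z : Ω × Ω => p x z.1 * p y z.2 * dist z.1 z.2 := by
      refine Summable.of_nonneg_of_le
        (fun z => mul_nonneg (mul_nonneg ((hp x).1 z.1) ((hp y).1 z.2)) dist_nonneg)
        hcost_le (hγ0sum.mul_right _)
    have hSne : S.Nonempty := by
      refine ⟨∑' z : Ω × Ω, p x z.1 * p y z.2 * dist z.1 z.2,
        fun z => p x z.1 * p y z.2, ⟨?_, ?_, ?_⟩, hcost_sum.hasSum⟩
      · exact fun z => mul_nonneg ((hp x).1 z.1) ((hp y).1 z.2)
      · intro a; simpa using (hp y).2.mul_left (p x a)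
      · intro b; simpa using (hp x).2.mul_right (p y b)
    -- every element of S is at least dist x y - 2
    have hlb : ∀ r ∈ S, dist x y - 2 ≤ r := by
      rintro r ⟨γ, ⟨hγ0, hγ1, hγ2⟩, hr⟩
      have hr0 : 0 ≤ r :=
        hr.nonneg fun z => mul_nonneg (hγ0 z) dist_nonneg
      by_cases hd2 : dist x y ≤ 2
      · linarith
      · push_neg at hd2
        -- pointwise: γ z * (dist x y - 2) ≤ γ z * dist z.1 z.2
        have hpt : ∀ z : Ω × Ω, γ z * (dist x y - 2) ≤ γ z * dist z.1 z.2 := by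
          intro ⟨a, b⟩
          by_cases hz : γ (a, b) = 0
          · simp [hz]
          · have hpa : γ (a, b) ≤ p x a :=
              le_hasSum (hγ1 a) b (fun j _ => hγ0 _)
            have hpb : γ (a, b) ≤ p y b :=
              le_hasSum (hγ2 b) a (fun j _ => hγ0 _)
            have hγpos : 0 < γ (a, b) := lt_of_le_of_ne (hγ0 _) (Ne.symm hz)
            have ha : p x a ≠ 0 := (lt_of_lt_of_le hγpos hpa).ne'
            have hb : p y b ≠ 0 := (lt_of_lt_of_le hγpos hpb).ne'
            have h1 : dist x a ≤ 1 := hstep x a ha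
            have h2 : dist y b ≤ 1 := hstep y b hb
            have hd : dist x y - 2 ≤ dist a b := by
              have t1 := dist_triangle x a y
              have t2 := dist_triangle a b y
              have := dist_comm y b
              linarith
            exact mul_le_mul_of_nonneg_left hd (hγ0 _)
        -- γ is summable and sums to 1
        have hγsum : Summable γ := by
          have hs : Summable fun z : Ω × Ω => γ z * (dist x y - 2) := by
            refine Summable.of_nonneg_of_le
              (fun z => mul_nonneg (hγ0 z) (by linarith)) hpt hr.summable
          exact (summable_mul_right_iff (by linarith : dist x y - 2 ≠ 0)).mp hs
        have hγ1' : HasSum γ 1 := by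
          refine hγsum.hasSum_iff.mpr ?_
          rw [Summable.tsum_prod' hγsum (fun a => (hγ1 a).summable)]
          have : ∀ a, ∑' b, γ (a, b) = p x a := fun a => (hγ1 a).tsum_eq
          simp_rw [this]
          exact (hp x).2.tsum_eq
        have := hasSum_le hpt (hγ1'.mul_right (dist x y - 2)) hr
        linarith
    have : dist x y - 2 ≤ sInf S := le_csInf hSne hlb
    have hW : W1 (fun a b => dist a b) (p x) (p y) = sInf S := rfl
    linarith
  refine ⟨key, ?_⟩
  intro α hα hW x y
  have hαpos : 0 < α := lt_of_lt_of_le one_pos hα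
  have h1 := key x y
  have h2 := hW x y
  have h3 : (1 - 1/α) * dist x y = dist x y - dist x y / α := by
    field_simp
  have h4 : dist x y / α ≤ 2 := by linarith
  calc dist x y = dist x y / α * α := by field_simp
    _ ≤ 2 * α := mul_le_mul_of_nonneg_right h4 hαpos.le
end
end

section
/- (Föllmer drift representation.) Let {B_t}_{t=0}^T be a Markov chain on a countable space Ω with kernel p, B₀ = x₀, with T-step law μ_T, and assume μ_T(x) > 0 for every x in the support of a target measure ν. Let f = dν/dμ_T and define the time-inhomogeneous Markov chain {X_t}_{t=0}^T with X₀ = x₀ and transitions q_t(x,y) = p(x,y)·P_{T−t}f(y)/P_{T−t+1}f(x), where P_s f(x) = E[f(B_s)|B₀=x]. Then {X_t} is well-defined, and for all x₁,…,x_T ∈ Ω, P((X₁,…,X_T)=(x₁,…,x_T)) = P((B₁,…,B_T)=(x₁,…,x_T))·f(x_T). In particular X_T has law ν. -/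
open scoped BigOperators

noncomputable section

/-- Extend a finite path `ω : Fin (T+1) → Ω` to a function on `ℕ`. -/
def extPath {Ω : Type*} {T : ℕ} (ω : Fin (T + 1) → Ω) : ℕ → Ω :=
  fun n => if h : n < T + 1 then ω ⟨n, h⟩ else ω (Fin.last T)

/-- Path law of the Markov chain with kernel `p` started at `x₀`, on `Ω^{T+1}`. -/
def pathLawB {Ω : Type*} [DecidableEq Ω] (p : Ω → Ω → ℝ) (x₀ : Ω) (T : ℕ) :
    (Fin (T + 1) → Ω) → ℝ := fun ω =>
  (if ω 0 = x₀ then (1 : ℝ) else 0) *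
    ∏ t ∈ Finset.range T, p (extPath ω t) (extPath ω (t + 1))

/-- The `n`-step transition operator `P_n`. -/
def Pn {Ω : Type*} (p : Ω → Ω → ℝ) : ℕ → (Ω → ℝ) → Ω → ℝ
  | 0, f => f
  | n + 1, f => fun x => ∑' y, p x y * Pn p n f y

/-- `n`-step transition kernel `p^n(x,y)`. -/
def pPow {Ω : Type*} [DecidableEq Ω] (p : Ω → Ω → ℝ) : ℕ → Ω → Ω → ℝ
  | 0 => fun x y => if x = y then 1 else 0
  | n + 1 => fun x y => ∑' z, p x z * pPow p n z y

/-- The density `f = dν/dμ_T` where `μ_T = p^T(x₀,·)`. -/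
def follmerDens {Ω : Type*} [DecidableEq Ω] (p : Ω → Ω → ℝ) (ν : Ω → ℝ) (x₀ : Ω)
    (T : ℕ) : Ω → ℝ := fun y => ν y / pPow p T x₀ y

/-- The Föllmer drift transition probabilities
`q_t(x,y) = p(x,y)·P_{T−t}f(y)/P_{T−t+1}f(x)`. -/
def follmerQ {Ω : Type*} [DecidableEq Ω] (p : Ω → Ω → ℝ) (ν : Ω → ℝ) (x₀ : Ω)
    (T t : ℕ) (x y : Ω) : ℝ :=
  p x y * Pn p (T - t) (follmerDens p ν x₀ T) y / Pn p (T - t + 1) (follmerDens p ν x₀ T) x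

/-- Path law of the Föllmer drift process started at `x₀`. -/
def follmerPath {Ω : Type*} [DecidableEq Ω] (p : Ω → Ω → ℝ) (ν : Ω → ℝ) (x₀ : Ω)
    (T : ℕ) : (Fin (T + 1) → Ω) → ℝ := fun ω =>
  (if ω 0 = x₀ then (1 : ℝ) else 0) *
    ∏ t ∈ Finset.range T, follmerQ p ν x₀ T (t + 1) (extPath ω t) (extPath ω (t + 1))

open scoped ENNReal

namespace Follmer

variable {Ω : Type*}

/-- ENNReal version of `Pn`. -/
def PnE (pe : Ω → Ω → ℝ≥0∞) : ℕ → (Ω → ℝ≥0∞) → Ω → ℝ≥0∞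
  | 0, g => g
  | n + 1, g => fun x => ∑' y, pe x y * PnE pe n g y

/-- ENNReal version of `pPow`. -/
def pPowE [DecidableEq Ω] (pe : Ω → Ω → ℝ≥0∞) : ℕ → Ω → Ω → ℝ≥0∞
  | 0 => fun x y => if x = y then 1 else 0
  | n + 1 => fun x y => ∑' z, pe x z * pPowE pe n z y

/-- ENNReal version of `pathLawB`. -/
def pathLawBE [DecidableEq Ω] (pe : Ω → Ω → ℝ≥0∞) (x₀ : Ω) (T : ℕ) :
    (Fin (T + 1) → Ω) → ℝ≥0∞ := fun ω =>
  (if ω 0 = x₀ then (1 : ℝ≥0∞) else 0) *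
    ∏ t ∈ Finset.range T, pe (extPath ω t) (extPath ω (t + 1))

section lemmas
variable [DecidableEq Ω] (pe : Ω → Ω → ℝ≥0∞)

lemma pPowE_tsum (hpe : ∀ x, ∑' y, pe x y = 1) : ∀ n x, ∑' y, pPowE pe n x y = 1 := by
  intro n
  induction n with
  | zero =>
      intro x
      have : (fun y => pPowE pe 0 x y) = fun y => if y = x then (1 : ℝ≥0∞) else 0 := by
        funext y; simp [pPowE, eq_comm]
      rw [this, tsum_ite_eq]
  | succ n ih =>
      intro x
      have : ∑' y, pPowE pe (n+1) x y = ∑' z, pe x z * ∑' y, pPowE pe n z y := by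
        rw [show (fun y => pPowE pe (n+1) x y) = fun y => ∑' z, pe x z * pPowE pe n z y from rfl]
        rw [ENNReal.tsum_comm]
        exact tsum_congr fun z => ENNReal.tsum_mul_left
      rw [this]
      simp only [fun z => ih z, mul_one]
      exact hpe x

lemma pPowE_ne_top (hpe : ∀ x, ∑' y, pe x y = 1) (n : ℕ) (x y : Ω) :
    pPowE pe n x y ≠ ∞ := by
  have h1 : pPowE pe n x y ≤ 1 := by
    calc pPowE pe n x y ≤ ∑' y, pPowE pe n x y := ENNReal.le_tsum y
    _ = 1 := pPowE_tsum pe hpe n x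
  exact ne_top_of_le_ne_top ENNReal.one_ne_top h1

/-- Key identity: `∑_z p^m(x,z) (P_n g)(z) = (P_{m+n} g)(x)` in `ℝ≥0∞`. -/
lemma pPowE_PnE (g : Ω → ℝ≥0∞) :
    ∀ m n x, ∑' z, pPowE pe m x z * PnE pe n g z = PnE pe (m + n) g x := by
  intro m
  induction m with
  | zero =>
      intro n x
      have : (fun z => pPowE pe 0 x z * PnE pe n g z)
          = fun z => if z = x then PnE pe n g z else 0 := by
        funext z
        by_cases h : z = x
        · simp [pPowE, h]
        · simp [pPowE, h, Ne.symm h, fun hxz : x = z => h hxz.symm]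
      rw [this, tsum_eq_single x (fun z h => if_neg h)]
      simp
  | succ m ih =>
      intro n x
      have h1 : ∀ z, pPowE pe (m+1) x z * PnE pe n g z
          = ∑' w, pe x w * pPowE pe m w z * PnE pe n g z := by
        intro z
        rw [show pPowE pe (m+1) x z = ∑' w, pe x w * pPowE pe m w z from rfl,
          ENNReal.tsum_mul_right]
      calc ∑' z, pPowE pe (m+1) x z * PnE pe n g z
          = ∑' z, ∑' w, pe x w * pPowE pe m w z * PnE pe n g z := tsum_congr h1
        _ = ∑' w, ∑' z, pe x w * (pPowE pe m w z * PnE pe n g z) := by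
            rw [ENNReal.tsum_comm]; exact tsum_congr fun w => tsum_congr fun z => by ring
        _ = ∑' w, pe x w * ∑' z, pPowE pe m w z * PnE pe n g z :=
            tsum_congr fun w => ENNReal.tsum_mul_left
        _ = ∑' w, pe x w * PnE pe (m + n) g w := tsum_congr fun w => by rw [ih]
        _ = PnE pe (m + 1 + n) g x := by
            rw [show m + 1 + n = (m + n) + 1 by omega]; rfl

/-- Chain lower bound for `pPowE`. -/
lemma pPowE_chain_le : ∀ (t : ℕ) (σ : ℕ → Ω),
    (∏ u ∈ Finset.range t, pe (σ u) (σ (u+1))) ≤ pPowE pe t (σ 0) (σ t) := by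
  intro t
  induction t with
  | zero => intro σ; simp [pPowE]
  | succ t ih =>
      intro σ
      have h1 : pe (σ 0) (σ 1) * pPowE pe t (σ 1) (σ (t+1)) ≤ pPowE pe (t+1) (σ 0) (σ (t+1)) :=
        ENNReal.le_tsum (σ 1)
      have h2 := ih (fun n => σ (n+1))
      calc (∏ u ∈ Finset.range (t+1), pe (σ u) (σ (u+1)))
          = pe (σ 0) (σ 1) * ∏ u ∈ Finset.range t, pe (σ (u+1)) (σ (u+2)) := by
            rw [Finset.prod_range_succ']
            ring
        _ ≤ pe (σ 0) (σ 1) * pPowE pe t (σ 1) (σ (t+1)) := by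
            exact mul_le_mul_right h2 _
        _ ≤ pPowE pe (t+1) (σ 0) (σ (t+1)) := h1

end lemmas

section real
variable [DecidableEq Ω] (p : Ω → Ω → ℝ)

lemma pPow_nonneg (hp0 : ∀ x y, 0 ≤ p x y) : ∀ n x y, 0 ≤ pPow p n x y := by
  intro n
  induction n with
  | zero => intro x y; by_cases h : x = y <;> simp [pPow, h]
  | succ n ih =>
      intro x y
      exact tsum_nonneg fun z => mul_nonneg (hp0 x z) (ih z y)

lemma Pn_nonneg (hp0 : ∀ x y, 0 ≤ p x y) (g : Ω → ℝ) (hg : ∀ x, 0 ≤ g x) : ∀ n x, 0 ≤ Pn p n g x := by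
  intro n
  induction n with
  | zero => intro x; exact hg x
  | succ n ih => intro x; exact tsum_nonneg fun y => mul_nonneg (hp0 x y) (ih y)

lemma pPow_toReal (hp0 : ∀ x y, 0 ≤ p x y) (hpe : ∀ x, ∑' y, (ENNReal.ofReal (p x y)) = 1) :
    ∀ n x y, pPow p n x y = (pPowE (fun x y => ENNReal.ofReal (p x y)) n x y).toReal := by
  set pe := fun x y => ENNReal.ofReal (p x y) with hpedef
  intro n
  induction n with
  | zero => intro x y; by_cases h : x = y <;> simp [pPow, pPowE, h]
  | succ n ih =>
      intro x y
      have hterm : ∀ z, pe x z * pPowE pe n z y ≠ ∞ := fun z =>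
        ENNReal.mul_ne_top ENNReal.ofReal_ne_top (pPowE_ne_top pe hpe n z y)
      have heq : ∀ z, p x z * pPow p n z y = (pe x z * pPowE pe n z y).toReal := by
        intro z
        rw [ENNReal.toReal_mul, ih z y, hpedef, ENNReal.toReal_ofReal (hp0 x z)]
      calc pPow p (n+1) x y = ∑' z, p x z * pPow p n z y := rfl
        _ = ∑' z, (pe x z * pPowE pe n z y).toReal := tsum_congr heq
        _ = (∑' z, pe x z * pPowE pe n z y).toReal := (ENNReal.tsum_toReal_eq hterm).symm
        _ = (pPowE pe (n+1) x y).toReal := rfl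

lemma pPowE_eq_ofReal (hp0 : ∀ x y, 0 ≤ p x y) (hpe : ∀ x, ∑' y, (ENNReal.ofReal (p x y)) = 1) (n : ℕ) (x y : Ω) :
    pPowE (fun x y => ENNReal.ofReal (p x y)) n x y = ENNReal.ofReal (pPow p n x y) := by
  rw [pPow_toReal p hp0 hpe n x y,
    ENNReal.ofReal_toReal (pPowE_ne_top _ hpe n x y)]

/-- `Pn = toReal ∘ PnE` wherever `PnE` is finite. -/
lemma Pn_toReal (hp0 : ∀ x y, 0 ≤ p x y) (g : Ω → ℝ) (hg : ∀ x, 0 ≤ g x) :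
    ∀ n x, PnE (fun x y => ENNReal.ofReal (p x y)) n (fun x => ENNReal.ofReal (g x)) x ≠ ∞ →
      Pn p n g x = (PnE (fun x y => ENNReal.ofReal (p x y)) n (fun x => ENNReal.ofReal (g x)) x).toReal := by
  set pe := fun x y => ENNReal.ofReal (p x y) with hpedef
  set ge := fun x => ENNReal.ofReal (g x) with hgedef
  intro n
  induction n with
  | zero => intro x _; simp [Pn, PnE, hgedef, ENNReal.toReal_ofReal (hg x)]
  | succ n ih =>
      intro x hfin
      have hterm : ∀ y, pe x y * PnE pe n ge y ≠ ∞ := by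
        intro y
        have hy : pe x y * PnE pe n ge y ≤ PnE pe (n+1) ge x := ENNReal.le_tsum y
        exact ne_top_of_le_ne_top hfin hy
      have heq : ∀ y, p x y * Pn p n g y = (pe x y * PnE pe n ge y).toReal := by
        intro y
        by_cases hpxy : p x y = 0
        · simp [hpxy, hpedef, ENNReal.ofReal_zero]
        · have hppos : 0 < p x y := lt_of_le_of_ne (hp0 x y) (Ne.symm hpxy)
          have hpe0 : pe x y ≠ 0 := by
            simp only [hpedef]; exact (ENNReal.ofReal_pos.mpr hppos).ne'
          have hfiny : PnE pe n ge y ≠ ∞ := by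
            intro habs
            exact (hterm y) (by rw [habs, ENNReal.mul_top hpe0])
          rw [ENNReal.toReal_mul, ih y hfiny, hpedef, ENNReal.toReal_ofReal (hp0 x y)]
      calc Pn p (n+1) g x = ∑' y, p x y * Pn p n g y := rfl
        _ = ∑' y, (pe x y * PnE pe n ge y).toReal := tsum_congr heq
        _ = (∑' y, pe x y * PnE pe n ge y).toReal := (ENNReal.tsum_toReal_eq hterm).symm
        _ = (PnE pe (n+1) ge x).toReal := rfl

end real

end Follmer


namespace Follmer2
open Follmer

variable {Ω : Type*}

lemma extPath_lt {T : ℕ} (ω : Fin (T + 1) → Ω) {n : ℕ} (h : n < T + 1) :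
    extPath ω n = ω ⟨n, h⟩ := dif_pos h

lemma extPath_zero {T : ℕ} (ω : Fin (T + 1) → Ω) : extPath ω 0 = ω 0 := by
  rw [extPath_lt ω (Nat.succ_pos T)]; rfl

lemma extPath_top {T : ℕ} (ω : Fin (T + 1) → Ω) : extPath ω T = ω (Fin.last T) := by
  rw [extPath_lt ω (Nat.lt_succ_self T)]; rfl

lemma extPath_cons {T : ℕ} (z : Ω) (σ : Fin (T + 1) → Ω) (t : ℕ) :
    extPath (Fin.cons z σ : Fin (T + 2) → Ω) (t + 1) = extPath σ t := by
  by_cases h : t < T + 1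
  · have h2 : t + 1 < T + 2 := by omega
    rw [extPath_lt _ h2, extPath_lt _ h]
    exact @Fin.cons_succ (T + 1) (fun _ => Ω) z σ ⟨t, h⟩
  · have h2 : ¬ (t + 1 < T + 2) := by omega
    unfold extPath
    rw [dif_neg h2, dif_neg h]
    exact @Fin.cons_succ (T + 1) (fun _ => Ω) z σ (Fin.last T)

lemma extPath_cons_zero {T : ℕ} (z : Ω) (σ : Fin (T + 1) → Ω) :
    extPath (Fin.cons z σ : Fin (T + 2) → Ω) 0 = z := by
  rw [extPath_zero]; exact @Fin.cons_zero (T + 1) (fun _ => Ω) z σ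

/-- The equivalence `Ω × Ω^{T+1} ≃ Ω^{T+2}` given by `Fin.cons`. -/
def consE (n : ℕ) : Ω × (Fin (n + 1) → Ω) ≃ (Fin (n + 2) → Ω) where
  toFun q := Fin.cons q.1 q.2
  invFun ω := (ω 0, fun i => ω i.succ)
  left_inv q := by
    cases q with
    | mk z σ => simp
  right_inv ω := Fin.cons_self_tail ω

open scoped ENNReal

variable [DecidableEq Ω] (pe : Ω → Ω → ℝ≥0∞)

lemma PnE_forward_zero (g : Ω → ℝ≥0∞) :
    ∀ (k : ℕ) (σ : ℕ → Ω), (∀ j < k, pe (σ j) (σ (j + 1)) ≠ 0) →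
      PnE pe k g (σ 0) = 0 → g (σ k) = 0 := by
  intro k
  induction k with
  | zero => intro σ _ h0; exact h0
  | succ k ih =>
      intro σ hne h0
      have h1 : ∀ y, pe (σ 0) y * PnE pe k g y = 0 := by
        rw [← ENNReal.tsum_eq_zero]; exact h0
      have h2 : PnE pe k g (σ 1) = 0 := by
        rcases mul_eq_zero.mp (h1 (σ 1)) with h | h
        · exact absurd h (hne 0 (Nat.succ_pos k))
        · exact h
      have := ih (fun j => σ (j + 1)) (fun j hj => hne (j + 1) (by omega)) h2
      exact this

lemma tsum_pathLawBE : ∀ (T : ℕ) (x₀ y : Ω),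
    (∑' ω : Fin (T + 1) → Ω,
        if ω (Fin.last T) = y then pathLawBE pe x₀ T ω else 0) = pPowE pe T x₀ y := by
  intro T
  induction T with
  | zero =>
      intro x₀ y
      rw [← (Equiv.funUnique (Fin 1) Ω).symm.tsum_eq]
      have hz : ∀ z : Ω,
          (if ((Equiv.funUnique (Fin 1) Ω).symm z) (Fin.last 0) = y then
            pathLawBE pe x₀ 0 ((Equiv.funUnique (Fin 1) Ω).symm z) else 0)
          = if z = y then (if z = x₀ then (1 : ℝ≥0∞) else 0) else 0 := by
        intro z
        simp [pathLawBE, Equiv.funUnique]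
      rw [tsum_congr hz, tsum_eq_single y (fun z h => if_neg h), if_pos rfl]
      show _ = if x₀ = y then (1 : ℝ≥0∞) else 0
      by_cases h : y = x₀
      · rw [if_pos h, if_pos h.symm]
      · rw [if_neg h, if_neg (fun hc => h hc.symm)]
  | succ T ihT =>
      intro x₀ y
      rw [← (consE T).tsum_eq, ENNReal.tsum_prod']
      have hsplit : ∀ (z : Ω) (σ : Fin (T + 1) → Ω),
          pathLawBE pe x₀ (T + 1) (Fin.cons z σ) =
            (if z = x₀ then (1 : ℝ≥0∞) else 0) *
              ((∏ t ∈ Finset.range T, pe (extPath σ t) (extPath σ (t + 1))) *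
                pe z (σ 0)) := by
        intro z σ
        unfold pathLawBE
        have hz0 : (Fin.cons z σ : Fin (T + 2) → Ω) 0 = z :=
          @Fin.cons_zero (T + 1) (fun _ => Ω) z σ
        rw [hz0, Finset.prod_range_succ']
        congr 1
        congr 1
        · refine Finset.prod_congr rfl fun t _ => ?_
          rw [extPath_cons, extPath_cons]
      have hlast : ∀ (z : Ω) (σ : Fin (T + 1) → Ω),
          (Fin.cons z σ : Fin (T + 2) → Ω) (Fin.last (T + 1)) = σ (Fin.last T) := by
        intro z σ
        exact @Fin.cons_succ (T + 1) (fun _ => Ω) z σ (Fin.last T)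
      have hsummand : ∀ (z : Ω) (σ : Fin (T + 1) → Ω),
          (if (consE T (z, σ)) (Fin.last (T + 1)) = y then
              pathLawBE pe x₀ (T + 1) (consE T (z, σ)) else 0)
          = (if z = x₀ then (1 : ℝ≥0∞) else 0) *
              (if σ (Fin.last T) = y then
                (∏ t ∈ Finset.range T, pe (extPath σ t) (extPath σ (t + 1))) * pe z (σ 0)
              else 0) := by
        intro z σ
        show (if (Fin.cons z σ : Fin (T + 2) → Ω) (Fin.last (T + 1)) = y then
            pathLawBE pe x₀ (T + 1) (Fin.cons z σ) else 0) = _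
        rw [hlast]
        by_cases h : σ (Fin.last T) = y
        · rw [if_pos h, if_pos h, hsplit]
        · rw [if_neg h, if_neg h, mul_zero]
      calc (∑' z, ∑' σ : Fin (T + 1) → Ω,
            if (consE T (z, σ)) (Fin.last (T + 1)) = y then
              pathLawBE pe x₀ (T + 1) (consE T (z, σ)) else 0)
          = ∑' z, (if z = x₀ then (1 : ℝ≥0∞) else 0) *
              ∑' σ : Fin (T + 1) → Ω, (if σ (Fin.last T) = y then
                (∏ t ∈ Finset.range T, pe (extPath σ t) (extPath σ (t + 1))) * pe z (σ 0)
              else 0) := by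
            refine tsum_congr fun z => ?_
            rw [← ENNReal.tsum_mul_left]
            exact tsum_congr fun σ => hsummand z σ
        _ = ∑' σ : Fin (T + 1) → Ω, (if σ (Fin.last T) = y then
              (∏ t ∈ Finset.range T, pe (extPath σ t) (extPath σ (t + 1))) * pe x₀ (σ 0)
            else 0) := by
            rw [tsum_eq_single x₀ (fun z h => by rw [if_neg h, zero_mul]), if_pos rfl, one_mul]
        _ = ∑' σ : Fin (T + 1) → Ω, ∑' w, (if σ (Fin.last T) = y then
              pe x₀ w * pathLawBE pe w T σ else 0) := by
            refine tsum_congr fun σ => ?_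
            by_cases h : σ (Fin.last T) = y
            · rw [if_pos h]
              simp only [if_pos h]
              have : ∀ w, pe x₀ w * pathLawBE pe w T σ
                  = if σ 0 = w then
                      (∏ t ∈ Finset.range T, pe (extPath σ t) (extPath σ (t + 1))) * pe x₀ w
                    else 0 := by
                intro w
                unfold pathLawBE
                by_cases hw : σ 0 = w
                · rw [if_pos hw, if_pos hw, one_mul, ← hw]; ring
                · rw [if_neg hw, if_neg hw, zero_mul, mul_zero]
              rw [tsum_congr this, tsum_eq_single (σ 0)
                (fun w hw => if_neg (fun hc => hw hc.symm)), if_pos rfl]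
            · simp only [if_neg h, tsum_zero]
        _ = ∑' w, pe x₀ w *
              ∑' σ : Fin (T + 1) → Ω, (if σ (Fin.last T) = y then pathLawBE pe w T σ else 0) := by
            rw [ENNReal.tsum_comm]
            refine tsum_congr fun w => ?_
            rw [← ENNReal.tsum_mul_left]
            refine tsum_congr fun σ => ?_
            by_cases h : σ (Fin.last T) = y
            · rw [if_pos h, if_pos h]
            · rw [if_neg h, if_neg h, mul_zero]
        _ = ∑' w, pe x₀ w * pPowE pe T w y := tsum_congr fun w => by rw [ihT w y]
        _ = pPowE pe (T + 1) x₀ y := rfl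

lemma pathLawBE_ne_top (hpe : ∀ x y, pe x y ≠ ∞) {T : ℕ} (x₀ : Ω) (ω : Fin (T + 1) → Ω) :
    pathLawBE pe x₀ T ω ≠ ∞ := by
  unfold pathLawBE
  refine ENNReal.mul_ne_top ?_ (ENNReal.prod_ne_top fun t _ => hpe _ _)
  by_cases h : ω 0 = x₀ <;> simp [h]

lemma pathLawB_toReal (p : Ω → Ω → ℝ) (hp0 : ∀ x y, 0 ≤ p x y) {T : ℕ} (x₀ : Ω)
    (ω : Fin (T + 1) → Ω) :
    pathLawB p x₀ T ω
      = (pathLawBE (fun x y => ENNReal.ofReal (p x y)) x₀ T ω).toReal := by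
  unfold pathLawB pathLawBE
  rw [ENNReal.toReal_mul, ENNReal.toReal_prod]
  congr 1
  · by_cases h : ω 0 = x₀ <;> simp [h]
  · exact Finset.prod_congr rfl fun t _ => (ENNReal.toReal_ofReal (hp0 _ _)).symm

lemma prod_telescope (c b : ℕ → ℝ) :
    ∀ n : ℕ, (∀ t < n, b t ≠ 0) →
      (∏ t ∈ Finset.range n, (c t * b (t + 1) / b t)) * b 0
        = (∏ t ∈ Finset.range n, c t) * b n := by
  intro n
  induction n with
  | zero => simp
  | succ n ih =>
      intro hb
      have hb' : ∀ t < n, b t ≠ 0 := fun t ht => hb t (by omega)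
      have hbn : b n ≠ 0 := hb n (by omega)
      rw [Finset.prod_range_succ, Finset.prod_range_succ]
      calc (∏ t ∈ Finset.range n, (c t * b (t + 1) / b t)) * (c n * b (n + 1) / b n) * b 0
          = ((∏ t ∈ Finset.range n, (c t * b (t + 1) / b t)) * b 0)
              * (c n * b (n + 1) / b n) := by ring
        _ = ((∏ t ∈ Finset.range n, c t) * b n) * (c n * b (n + 1) / b n) := by rw [ih hb']
        _ = (∏ t ∈ Finset.range n, c t) * c n * b (n + 1) := by
            field_simp

end Follmer2

open Follmer Follmer2

/-- Föllmer drift representation: if `μ_T = p^T(x₀,·) > 0` on the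
support of `ν`, the drift process is well-defined, its path law has density
`f(x_T) = (dν/dμ_T)(x_T)` with respect to the path law of `B`, and `X_T ∼ ν`. -/
theorem follmer_drift_representation {Ω : Type*} [Countable Ω] [DecidableEq Ω]
    (p : Ω → Ω → ℝ) (ν : Ω → ℝ) (x₀ : Ω) (T : ℕ) (hT : 1 ≤ T)
    (hp : ∀ x, IsProb (p x)) (hν : IsProb ν)
    (hpos : ∀ x, ν x ≠ 0 → 0 < pPow p T x₀ x) :
    (∀ t, 1 ≤ t → t ≤ T → ∀ x : Ω,
        Pn p (T - t + 1) (follmerDens p ν x₀ T) x ≠ 0 →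
        HasSum (follmerQ p ν x₀ T t x) 1) ∧
    (∀ ω : Fin (T + 1) → Ω,
        follmerPath p ν x₀ T ω =
          pathLawB p x₀ T ω * follmerDens p ν x₀ T (ω (Fin.last T))) ∧
    (∀ y : Ω,
        (∑' ω : Fin (T + 1) → Ω,
          if ω (Fin.last T) = y then follmerPath p ν x₀ T ω else 0) = ν y) := by
  have hp0 : ∀ x y, 0 ≤ p x y := fun x y => (hp x).1 y
  set f : Ω → ℝ := follmerDens p ν x₀ T with hfdef
  set pe : Ω → Ω → ℝ≥0∞ := fun x y => ENNReal.ofReal (p x y) with hpedef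
  set fe : Ω → ℝ≥0∞ := fun x => ENNReal.ofReal (f x) with hfedef
  have hpe1 : ∀ x, ∑' y, pe x y = 1 := by
    intro x
    simp only [hpedef]
    rw [← ENNReal.ofReal_tsum_of_nonneg ((hp x).1) (hp x).2.summable,
      (hp x).2.tsum_eq, ENNReal.ofReal_one]
  have hf0 : ∀ y, 0 ≤ f y := fun y =>
    div_nonneg (hν.1 y) (pPow_nonneg p hp0 T x₀ y)
  have hνf : ∀ z, pPow p T x₀ z * f z = ν z := by
    intro z
    by_cases h : ν z = 0
    · simp [hfdef, follmerDens, h]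
    · have hz := hpos z h
      rw [hfdef]
      show pPow p T x₀ z * (ν z / pPow p T x₀ z) = ν z
      rw [mul_comm, div_mul_cancel₀ _ (ne_of_gt hz)]
  have hM1 : PnE pe T fe x₀ = 1 := by
    have h5 := pPowE_PnE pe fe T 0 x₀
    rw [Nat.add_zero] at h5
    rw [← h5]
    have hz : ∀ z, pPowE pe T x₀ z * PnE pe 0 fe z = ENNReal.ofReal (ν z) := by
      intro z
      show pPowE pe T x₀ z * fe z = _
      rw [hpedef, pPowE_eq_ofReal p hp0 hpe1 T x₀ z, hfedef]
      show ENNReal.ofReal (pPow p T x₀ z) * ENNReal.ofReal (f z) = _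
      rw [← ENNReal.ofReal_mul (pPow_nonneg p hp0 T x₀ z), hνf z]
    rw [tsum_congr hz, ← ENNReal.ofReal_tsum_of_nonneg hν.1 hν.2.summable,
      hν.2.tsum_eq, ENNReal.ofReal_one]
  have hfinreach : ∀ t z, t ≤ T → pPowE pe t x₀ z ≠ 0 → PnE pe (T - t) fe z ≠ ∞ := by
    intro t z htT hz
    have h5 := pPowE_PnE pe fe t (T - t) x₀
    rw [show t + (T - t) = T by omega] at h5
    have hle : pPowE pe t x₀ z * PnE pe (T - t) fe z ≤ 1 := by
      rw [← hM1, ← h5]; exact ENNReal.le_tsum z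
    intro habs
    rw [habs, ENNReal.mul_top hz] at hle
    exact absurd hle (by simp)
  -- Part 2 first (needed for part 3)
  have part2 : ∀ ω : Fin (T + 1) → Ω,
      follmerPath p ν x₀ T ω = pathLawB p x₀ T ω * f (ω (Fin.last T)) := by
    intro ω
    by_cases h0 : ω 0 = x₀
    case neg => simp [follmerPath, pathLawB, h0]
    have hx0 : extPath ω 0 = x₀ := by rw [extPath_zero]; exact h0
    set b : ℕ → ℝ := fun t => Pn p (T - t) f (extPath ω t) with hbdef
    set c : ℕ → ℝ := fun t => p (extPath ω t) (extPath ω (t + 1)) with hcdef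
    have hfactor : ∀ t ∈ Finset.range T,
        follmerQ p ν x₀ T (t + 1) (extPath ω t) (extPath ω (t + 1))
          = c t * b (t + 1) / b t := by
      intro t ht
      have htT : t < T := Finset.mem_range.mp ht
      show p _ _ * Pn p (T - (t + 1)) f _ / Pn p (T - (t + 1) + 1) f _ = _
      rw [show T - (t + 1) + 1 = T - t by omega]
    have hb0 : b 0 = 1 := by
      show Pn p (T - 0) f (extPath ω 0) = 1
      rw [Nat.sub_zero, hx0, Pn_toReal p hp0 f hf0 T x₀ (by rw [hM1]; exact ENNReal.one_ne_top),
        hM1, ENNReal.toReal_one]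
    have hprodc : (∏ t ∈ Finset.range T, p (extPath ω t) (extPath ω (t + 1)))
        = ∏ t ∈ Finset.range T, c t := rfl
    simp only [follmerPath, pathLawB, if_pos h0, one_mul]
    rw [Finset.prod_congr rfl hfactor, hprodc]
    have hlastb : b T = f (ω (Fin.last T)) := by
      show Pn p (T - T) f (extPath ω T) = _
      rw [Nat.sub_self, extPath_top]
      rfl
    by_cases hc : ∀ t < T, c t ≠ 0
    · by_cases hbz : ∀ t < T, b t ≠ 0
      · have htel := prod_telescope c b T hbz
        rw [hb0, mul_one] at htel
        rw [htel, hlastb]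
      · push_neg at hbz
        obtain ⟨t, htT, hbt⟩ := hbz
        have hL : (∏ t ∈ Finset.range T, (c t * b (t + 1) / b t)) = 0 :=
          Finset.prod_eq_zero (Finset.mem_range.mpr htT) (by rw [hbt, div_zero])
        have hcpos : ∀ u, u < T → pe (extPath ω u) (extPath ω (u + 1)) ≠ 0 := by
          intro u hu
          have : 0 < p (extPath ω u) (extPath ω (u + 1)) :=
            lt_of_le_of_ne (hp0 _ _) (Ne.symm (hc u hu))
          simp only [hpedef]
          exact (ENNReal.ofReal_pos.mpr this).ne'
        have hreach : pPowE pe t x₀ (extPath ω t) ≠ 0 := by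
          have hch := pPowE_chain_le pe t (extPath ω)
          rw [hx0] at hch
          intro habs
          rw [habs, le_zero_iff] at hch
          obtain ⟨u, hu, hzero⟩ := Finset.prod_eq_zero_iff.mp hch
          exact hcpos u (lt_of_lt_of_le (Finset.mem_range.mp hu) (le_of_lt htT)) hzero
        have hfinb : PnE pe (T - t) fe (extPath ω t) ≠ ∞ :=
          hfinreach t _ (le_of_lt htT) hreach
        have hPnE0 : PnE pe (T - t) fe (extPath ω t) = 0 := by
          have hbr : b t = (PnE pe (T - t) fe (extPath ω t)).toReal :=
            Pn_toReal p hp0 f hf0 (T - t) (extPath ω t) hfinb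
          rw [hbr] at hbt
          exact ((ENNReal.toReal_eq_zero_iff _).mp hbt).resolve_right hfinb
        have hfe0 : fe (extPath ω T) = 0 := by
          have hfw := PnE_forward_zero pe fe (T - t) (fun j => extPath ω (t + j))
            (fun j hj => hcpos (t + j) (by omega))
            hPnE0
          have hfw' : fe (extPath ω (t + (T - t))) = 0 := hfw
          rw [show t + (T - t) = T by omega] at hfw'
          exact hfw'
        have hf0' : f (ω (Fin.last T)) = 0 := by
          rw [extPath_top] at hfe0
          have : ENNReal.ofReal (f (ω (Fin.last T))) = 0 := hfe0
          exact le_antisymm (ENNReal.ofReal_eq_zero.mp this) (hf0 _)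
        rw [hL, hf0', mul_zero]
    · push_neg at hc
      obtain ⟨t, htT, hct⟩ := hc
      have hL : (∏ t ∈ Finset.range T, (c t * b (t + 1) / b t)) = 0 :=
        Finset.prod_eq_zero (Finset.mem_range.mpr htT) (by rw [hct, zero_mul, zero_div])
      have hR : (∏ t ∈ Finset.range T, c t) = 0 :=
        Finset.prod_eq_zero (Finset.mem_range.mpr htT) hct
      rw [hL, hR, zero_mul]
  refine ⟨?_, part2, ?_⟩
  · -- Part 1: the q_t are transition probabilities
    intro t _ _ x hD
    have hg0 : ∀ y, 0 ≤ p x y * Pn p (T - t) f y := fun y =>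
      mul_nonneg (hp0 x y) (Pn_nonneg p hp0 f hf0 (T - t) y)
    have hDdef : Pn p (T - t + 1) f x = ∑' y, p x y * Pn p (T - t) f y := rfl
    have hsum : Summable fun y => p x y * Pn p (T - t) f y := by
      by_contra hns
      exact hD (hDdef.trans (tsum_eq_zero_of_not_summable hns))
    have hhs : HasSum (fun y => p x y * Pn p (T - t) f y) (Pn p (T - t + 1) f x) :=
      hDdef ▸ hsum.hasSum
    have hfin := hhs.div_const (Pn p (T - t + 1) f x)
    rw [div_self hD] at hfin
    exact hfin
  · -- Part 3: X_T has law ν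
    intro y
    have hstep1 : (∑' ω : Fin (T + 1) → Ω,
        if ω (Fin.last T) = y then follmerPath p ν x₀ T ω else 0)
        = ∑' ω : Fin (T + 1) → Ω,
            (if ω (Fin.last T) = y then pathLawB p x₀ T ω else 0) * f y := by
      refine tsum_congr fun ω => ?_
      by_cases h : ω (Fin.last T) = y
      · rw [if_pos h, if_pos h, part2 ω, h]
      · rw [if_neg h, if_neg h, zero_mul]
    have hterm_ne_top : ∀ ω : Fin (T + 1) → Ω,
        (if ω (Fin.last T) = y then pathLawBE pe x₀ T ω else 0) ≠ ∞ := by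
      intro ω
      by_cases h : ω (Fin.last T) = y
      · rw [if_pos h]
        exact pathLawBE_ne_top pe (fun x y => ENNReal.ofReal_ne_top) x₀ ω
      · rw [if_neg h]; exact ENNReal.zero_ne_top
    have hstep2 : (∑' ω : Fin (T + 1) → Ω,
        if ω (Fin.last T) = y then pathLawB p x₀ T ω else 0) = pPow p T x₀ y := by
      have hcong : ∀ ω : Fin (T + 1) → Ω,
          (if ω (Fin.last T) = y then pathLawB p x₀ T ω else 0)
            = (if ω (Fin.last T) = y then pathLawBE pe x₀ T ω else 0).toReal := by
        intro ω
        by_cases h : ω (Fin.last T) = y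
        · rw [if_pos h, if_pos h]
          exact pathLawB_toReal p hp0 x₀ ω
        · rw [if_neg h, if_neg h, ENNReal.toReal_zero]
      rw [tsum_congr hcong, ← ENNReal.tsum_toReal_eq hterm_ne_top, tsum_pathLawBE pe T x₀ y,
        ← pPow_toReal p hp0 hpe1 T x₀ y]
    rw [hstep1, tsum_mul_right, hstep2, hνf y]
end
end

section
/- With the Föllmer drift process {X_t}_{t=0}^T as above (the path law of X has density f(x_T) with respect to the path law of B, where f = dν/dμ_T), the relative entropy between the full trajectories equals the relative entropy between the endpoints: H( law(X₀,…,X_T) ‖ law(B₀,…,B_T) ) = E[log f(X_T)] = H(ν ‖ μ_T). -/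
open scoped BigOperators

noncomputable section

set_option linter.unusedSectionVars false
open scoped ENNReal

noncomputable section FAux

variable {Ω : Type*} [DecidableEq Ω]

def PE (p : Ω → Ω → ℝ) (x y : Ω) : ℝ≥0∞ := ENNReal.ofReal (p x y)

def QE (p : Ω → Ω → ℝ) : ℕ → Ω → Ω → ℝ≥0∞
  | 0 => fun x y => if x = y then 1 else 0
  | n + 1 => fun x y => ∑' z, PE p x z * QE p n z y

def PnE (p : Ω → Ω → ℝ) : ℕ → (Ω → ℝ≥0∞) → Ω → ℝ≥0∞
  | 0, g => g
  | n + 1, g => fun x => ∑' y, PE p x y * PnE p n g y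

lemma tsum_real_eq_toReal {ι : Type*} (u : ι → ℝ) (hu : ∀ i, 0 ≤ u i) :
    ∑' i, u i = (∑' i, ENNReal.ofReal (u i)).toReal := by
  rw [ENNReal.tsum_toReal_eq (fun i => ENNReal.ofReal_ne_top)]
  exact tsum_congr fun i => (ENNReal.toReal_ofReal (hu i)).symm

variable {p : Ω → Ω → ℝ}

lemma tsum_PE (hp : ∀ x, (∀ y, 0 ≤ p x y) ∧ HasSum (p x) 1) (x : Ω) :
    ∑' y, PE p x y = 1 := by
  unfold PE
  rw [← ENNReal.ofReal_tsum_of_nonneg ((hp x).1) ((hp x).2.summable),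
    (hp x).2.tsum_eq, ENNReal.ofReal_one]

lemma tsum_QE (hp : ∀ x, (∀ y, 0 ≤ p x y) ∧ HasSum (p x) 1) :
    ∀ n (x : Ω), ∑' y, QE p n x y = 1 := by
  intro n
  induction n with
  | zero => intro x; simp [QE]
  | succ n ih =>
    intro x
    rw [QE, ENNReal.tsum_comm]
    calc ∑' (z : Ω), ∑' (y : Ω), PE p x z * QE p n z y
        = ∑' (z : Ω), PE p x z * ∑' (y : Ω), QE p n z y := by
          exact tsum_congr fun z => ENNReal.tsum_mul_left
      _ = ∑' (z : Ω), PE p x z := by simp [ih]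
      _ = 1 := tsum_PE hp x

lemma QE_ne_top (hp : ∀ x, (∀ y, 0 ≤ p x y) ∧ HasSum (p x) 1) (n : ℕ) (x y : Ω) :
    QE p n x y ≠ ∞ := by
  have h := ENNReal.le_tsum (f := fun y => QE p n x y) y
  rw [tsum_QE hp n x] at h
  exact (h.trans_lt ENNReal.one_lt_top).ne

lemma pPow_eq_toReal (hp : ∀ x, (∀ y, 0 ≤ p x y) ∧ HasSum (p x) 1) :
    ∀ n (x y : Ω), pPow p n x y = (QE p n x y).toReal := by
  intro n
  induction n with
  | zero => intro x y; by_cases h : x = y <;> simp [pPow, QE, h]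
  | succ n ih =>
    intro x y
    show (∑' z, p x z * pPow p n z y) = (∑' z, PE p x z * QE p n z y).toReal
    rw [ENNReal.tsum_toReal_eq (f := fun z => PE p x z * QE p n z y)
      (fun z => ENNReal.mul_ne_top (by simp [PE]) (QE_ne_top hp n z y))]
    exact tsum_congr fun z => by
      rw [ENNReal.toReal_mul, ih, PE, ENNReal.toReal_ofReal ((hp x).1 z)]

lemma QE_eq_ofReal (hp : ∀ x, (∀ y, 0 ≤ p x y) ∧ HasSum (p x) 1) (n : ℕ) (x y : Ω) :
    QE p n x y = ENNReal.ofReal (pPow p n x y) := by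
  rw [pPow_eq_toReal hp, ENNReal.ofReal_toReal (QE_ne_top hp n x y)]

lemma QE_add (n m : ℕ) (x y : Ω) :
    QE p (m + n) x y = ∑' z, QE p m x z * QE p n z y := by
  induction m generalizing x with
  | zero =>
    simp only [Nat.zero_add, QE]
    rw [tsum_eq_single x] <;> simp
    intro b hb; simp [Ne.symm hb]
  | succ m ih =>
    have : m + 1 + n = (m + n) + 1 := by omega
    rw [this, QE]
    calc ∑' w, PE p x w * QE p (m + n) w y
        = ∑' w, PE p x w * ∑' z, QE p m w z * QE p n z y := by
          exact tsum_congr fun w => by rw [ih]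
      _ = ∑' w, ∑' z, PE p x w * (QE p m w z * QE p n z y) := by
          exact tsum_congr fun w => ENNReal.tsum_mul_left.symm
      _ = ∑' z, ∑' w, (PE p x w * QE p m w z) * QE p n z y := by
          rw [ENNReal.tsum_comm]
          exact tsum_congr fun z => tsum_congr fun w => by ring
      _ = ∑' z, QE p (m + 1) x z * QE p n z y := by
          exact tsum_congr fun z => by rw [QE, ENNReal.tsum_mul_right]

lemma QE_one (x y : Ω) : QE p 1 x y = PE p x y := by
  show (∑' z, PE p x z * QE p 0 z y) = PE p x y
  rw [tsum_eq_single y] <;> simp [QE]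
  intro b hb; simp [QE, hb]

lemma prod_le_QE (ω : ℕ → Ω) : ∀ t : ℕ,
    (∏ s ∈ Finset.range t, PE p (ω s) (ω (s + 1))) ≤ QE p t (ω 0) (ω t) := by
  intro t
  induction t with
  | zero => simp [QE]
  | succ t ih =>
    rw [Finset.prod_range_succ]
    have h1 : QE p t (ω 0) (ω t) * PE p (ω t) (ω (t+1)) ≤ QE p (t + 1) (ω 0) (ω (t+1)) := by
      rw [QE_add 1 t]
      refine le_trans ?_ (ENNReal.le_tsum (ω t))
      rw [QE_one]
    exact le_trans (mul_le_mul_left ih _) h1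

lemma PnE_eq_tsum (n : ℕ) (g : Ω → ℝ≥0∞) (x : Ω) :
    PnE p n g x = ∑' y, QE p n x y * g y := by
  induction n generalizing x with
  | zero =>
    rw [PnE, tsum_eq_single x] <;> simp [QE]
    intro b hb; simp [QE, Ne.symm hb]
  | succ n ih =>
    rw [PnE]
    calc ∑' z, PE p x z * PnE p n g z
        = ∑' z, ∑' y, PE p x z * (QE p n z y * g y) := by
          exact tsum_congr fun z => by rw [ih, ENNReal.tsum_mul_left]
      _ = ∑' y, ∑' z, (PE p x z * QE p n z y) * g y := by
          rw [ENNReal.tsum_comm]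
          exact tsum_congr fun y => tsum_congr fun z => by ring
      _ = ∑' y, (∑' z, PE p x z * QE p n z y) * g y :=
          tsum_congr fun y => ENNReal.tsum_mul_right
      _ = ∑' y, QE p (n+1) x y * g y := by
          exact tsum_congr fun y => by rw [QE]

end FAux

section FAux2
variable {Ω : Type*} [DecidableEq Ω] {p : Ω → Ω → ℝ}

lemma Pn_nonneg (hp0 : ∀ x y, 0 ≤ p x y) {f : Ω → ℝ} (hf : ∀ y, 0 ≤ f y) :
    ∀ n (x : Ω), 0 ≤ Pn p n f x := by
  intro n
  induction n with
  | zero => exact hf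
  | succ n ih =>
    intro x
    exact tsum_nonneg fun y => mul_nonneg (hp0 x y) (ih y)

lemma term_ne_top {ι : Type*} (g : ι → ℝ≥0∞) (h : (∑' i, g i) ≠ ⊤) (i : ι) : g i ≠ ⊤ :=
  fun ht => h (eq_top_iff.2 (ht ▸ ENNReal.le_tsum i))

lemma Pn_eq_toReal (hp : ∀ x, (∀ y, 0 ≤ p x y) ∧ HasSum (p x) 1)
    {f : Ω → ℝ} (hf : ∀ y, 0 ≤ f y) :
    ∀ n (x : Ω), PnE p n (fun y => ENNReal.ofReal (f y)) x ≠ ⊤ →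
      Pn p n f x = (PnE p n (fun y => ENNReal.ofReal (f y)) x).toReal := by
  intro n
  induction n with
  | zero => intro x _; simp [Pn, PnE, ENNReal.toReal_ofReal (hf x)]
  | succ n ih =>
    intro x hx
    set g : Ω → ℝ≥0∞ := fun y => ENNReal.ofReal (f y) with hg
    have hx' : (∑' y, PE p x y * PnE p n g y) ≠ ⊤ := hx
    show (∑' y, p x y * Pn p n f y) = (∑' y, PE p x y * PnE p n g y).toReal
    rw [ENNReal.tsum_toReal_eq (f := fun y => PE p x y * PnE p n g y)
      (term_ne_top _ hx')]
    refine tsum_congr fun y => ?_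
    by_cases h0 : PE p x y = 0
    · have : p x y = 0 := le_antisymm (ENNReal.ofReal_eq_zero.1 h0) ((hp x).1 y)
      simp [this, h0]
    · have hfin : PnE p n g y ≠ ⊤ := by
        intro ht
        exact term_ne_top _ hx' y (by rw [ht, ENNReal.mul_top h0])
      rw [ENNReal.toReal_mul, PE, ENNReal.toReal_ofReal ((hp x).1 y), ih y hfin]

end FAux2


-- specialized lemmas, to be appended before STATEMENT 13
section FAux3
variable {Ω : Type*} [DecidableEq Ω]
variable (p : Ω → Ω → ℝ) (ν : Ω → ℝ) (x₀ : Ω) (T : ℕ)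

lemma pPow_nonneg (hp : ∀ x, IsProb (p x)) (n : ℕ) (x y : Ω) : 0 ≤ pPow p n x y := by
  rw [pPow_eq_toReal hp]; exact ENNReal.toReal_nonneg

lemma fd_nonneg (hp : ∀ x, IsProb (p x)) (hν : IsProb ν) (y : Ω) :
    0 ≤ follmerDens p ν x₀ T y :=
  div_nonneg (hν.1 y) (pPow_nonneg p hp T x₀ y)

lemma QE_mul_F (hp : ∀ x, IsProb (p x)) (hpos : ∀ x, ν x ≠ 0 → 0 < pPow p T x₀ x) (y : Ω) :
    QE p T x₀ y * ENNReal.ofReal (follmerDens p ν x₀ T y) = ENNReal.ofReal (ν y) := by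
  rw [QE_eq_ofReal hp, follmerDens,
    ← ENNReal.ofReal_mul (pPow_nonneg p hp T x₀ y)]
  by_cases h : pPow p T x₀ y = 0
  · have hν0 : ν y = 0 := by
      by_contra hc
      exact absurd h (hpos y hc).ne'
    simp [h, hν0]
  · rw [mul_div_cancel₀ _ h]

lemma PnE_T_one (hp : ∀ x, IsProb (p x)) (hν : IsProb ν)
    (hpos : ∀ x, ν x ≠ 0 → 0 < pPow p T x₀ x) :
    PnE p T (fun y => ENNReal.ofReal (follmerDens p ν x₀ T y)) x₀ = 1 := by
  rw [PnE_eq_tsum]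
  calc ∑' y, QE p T x₀ y * ENNReal.ofReal (follmerDens p ν x₀ T y)
      = ∑' y, ENNReal.ofReal (ν y) := tsum_congr fun y => QE_mul_F p ν x₀ T hp hpos y
    _ = 1 := by
        rw [← ENNReal.ofReal_tsum_of_nonneg hν.1 hν.2.summable, hν.2.tsum_eq,
          ENNReal.ofReal_one]

end FAux3


section FAux4
variable {Ω : Type*} [DecidableEq Ω]

lemma prod_div_telescope' (a : ℕ → ℝ) : ∀ n : ℕ, (∀ t, t ≤ n → a t ≠ 0) →
    ∏ t ∈ Finset.range n, (a (t + 1) / a t) = a n / a 0 := by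
  intro n
  induction n with
  | zero => intro h; simp [div_self (h 0 le_rfl)]
  | succ n ih =>
    intro h
    rw [Finset.prod_range_succ, ih (fun t ht => h t (ht.trans (Nat.le_succ n))),
      div_mul_div_comm, mul_comm (a n) (a (n + 1)), mul_comm (a 0) (a n),
      mul_comm (a n) (a 0), mul_div_mul_right _ _ (h n (Nat.le_succ n))]

lemma extPath_eq {T : ℕ} (ω : Fin (T + 1) → Ω) (t : ℕ) (h : t < T + 1) :
    extPath ω t = ω ⟨t, h⟩ := dif_pos h

lemma extPath_zero {T : ℕ} (ω : Fin (T + 1) → Ω) : extPath ω 0 = ω 0 :=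
  extPath_eq ω 0 (Nat.succ_pos T)

lemma extPath_last {T : ℕ} (ω : Fin (T + 1) → Ω) : extPath ω T = ω (Fin.last T) :=
  extPath_eq ω T (Nat.lt_succ_self T)

variable (p : Ω → Ω → ℝ) (ν : Ω → ℝ) (x₀ : Ω) (T : ℕ)

lemma follmerPath_eq_mul (hT : 1 ≤ T) (hp : ∀ x, IsProb (p x)) (hν : IsProb ν)
    (hpos : ∀ x, ν x ≠ 0 → 0 < pPow p T x₀ x) (ω : Fin (T + 1) → Ω) :
    follmerPath p ν x₀ T ω =
      pathLawB p x₀ T ω * follmerDens p ν x₀ T (ω (Fin.last T)) := by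
  classical
  set f : Ω → ℝ := follmerDens p ν x₀ T with hf
  set F : Ω → ℝ≥0∞ := fun y => ENNReal.ofReal (f y) with hF
  set W : ℕ → Ω := extPath ω with hW
  rw [follmerPath, pathLawB]
  by_cases h0 : ω 0 = x₀
  swap
  · simp [h0]
  simp only [h0, if_true, one_mul]
  by_cases hstep : ∃ t ∈ Finset.range T, p (W t) (W (t + 1)) = 0
  · obtain ⟨t, ht, hz⟩ := hstep
    rw [Finset.prod_eq_zero ht (by rw [follmerQ, hz]; simp),
        Finset.prod_eq_zero ht hz, zero_mul]
  push_neg at hstep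
  have hPpos : ∀ t < T, 0 < p (W t) (W (t + 1)) := fun t ht =>
    lt_of_le_of_ne ((hp (W t)).1 (W (t + 1))) (Ne.symm (hstep t (Finset.mem_range.2 ht)))
  -- ENNReal quantities
  have hW0 : W 0 = x₀ := by rw [hW, extPath_zero, h0]
  have hWT : W T = ω (Fin.last T) := extPath_last ω
  have hone : PnE p T F x₀ = 1 := PnE_T_one p ν x₀ T hp hν hpos
  -- finiteness of A t for t ≤ T
  have hfin : ∀ t, t ≤ T → PnE p (T - t) F (W t) ≠ ⊤ := by
    intro t htT
    set c : ℝ≥0∞ := ∏ s ∈ Finset.range t, PE p (W s) (W (s + 1)) with hc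
    have hc0 : c ≠ 0 := by
      rw [hc, Finset.prod_ne_zero_iff]
      intro s hs
      have := hPpos s (lt_of_lt_of_le (Finset.mem_range.1 hs) htT)
      simp [PE, ENNReal.ofReal_eq_zero, not_le, this]
    have hcle : c ≤ QE p t x₀ (W t) := hW0 ▸ prod_le_QE W t
    have key : c * PnE p (T - t) F (W t) ≤ 1 := by
      rw [PnE_eq_tsum, ← ENNReal.tsum_mul_left, ← hone, PnE_eq_tsum]
      refine ENNReal.tsum_le_tsum fun y => ?_
      have h1 : c * (QE p (T - t) (W t) y * F y) ≤
          QE p t x₀ (W t) * QE p (T - t) (W t) y * F y := by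
        rw [← mul_assoc]
        exact mul_le_mul_left (mul_le_mul_left hcle _) _
      refine h1.trans (mul_le_mul_left ?_ _)
      calc QE p t x₀ (W t) * QE p (T - t) (W t) y
          ≤ ∑' z, QE p t x₀ z * QE p (T - t) z y := ENNReal.le_tsum (W t)
        _ = QE p (t + (T - t)) x₀ y := (QE_add (T - t) t x₀ y).symm
        _ = QE p T x₀ y := by rw [Nat.add_sub_cancel' htT]
    intro htop
    rw [htop, ENNReal.mul_top hc0] at key
    exact absurd key (by simp)
  -- lower bound on A t
  have hlow : ∀ t, t ≤ T →
      (∏ s ∈ Finset.range (T - t), PE p (W (t + s)) (W (t + s + 1))) * F (ω (Fin.last T)) ≤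
        PnE p (T - t) F (W t) := by
    intro t htT
    rw [PnE_eq_tsum]
    refine le_trans ?_ (ENNReal.le_tsum (ω (Fin.last T)))
    refine mul_le_mul_left ?_ _
    have hb := prod_le_QE (p := p) (fun s => W (t + s)) (T - t)
    simp only [Nat.add_zero] at hb
    rw [Nat.add_sub_cancel' htT, hWT] at hb
    exact le_trans (le_of_eq (Finset.prod_congr rfl fun s _ => by rw [Nat.add_assoc])) hb
  by_cases hfT : f (ω (Fin.last T)) = 0
  -- degenerate case: density vanishes at the endpoint
  · rw [hfT, mul_zero]
    have hmem : T - 1 ∈ Finset.range T := Finset.mem_range.2 (by omega)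
    refine Finset.prod_eq_zero hmem ?_
    have h1 : T - 1 + 1 = T := by omega
    rw [follmerQ, h1, Nat.sub_self]
    have hz : Pn p 0 (follmerDens p ν x₀ T) (W T) = 0 := by rw [hWT]; exact hfT
    rw [hz, mul_zero, zero_div]
  -- main case
  · have hfTpos : 0 < f (ω (Fin.last T)) :=
      lt_of_le_of_ne (fd_nonneg p ν x₀ T hp hν _) (Ne.symm hfT)
    have hApos : ∀ t, t ≤ T → PnE p (T - t) F (W t) ≠ 0 := by
      intro t htT h0'
      have := hlow t htT
      rw [h0', le_zero_iff, mul_eq_zero] at this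
      rcases this with h | h
      · rw [Finset.prod_eq_zero_iff] at h
        obtain ⟨s, hs, hz⟩ := h
        have hlt : t + s < T := by
          have := Finset.mem_range.1 hs; omega
        have := hPpos (t + s) hlt
        simp only [PE, ENNReal.ofReal_eq_zero] at hz
        exact absurd hz (not_le.2 this)
      · rw [hF] at h
        simp only [ENNReal.ofReal_eq_zero] at h
        exact absurd h (not_le.2 hfTpos)
    set a : ℕ → ℝ := fun t => Pn p (T - t) f (W t) with ha
    have haval : ∀ t, t ≤ T → a t = (PnE p (T - t) F (W t)).toReal := fun t htT =>
      Pn_eq_toReal hp (fd_nonneg p ν x₀ T hp hν) (T - t) (W t) (hfin t htT)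
    have hane : ∀ t, t ≤ T → a t ≠ 0 := by
      intro t htT
      rw [haval t htT]
      exact (ENNReal.toReal_pos (hApos t htT) (hfin t htT)).ne'
    have ha0 : a 0 = 1 := by
      have := haval 0 (Nat.zero_le T)
      rw [this, Nat.sub_zero, hW0, hone]; simp
    have haT : a T = f (ω (Fin.last T)) := by
      rw [ha]; simp only [Nat.sub_self]
      rw [hWT]; rfl
    have hq : ∀ t ∈ Finset.range T,
        follmerQ p ν x₀ T (t + 1) (W t) (W (t + 1)) =
          p (W t) (W (t + 1)) * (a (t + 1) / a t) := by
      intro t ht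
      have hlt := Finset.mem_range.1 ht
      have h2 : T - (t + 1) + 1 = T - t := by omega
      rw [follmerQ, h2, mul_div_assoc]
    rw [Finset.prod_congr rfl hq, Finset.prod_mul_distrib,
      prod_div_telescope' a T (fun t htT => hane t htT), ha0, haT, div_one, mul_comm]
end FAux4


section FAux5
variable {Ω : Type*} [DecidableEq Ω]

lemma extPath_cons {n : ℕ} (x' : Ω) (ω' : Fin (n + 1) → Ω) (t : ℕ) :
    extPath (Fin.cons x' ω' : Fin (n + 2) → Ω) (t + 1) = extPath ω' t := by
  unfold extPath
  by_cases h : t < n + 1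
  · rw [dif_pos (by omega : t + 1 < n + 2), dif_pos h]
    have he : (⟨t + 1, by omega⟩ : Fin (n + 2)) = Fin.succ ⟨t, h⟩ := rfl
    rw [he, Fin.cons_succ]
  · rw [dif_neg (by omega), dif_neg h]
    have he : Fin.last (n + 1) = Fin.succ (Fin.last n) := rfl
    rw [he, Fin.cons_succ]

lemma cons_last {n : ℕ} (x' : Ω) (ω' : Fin (n + 1) → Ω) :
    (Fin.cons x' ω' : Fin (n + 2) → Ω) (Fin.last (n + 1)) = ω' (Fin.last n) := by
  have he : Fin.last (n + 1) = Fin.succ (Fin.last n) := rfl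
  rw [he, Fin.cons_succ]

lemma tsum_path_mul (p : Ω → Ω → ℝ) : ∀ (n : ℕ) (g : Ω → ℝ≥0∞) (x : Ω),
    (∑' ω : Fin (n + 1) → Ω, ((if ω 0 = x then (1 : ℝ≥0∞) else 0) *
        ∏ t ∈ Finset.range n, PE p (extPath ω t) (extPath ω (t + 1))) *
          g (ω (Fin.last n))) = PnE p n g x := by
  intro n
  induction n with
  | zero =>
    intro g x
    rw [← (Equiv.funUnique (Fin 1) Ω).symm.tsum_eq]
    show (∑' y : Ω, ((if y = x then (1 : ℝ≥0∞) else 0) * _) * g _) = PnE p 0 g x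
    simp only [Finset.range_zero, Finset.prod_empty, mul_one]
    rw [tsum_eq_single x]
    · simp [PnE]
    · intro b hb; simp [hb]
  | succ n ih =>
    intro g x
    rw [← (Fin.consEquiv (fun _ : Fin (n + 2) => Ω)).tsum_eq, ENNReal.tsum_prod']
    have hsummand : ∀ (x' : Ω) (ω' : Fin (n + 1) → Ω),
        (((if (Fin.consEquiv (fun _ : Fin (n + 2) => Ω)) (x', ω') 0 = x then (1 : ℝ≥0∞) else 0) *
          ∏ t ∈ Finset.range (n + 1),
            PE p (extPath ((Fin.consEquiv (fun _ : Fin (n + 2) => Ω)) (x', ω')) t)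
              (extPath ((Fin.consEquiv (fun _ : Fin (n + 2) => Ω)) (x', ω')) (t + 1))) *
          g (((Fin.consEquiv (fun _ : Fin (n + 2) => Ω)) (x', ω')) (Fin.last (n + 1)))) =
        (if x' = x then (1 : ℝ≥0∞) else 0) * (∑' z : Ω, ((if ω' 0 = z then (1 : ℝ≥0∞) else 0) *
          PE p x' z) * (((∏ t ∈ Finset.range n, PE p (extPath ω' t) (extPath ω' (t + 1)))) *
            g (ω' (Fin.last n)))) := by
      intro x' ω'
      have hce : (Fin.consEquiv (fun _ : Fin (n + 2) => Ω)) (x', ω') =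
          (Fin.cons x' ω' : Fin (n + 2) → Ω) := rfl
      simp only [hce, Fin.cons_zero, cons_last]
      rw [Finset.prod_range_succ' (fun t => PE p (extPath (Fin.cons x' ω' : Fin (n + 2) → Ω) t)
        (extPath (Fin.cons x' ω' : Fin (n + 2) → Ω) (t + 1))) n]
      simp only [extPath_cons]
      have eA : extPath (Fin.cons x' ω' : Fin (n + 2) → Ω) 0 = x' := by
        rw [extPath_zero, Fin.cons_zero]
      rw [eA]
      rw [tsum_eq_single (ω' 0)]
      · rw [if_pos rfl, one_mul, extPath_zero]
        ring
      · intro b hb; rw [if_neg (fun h => hb h.symm), zero_mul, zero_mul]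
    calc (∑' (x' : Ω) (ω' : Fin (n + 1) → Ω), _) = ∑' (x' : Ω) (ω' : Fin (n + 1) → Ω),
          (if x' = x then (1 : ℝ≥0∞) else 0) * (∑' z : Ω, ((if ω' 0 = z then (1 : ℝ≥0∞) else 0) *
            PE p x' z) * (((∏ t ∈ Finset.range n, PE p (extPath ω' t) (extPath ω' (t + 1)))) *
              g (ω' (Fin.last n)))) :=
        tsum_congr fun x' => tsum_congr fun ω' => hsummand x' ω'
      _ = PnE p (n + 1) g x := by
        rw [tsum_eq_single x]
        swap
        · intro b hb; simp [hb]
        rw [if_pos rfl]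
        simp only [one_mul]
        rw [ENNReal.tsum_comm]
        show (∑' (z : Ω) (ω' : Fin (n + 1) → Ω), _) = _
        rw [PnE]
        refine tsum_congr fun z => ?_
        rw [← ih g z, ← ENNReal.tsum_mul_left]
        refine tsum_congr fun ω' => ?_
        ring
end FAux5


/-- for the Föllmer drift process, the relative entropy between the
trajectories equals `E[log f(X_T)]`, which equals the relative entropy between
the endpoint laws: `H(law(X₀,…,X_T) ‖ law(B₀,…,B_T)) = E[log f(X_T)] = H(ν ‖ μ_T)`. -/
theorem follmer_entropy_identity {Ω : Type*} [Countable Ω] [DecidableEq Ω]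
    (p : Ω → Ω → ℝ) (ν : Ω → ℝ) (x₀ : Ω) (T : ℕ) (hT : 1 ≤ T)
    (hp : ∀ x, IsProb (p x)) (hν : IsProb ν)
    (hpos : ∀ x, ν x ≠ 0 → 0 < pPow p T x₀ x)
    (hent : Summable (fun y => ν y * |Real.log (ν y / pPow p T x₀ y)|)) :
    relent (follmerPath p ν x₀ T) (pathLawB p x₀ T) =
      (∑' ω : Fin (T + 1) → Ω,
        follmerPath p ν x₀ T ω * Real.log (follmerDens p ν x₀ T (ω (Fin.last T)))) ∧
    (∑' ω : Fin (T + 1) → Ω,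
        follmerPath p ν x₀ T ω * Real.log (follmerDens p ν x₀ T (ω (Fin.last T)))) =
      relent ν (pPow p T x₀) := by
  classical
  have hfnn : ∀ y, 0 ≤ follmerDens p ν x₀ T y := fd_nonneg p ν x₀ T hp hν
  set f : Ω → ℝ := follmerDens p ν x₀ T with hfdef
  have hXB : ∀ ω : Fin (T + 1) → Ω,
      follmerPath p ν x₀ T ω = pathLawB p x₀ T ω * f (ω (Fin.last T)) :=
    follmerPath_eq_mul p ν x₀ T hT hp hν hpos
  have hBnn : ∀ ω : Fin (T + 1) → Ω, 0 ≤ pathLawB p x₀ T ω := fun ω => by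
    unfold pathLawB; exact mul_nonneg (by split <;> norm_num) (Finset.prod_nonneg fun t _ => (hp _).1 _)
  constructor
  · -- first identity
    refine tsum_congr fun ω => ?_
    by_cases hX : follmerPath p ν x₀ T ω = 0
    · rw [hX, zero_mul, zero_mul]
    · have hB : pathLawB p x₀ T ω ≠ 0 := fun h => hX (by rw [hXB ω, h, zero_mul])
      congr 1
      congr 1
      rw [hXB ω, mul_comm, mul_div_assoc, div_self hB, mul_one]
  · -- second identity
    have hent' : Summable fun y => ν y * |Real.log (f y)| := hent
    set lp : Ω → ℝ := fun y => max (Real.log (f y)) 0 with hlp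
    set lm : Ω → ℝ := fun y => max (-Real.log (f y)) 0 with hlm
    have hlpnn : ∀ y, 0 ≤ lp y := fun y => le_max_right _ _
    have hlmnn : ∀ y, 0 ≤ lm y := fun y => le_max_right _ _
    have hsplit : ∀ y, lp y - lm y = Real.log (f y) := fun y => by
      rw [hlp, hlm]; simp [max_def]; split <;> split <;> linarith
    have hlple : ∀ y, lp y ≤ |Real.log (f y)| := fun y =>
      max_le (le_abs_self _) (abs_nonneg _)
    have hlmle : ∀ y, lm y ≤ |Real.log (f y)| := fun y =>
      max_le (neg_le_abs _) (abs_nonneg _)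
    have hkey : ∀ y, pPow p T x₀ y * f y = ν y := by
      intro y
      by_cases h : pPow p T x₀ y = 0
      · have hν0 : ν y = 0 := by by_contra hc; exact absurd h (hpos y hc).ne'
        rw [h, zero_mul, hν0]
      · rw [hfdef]
        show pPow p T x₀ y * (ν y / pPow p T x₀ y) = ν y
        rw [mul_div_cancel₀ _ h]
    -- ENNReal machinery
    have hBE : ∀ ω : Fin (T + 1) → Ω, ENNReal.ofReal (pathLawB p x₀ T ω) =
        (if ω 0 = x₀ then (1 : ℝ≥0∞) else 0) *
          ∏ t ∈ Finset.range T, PE p (extPath ω t) (extPath ω (t + 1)) := by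
      intro ω
      rw [pathLawB, ENNReal.ofReal_mul (by split <;> norm_num),
        ENNReal.ofReal_prod_of_nonneg (fun i _ => (hp _).1 _)]
      congr 1
      split <;> simp
    have main : ∀ l : Ω → ℝ, (∀ y, 0 ≤ l y) → (∀ y, l y ≤ |Real.log (f y)|) →
        (Summable fun ω : Fin (T + 1) → Ω =>
            pathLawB p x₀ T ω * (f (ω (Fin.last T)) * l (ω (Fin.last T)))) ∧
          (Summable fun y => ν y * l y) ∧
          (∑' ω : Fin (T + 1) → Ω,
              pathLawB p x₀ T ω * (f (ω (Fin.last T)) * l (ω (Fin.last T)))) =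
            ∑' y, ν y * l y := by
      intro l hlnn hlle
      set G : Ω → ℝ≥0∞ := fun y => ENNReal.ofReal (f y * l y) with hG
      have hQG : ∀ y, QE p T x₀ y * G y = ENNReal.ofReal (ν y * l y) := by
        intro y
        rw [hG, QE_eq_ofReal hp, ← ENNReal.ofReal_mul (pPow_nonneg p hp T x₀ y),
          ← mul_assoc, hkey y]
      have hmarg : (∑' ω : Fin (T + 1) → Ω,
          ENNReal.ofReal (pathLawB p x₀ T ω) * G (ω (Fin.last T))) =
            ∑' y, ENNReal.ofReal (ν y * l y) := by
        calc (∑' ω : Fin (T + 1) → Ω,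
              ENNReal.ofReal (pathLawB p x₀ T ω) * G (ω (Fin.last T)))
            = ∑' ω : Fin (T + 1) → Ω, ((if ω 0 = x₀ then (1 : ℝ≥0∞) else 0) *
                ∏ t ∈ Finset.range T, PE p (extPath ω t) (extPath ω (t + 1))) *
                  G (ω (Fin.last T)) := tsum_congr fun ω => by rw [hBE ω]
          _ = PnE p T G x₀ := tsum_path_mul p T G x₀
          _ = ∑' y, QE p T x₀ y * G y := PnE_eq_tsum T G x₀
          _ = ∑' y, ENNReal.ofReal (ν y * l y) := tsum_congr hQG
      have hfin : (∑' y, ENNReal.ofReal (ν y * l y)) ≠ ⊤ := by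
        have hle : (∑' y, ENNReal.ofReal (ν y * l y)) ≤
            ∑' y, ENNReal.ofReal (ν y * |Real.log (f y)|) :=
          ENNReal.tsum_le_tsum fun y =>
            ENNReal.ofReal_le_ofReal (mul_le_mul_of_nonneg_left (hlle y) (hν.1 y))
        rw [← ENNReal.ofReal_tsum_of_nonneg
          (fun y => mul_nonneg (hν.1 y) (abs_nonneg _)) hent'] at hle
        exact (hle.trans_lt ENNReal.ofReal_lt_top).ne
      have hptw : ∀ ω : Fin (T + 1) → Ω,
          ENNReal.ofReal (pathLawB p x₀ T ω * (f (ω (Fin.last T)) * l (ω (Fin.last T)))) =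
            ENNReal.ofReal (pathLawB p x₀ T ω) * G (ω (Fin.last T)) := fun ω =>
        ENNReal.ofReal_mul (hBnn ω)
      have hunn : ∀ ω : Fin (T + 1) → Ω,
          0 ≤ pathLawB p x₀ T ω * (f (ω (Fin.last T)) * l (ω (Fin.last T))) := fun ω =>
        mul_nonneg (hBnn ω) (mul_nonneg (hfnn _) (hlnn _))
      have hsum1 : (∑' ω : Fin (T + 1) → Ω,
          pathLawB p x₀ T ω * (f (ω (Fin.last T)) * l (ω (Fin.last T)))) =
            (∑' y, ENNReal.ofReal (ν y * l y)).toReal := by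
        rw [tsum_real_eq_toReal _ hunn, ← hmarg]
        congr 1
        exact tsum_congr hptw
      have hsum2 : (∑' y, ν y * l y) = (∑' y, ENNReal.ofReal (ν y * l y)).toReal :=
        tsum_real_eq_toReal _ fun y => mul_nonneg (hν.1 y) (hlnn y)
      refine ⟨?_, ?_, by rw [hsum1, hsum2]⟩
      · have := ENNReal.summable_toReal (by rw [hmarg]; exact hfin :
          (∑' ω : Fin (T + 1) → Ω,
            ENNReal.ofReal (pathLawB p x₀ T ω) * G (ω (Fin.last T))) ≠ ⊤)
        refine this.congr fun ω => ?_
        rw [← hptw ω, ENNReal.toReal_ofReal (hunn ω)]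
      · exact Summable.of_nonneg_of_le (fun y => mul_nonneg (hν.1 y) (hlnn y))
          (fun y => mul_le_mul_of_nonneg_left (hlle y) (hν.1 y)) hent'
    obtain ⟨huP, hnP, heP⟩ := main lp hlpnn hlple
    obtain ⟨huM, hnM, heM⟩ := main lm hlmnn hlmle
    calc (∑' ω : Fin (T + 1) → Ω,
          follmerPath p ν x₀ T ω * Real.log (follmerDens p ν x₀ T (ω (Fin.last T))))
        = ∑' ω : Fin (T + 1) → Ω,
            (pathLawB p x₀ T ω * (f (ω (Fin.last T)) * lp (ω (Fin.last T))) -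
              pathLawB p x₀ T ω * (f (ω (Fin.last T)) * lm (ω (Fin.last T)))) := by
          refine tsum_congr fun ω => ?_
          rw [hXB ω]
          have := hsplit (ω (Fin.last T))
          have hfd : follmerDens p ν x₀ T (ω (Fin.last T)) = f (ω (Fin.last T)) := rfl
          rw [hfd]
          linear_combination (-(pathLawB p x₀ T ω * f (ω (Fin.last T)))) * this
      _ = (∑' ω : Fin (T + 1) → Ω,
            pathLawB p x₀ T ω * (f (ω (Fin.last T)) * lp (ω (Fin.last T)))) -
          ∑' ω : Fin (T + 1) → Ω,
            pathLawB p x₀ T ω * (f (ω (Fin.last T)) * lm (ω (Fin.last T))) :=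
          Summable.tsum_sub huP huM
      _ = (∑' y, ν y * lp y) - ∑' y, ν y * lm y := by rw [heP, heM]
      _ = ∑' y, (ν y * lp y - ν y * lm y) := (Summable.tsum_sub hnP hnM).symm
      _ = relent ν (pPow p T x₀) := by
          show _ = ∑' y, ν y * Real.log (ν y / pPow p T x₀ y)
          refine tsum_congr fun y => ?_
          have := hsplit y
          have hfd : (ν y / pPow p T x₀ y) = f y := rfl
          rw [hfd]
          linear_combination (ν y) * this
end
end

section
/- Let (Ω,p,d) be a countable metric space with Markov kernel p such that every probability measure of the form p(x,·) is supported on a set of diameter at most Δ, and suppose the coarse Ricci curvature is at least 1/α > 0. Then the unique stationary measure π satisfies the Gaussian concentration property: ∫ e^g dπ ≤ exp( ∫ g dπ + (Δ²α/(8(2−1/α)))·‖g‖_Lip² ) for every Lipschitz g : Ω → ℝ. -/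
open scoped BigOperators

noncomputable section

/-- Gaussian concentration property with constant `c`. -/
def GaussConc {Ω : Type*} (d : Ω → Ω → ℝ) (μ : Ω → ℝ) (c : ℝ) : Prop :=
  ∀ (f : Ω → ℝ) (L : ℝ), 0 ≤ L → LipWith d L f →
    Summable (fun x => μ x * f x) → Summable (fun x => μ x * Real.exp (f x)) →
    (∑' x, μ x * Real.exp (f x)) ≤ Real.exp ((∑' x, μ x * f x) + c * L ^ 2)

namespace StatAux


theorem exp_one_sub_le (s : ℝ) : Real.exp s * (1 - s) ≤ 1 := by
  have h := Real.add_one_le_exp (-s)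
  rw [Real.exp_neg] at h
  have h2 := mul_le_mul_of_nonneg_left h (Real.exp_pos s).le
  rw [mul_inv_cancel₀ (Real.exp_ne_zero s)] at h2
  nlinarith [h2]

theorem exp_quad (s : ℝ) : Real.exp s ≤ 1 + s + s ^ 2 * Real.exp |s| := by
  have hebig : (1:ℝ) ≤ Real.exp |s| := by
    rw [← Real.exp_zero]; exact Real.exp_le_exp.2 (abs_nonneg s)
  rcases le_or_gt 0 s with hs | hs
  · rw [abs_of_nonneg hs]
    have h1 := exp_one_sub_le s
    nlinarith [Real.exp_pos s, mul_nonneg (by linarith : (0:ℝ) ≤ 1 + s)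
      (by linarith : (0:ℝ) ≤ 1 - Real.exp s * (1 - s))]
  · have key : Real.exp s ≤ 1 + s + s ^ 2 := by
      have h1 := exp_one_sub_le s
      have hpos : (0:ℝ) < 1 - s := by linarith
      nlinarith [h1, hpos, sq_nonneg s, mul_pos hpos (mul_pos hpos hpos)]
    nlinarith [sq_nonneg s, hebig]


theorem twoPoint {p q : ℝ} (hp : 0 ≤ p) (hq : 0 ≤ q) (hpq : p + q = 1) (u : ℝ) :
    p + q * Real.exp u ≤ Real.exp (q * u + u ^ 2 / 8) := by
  set F : ℝ → ℝ := fun v => p + q * Real.exp v with hFdef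
  have pos : ∀ v, 0 < F v := by
    intro v
    rcases eq_or_lt_of_le hq with h | h
    · simp only [hFdef, ← h]; simpa using by linarith
    · exact add_pos_of_nonneg_of_pos hp (mul_pos h (Real.exp_pos v))
  have hF : ∀ v, HasDerivAt F (q * Real.exp v) v := fun v =>
    ((Real.hasDerivAt_exp v).const_mul q).const_add p
  set G : ℝ → ℝ := fun v => q + v / 4 - q * Real.exp v / F v with hGdef
  set g : ℝ → ℝ := fun v => q * v + v ^ 2 / 8 - Real.log (F v) with hgdef
  have hg : ∀ v, HasDerivAt g (G v) v := by
    intro v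
    have h1 : HasDerivAt (fun v : ℝ => q * v + v ^ 2 / 8) (q + v / 4) v := by
      have := ((hasDerivAt_pow 2 v).div_const 8).const_add (0:ℝ)
      have h2 := (hasDerivAt_id v).const_mul q
      have h3 := h2.add ((hasDerivAt_pow 2 v).div_const 8)
      exact h3.congr_deriv (by norm_num; ring)
    have h4 : HasDerivAt (fun v => Real.log (F v)) (q * Real.exp v / F v) v :=
      (hF v).log (pos v).ne'
    exact h1.sub h4
  have hG : ∀ v, HasDerivAt G
      (1 / 4 - (q * Real.exp v * F v - q * Real.exp v * (q * Real.exp v)) / F v ^ 2) v := by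
    intro v
    have hnum : HasDerivAt (fun v => q * Real.exp v) (q * Real.exp v) v :=
      (Real.hasDerivAt_exp v).const_mul q
    have hdiv := hnum.div (hF v) (pos v).ne'
    have hlin : HasDerivAt (fun v : ℝ => q + v / 4) (1 / 4) v := by
      simpa using ((hasDerivAt_id v).div_const 4).const_add q
    exact hlin.sub hdiv
  have hH : ∀ v, 0 ≤ 1 / 4 - (q * Real.exp v * F v - q * Real.exp v * (q * Real.exp v)) / F v ^ 2 := by
    intro v
    rw [sub_nonneg, div_le_iff₀ (pow_pos (pos v) 2)]
    have he := Real.exp_pos v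
    simp only [hFdef]
    nlinarith [sq_nonneg (p - q * Real.exp v), mul_nonneg hp (mul_nonneg hq he.le)]
  have hGmono : Monotone G :=
    monotone_of_deriv_nonneg (fun v => (hG v).differentiableAt)
      (fun v => by rw [(hG v).deriv]; exact hH v)
  have hG0 : G 0 = 0 := by
    simp only [hGdef, hFdef, Real.exp_zero, mul_one, hpq]
    norm_num
  have hg0 : g 0 = 0 := by
    simp only [hgdef, hFdef, Real.exp_zero, mul_one, hpq]
    norm_num
  have hdiffg : Differentiable ℝ g := fun v => (hg v).differentiableAt
  have hmain : 0 ≤ g u := by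
    rcases le_or_gt 0 u with hu | hu
    · have hmono : MonotoneOn g (Set.Ici (0:ℝ)) := by
        apply monotoneOn_of_deriv_nonneg (convex_Ici 0) hdiffg.continuous.continuousOn
          (hdiffg.differentiableOn)
        intro x hx
        rw [interior_Ici] at hx
        rw [(hg x).deriv]
        have := hGmono (le_of_lt hx)
        rw [hG0] at this
        exact this
      have := hmono (Set.self_mem_Ici) (Set.mem_Ici.2 hu) hu
      rw [hg0] at this; exact this
    · have hanti : AntitoneOn g (Set.Iic (0:ℝ)) := by
        apply antitoneOn_of_deriv_nonpos (convex_Iic 0) hdiffg.continuous.continuousOn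
          (hdiffg.differentiableOn)
        intro x hx
        rw [interior_Iic] at hx
        rw [(hg x).deriv]
        have := hGmono (le_of_lt hx)
        rw [hG0] at this
        exact this
      have := hanti (Set.mem_Iic.2 hu.le) (Set.self_mem_Iic) hu.le
      rw [hg0] at this; exact this
  have hlog : Real.log (F u) ≤ q * u + u ^ 2 / 8 := by
    simp only [hgdef] at hmain; linarith
  calc F u = Real.exp (Real.log (F u)) := (Real.exp_log (pos u)).symm
    _ ≤ _ := Real.exp_le_exp.2 hlog

theorem hoeffding_pmf {Ω : Type*} (q h : Ω → ℝ) (ℓ : ℝ)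
    (hq0 : ∀ y, 0 ≤ q y) (hq1 : HasSum q 1) (hℓ : 0 ≤ ℓ)
    (hosc : ∀ y z, q y ≠ 0 → q z ≠ 0 → |h y - h z| ≤ ℓ) :
    ∑' y, q y * Real.exp (h y) ≤ Real.exp ((∑' y, q y * h y) + ℓ ^ 2 / 8) := by
  classical
  have sq : Summable q := hq1.summable
  obtain ⟨y0, hy0⟩ : ∃ y0, q y0 ≠ 0 := by
    by_contra hc
    push_neg at hc
    have : q = (0 : Ω → ℝ) := funext hc
    rw [this] at hq1
    simpa using hq1.unique hasSum_zero
  set SS : Set ℝ := h '' {y | q y ≠ 0} with hSS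
  have hne : SS.Nonempty := ⟨h y0, ⟨y0, hy0, rfl⟩⟩
  have hbdd : BddBelow SS := by
    refine ⟨h y0 - ℓ, ?_⟩
    rintro t ⟨y, hy, rfl⟩
    have := hosc y0 y hy0 hy
    have := abs_le.1 this
    linarith [this.1]
  set a : ℝ := sInf SS with hadef
  set b : ℝ := a + ℓ with hbdef
  have ha_le : ∀ y, q y ≠ 0 → a ≤ h y := fun y hy => csInf_le hbdd ⟨y, hy, rfl⟩
  have hb_ge : ∀ y, q y ≠ 0 → h y ≤ b := by
    intro y hy
    have : h y - ℓ ≤ a := by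
      apply le_csInf hne
      rintro t ⟨z, hz, rfl⟩
      have := abs_le.1 (hosc y z hy hz)
      linarith [this.1]
    simp only [hbdef]; linarith
  -- summability
  have habs : ∀ y, |h y| ≤ |a| + ℓ ∨ q y = 0 := by
    intro y
    by_cases hy : q y = 0
    · exact Or.inr hy
    · left
      have h1 := ha_le y hy
      have h2 := hb_ge y hy
      rw [abs_le]
      constructor
      · have : -|a| ≤ a := neg_abs_le a
        linarith
      · have : a ≤ |a| := le_abs_self a
        simp only [hbdef] at h2
        linarith
  have hsum1 : Summable (fun y => q y * h y) := by
    apply Summable.of_norm_bounded (g := fun y => q y * (|a| + ℓ)) (sq.mul_right _)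
    intro y
    rcases habs y with hb' | hz
    · rw [Real.norm_eq_abs, abs_mul, abs_of_nonneg (hq0 y)]
      exact mul_le_mul_of_nonneg_left hb' (hq0 y)
    · simp [hz]
  have hsum2 : Summable (fun y => q y * Real.exp (h y)) := by
    apply Summable.of_norm_bounded (g := fun y => q y * Real.exp b) (sq.mul_right _)
    intro y
    by_cases hy : q y = 0
    · simp [hy]
    · rw [Real.norm_eq_abs, abs_mul, abs_of_nonneg (hq0 y),
        abs_of_pos (Real.exp_pos _)]
      exact mul_le_mul_of_nonneg_left (Real.exp_le_exp.2 (hb_ge y hy)) (hq0 y)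
  set m : ℝ := ∑' y, q y * h y with hmdef
  have hqb : ∀ (c : ℝ), ∑' y, q y * c = c := by
    intro c
    rw [tsum_mul_right, hq1.tsum_eq, one_mul]
  have hma : a ≤ m := by
    rw [hmdef, ← hqb a]
    apply Summable.tsum_le_tsum _ (sq.mul_right a) hsum1
    intro y
    by_cases hy : q y = 0
    · simp [hy]
    · exact mul_le_mul_of_nonneg_left (ha_le y hy) (hq0 y)
  have hmb : m ≤ b := by
    rw [hmdef, ← hqb b]
    apply Summable.tsum_le_tsum _ hsum1 (sq.mul_right b)
    intro y
    by_cases hy : q y = 0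
    · simp [hy]
    · exact mul_le_mul_of_nonneg_left (hb_ge y hy) (hq0 y)
  rcases eq_or_lt_of_le hℓ with hl0 | hlpos
  · -- ℓ = 0
    have hba : b = a := by simp [hbdef, ← hl0]
    have hconst : ∀ y, q y * Real.exp (h y) = q y * Real.exp a := by
      intro y
      by_cases hy : q y = 0
      · simp [hy]
      · have h1 := ha_le y hy
        have h2 := hb_ge y hy
        rw [hba] at h2
        have : h y = a := le_antisymm h2 h1
        rw [this]
    have hea : ∑' y, q y * Real.exp (h y) = Real.exp a := by
      rw [tsum_congr hconst, hqb]
    have hmeq : m = a := by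
      have : ∀ y, q y * h y = q y * a := by
        intro y
        by_cases hy : q y = 0
        · simp [hy]
        · have h1 := ha_le y hy
          have h2 := hb_ge y hy
          rw [hba] at h2
          rw [le_antisymm h2 h1]
      rw [hmdef, tsum_congr this, hqb]
    rw [hea, hmeq, ← hl0]
    norm_num
  · -- 0 < ℓ
    have hlne : ℓ ≠ 0 := ne_of_gt hlpos
    set c1 : ℝ := (b * Real.exp a - a * Real.exp b) / ℓ with hc1
    set c2 : ℝ := (Real.exp b - Real.exp a) / ℓ with hc2
    have chord : ∀ y, q y * Real.exp (h y) ≤ c1 * q y + c2 * (q y * h y) := by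
      intro y
      by_cases hy : q y = 0
      · simp [hy]
      · have h1 := ha_le y hy
        have h2 := hb_ge y hy
        have hab : a < b := by simp only [hbdef]; linarith
        have key : Real.exp (h y) ≤ (b - h y) / ℓ * Real.exp a + (h y - a) / ℓ * Real.exp b := by
          have hθ1 : 0 ≤ (b - h y) / ℓ := div_nonneg (by linarith) hℓ
          have hθ2 : 0 ≤ (h y - a) / ℓ := div_nonneg (by linarith) hℓ
          have hθ : (b - h y) / ℓ + (h y - a) / ℓ = 1 := by
            field_simp
            simp only [hbdef]; ring
          have := convexOn_exp.2 (Set.mem_univ a) (Set.mem_univ b) hθ1 hθ2 hθ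
          simp only [smul_eq_mul] at this
          have harg : (b - h y) / ℓ * a + (h y - a) / ℓ * b = h y := by
            field_simp
            simp only [hbdef]; ring
          rwa [harg] at this
        have := mul_le_mul_of_nonneg_left key (hq0 y)
        calc q y * Real.exp (h y) ≤ q y * ((b - h y) / ℓ * Real.exp a + (h y - a) / ℓ * Real.exp b) := this
          _ = c1 * q y + c2 * (q y * h y) := by
            simp only [hc1, hc2]; field_simp; ring
    have hsumR : Summable (fun y => c1 * q y + c2 * (q y * h y)) :=
      (sq.mul_left c1).add (hsum1.mul_left c2)
    have hcalc : ∑' y, (c1 * q y + c2 * (q y * h y)) = c1 + c2 * m := by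
      rw [Summable.tsum_add (sq.mul_left c1) (hsum1.mul_left c2), tsum_mul_left, tsum_mul_left,
        hq1.tsum_eq, mul_one, hmdef]
    set P : ℝ := (b - m) / ℓ with hP
    set Q : ℝ := (m - a) / ℓ with hQ
    have hPn : 0 ≤ P := div_nonneg (by linarith) hℓ
    have hQn : 0 ≤ Q := div_nonneg (by linarith) hℓ
    have hPQ : P + Q = 1 := by
      simp only [hP, hQ]; field_simp; simp only [hbdef]; ring
    have htp := twoPoint hPn hQn hPQ ℓ
    calc ∑' y, q y * Real.exp (h y)
        ≤ ∑' y, (c1 * q y + c2 * (q y * h y)) := Summable.tsum_le_tsum chord hsum2 hsumR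
      _ = c1 + c2 * m := hcalc
      _ = Real.exp a * (P + Q * Real.exp ℓ) := by
          simp only [hc1, hc2, hP, hQ, hbdef, Real.exp_add]
          field_simp
          ring
      _ ≤ Real.exp a * Real.exp (Q * ℓ + ℓ ^ 2 / 8) :=
          mul_le_mul_of_nonneg_left htp (Real.exp_pos a).le
      _ = Real.exp (m + ℓ ^ 2 / 8) := by
          rw [← Real.exp_add]
          congr 1
          have : Q * ℓ = m - a := by
            simp only [hQ]; field_simp
          rw [this]; ring



variable {Ω : Type*} [MetricSpace Ω]

/-- The set of coupling costs is nonempty when both measures have supports of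
bounded diameter. -/
theorem cost_set_nonempty {μ ν : Ω → ℝ} {Δ : ℝ}
    (hμ : IsProb μ) (hν : IsProb ν) (hΔ : 0 ≤ Δ)
    (hμd : ∀ y z, μ y ≠ 0 → μ z ≠ 0 → dist y z ≤ Δ)
    (hνd : ∀ y z, ν y ≠ 0 → ν z ≠ 0 → dist y z ≤ Δ) :
    { r | ∃ γ, IsCoupling γ μ ν ∧
      HasSum (fun z : Ω × Ω => γ z * dist z.1 z.2) r }.Nonempty := by
  classical
  obtain ⟨a0, ha0⟩ : ∃ a0, μ a0 ≠ 0 := by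
    by_contra hc; push_neg at hc
    have : μ = (0 : Ω → ℝ) := funext hc
    rw [this] at hμ
    simpa using hμ.2.unique hasSum_zero
  obtain ⟨b0, hb0⟩ : ∃ b0, ν b0 ≠ 0 := by
    by_contra hc; push_neg at hc
    have : ν = (0 : Ω → ℝ) := funext hc
    rw [this] at hν
    simpa using hν.2.unique hasSum_zero
  set γ : Ω × Ω → ℝ := fun z => μ z.1 * ν z.2 with hγ
  have hγ0 : ∀ z, 0 ≤ γ z := fun z => mul_nonneg (hμ.1 _) (hν.1 _)
  have hcoup : IsCoupling γ μ ν := by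
    refine ⟨hγ0, fun x => ?_, fun y => ?_⟩
    · have := hν.2.mul_left (μ x)
      simpa using this
    · have := hμ.2.mul_right (ν y)
      simpa using this
  have hγs : Summable γ := hμ.2.summable.mul_of_nonneg hν.2.summable hμ.1 hν.1
  set K : ℝ := Δ + dist a0 b0 + Δ with hK
  have hcost : Summable (fun z : Ω × Ω => γ z * dist z.1 z.2) := by
    apply Summable.of_norm_bounded (g := fun z => γ z * K) (hγs.mul_right K)
    intro z
    rw [Real.norm_eq_abs, abs_of_nonneg (mul_nonneg (hγ0 z) dist_nonneg)]
    by_cases h1 : μ z.1 = 0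
    · simp [hγ, h1, hK]
    · by_cases h2 : ν z.2 = 0
      · simp [hγ, h2, hK]
      · apply mul_le_mul_of_nonneg_left _ (hγ0 z)
        calc dist z.1 z.2 ≤ dist z.1 a0 + dist a0 b0 + dist b0 z.2 := dist_triangle4 _ _ _ _
          _ ≤ Δ + dist a0 b0 + Δ := by
              gcongr
              · exact hμd _ _ h1 ha0
              · rw [dist_comm]; exact hνd _ _ h2 hb0
  exact ⟨_, γ, hcoup, hcost.hasSum⟩

/-- Pull a bounded function through the first marginal of a coupling. -/
theorem coupling_tsum_fst {γ : Ω × Ω → ℝ} {μ ν : Ω → ℝ} (hγ0 : ∀ z, 0 ≤ γ z)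
    (hc1 : ∀ x, HasSum (fun y => γ (x, y)) (μ x)) (hμs : Summable μ)
    {h : Ω → ℝ} {M : ℝ} (hb : ∀ x, |h x| ≤ M) :
    Summable (fun z : Ω × Ω => γ z * h z.1) ∧
      ∑' z : Ω × Ω, γ z * h z.1 = ∑' x, μ x * h x := by
  have hγs : Summable γ := by
    rw [summable_prod_of_nonneg hγ0]
    refine ⟨fun x => (hc1 x).summable, ?_⟩
    have : (fun x => ∑' y, γ (x, y)) = μ := funext fun x => (hc1 x).tsum_eq
    rw [this]; exact hμs
  have hs : Summable (fun z : Ω × Ω => γ z * h z.1) := by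
    apply Summable.of_norm_bounded (g := fun z => γ z * M) (hγs.mul_right M)
    intro z
    rw [Real.norm_eq_abs, abs_mul, abs_of_nonneg (hγ0 z)]
    exact mul_le_mul_of_nonneg_left (hb _) (hγ0 z)
  refine ⟨hs, ?_⟩
  rw [Summable.tsum_prod hs]
  apply tsum_congr
  intro x
  calc ∑' y, γ (x, y) * h x = (∑' y, γ (x, y)) * h x := tsum_mul_right
    _ = μ x * h x := by rw [(hc1 x).tsum_eq]

/-- Same for the second marginal. -/
theorem coupling_tsum_snd {γ : Ω × Ω → ℝ} {μ ν : Ω → ℝ} (hγ0 : ∀ z, 0 ≤ γ z)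
    (hc2 : ∀ y, HasSum (fun x => γ (x, y)) (ν y)) (hνs : Summable ν)
    {h : Ω → ℝ} {M : ℝ} (hb : ∀ x, |h x| ≤ M) :
    Summable (fun z : Ω × Ω => γ z * h z.2) ∧
      ∑' z : Ω × Ω, γ z * h z.2 = ∑' y, ν y * h y := by
  have key := coupling_tsum_fst (γ := fun w : Ω × Ω => γ (w.2, w.1)) (μ := ν) (ν := μ)
    (fun w => hγ0 _) (fun y => hc2 y) hνs hb
  have he : ∑' w : Ω × Ω, γ (w.2, w.1) * h w.1 = ∑' z : Ω × Ω, γ z * h z.2 := by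
    exact ((Equiv.prodComm Ω Ω).tsum_eq (fun z : Ω × Ω => γ z * h z.2))
  constructor
  · have := key.1
    have h2 : Summable ((fun z : Ω × Ω => γ z * h z.2) ∘ (Equiv.prodComm Ω Ω)) := this
    rwa [(Equiv.prodComm Ω Ω).summable_iff] at h2
  · rw [← he]; exact key.2

/-- Kantorovich duality half: integrating a Lipschitz function against two measures
differs by at most `L'` times any bound on the Wasserstein distance. -/
theorem P_contract {μ ν : Ω → ℝ} {h : Ω → ℝ} {M L' B : ℝ}
    (hμ : IsProb μ) (hν : IsProb ν) (hb : ∀ x, |h x| ≤ M)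
    (hL' : 0 ≤ L') (hlip : LipWith (fun a b : Ω => dist a b) L' h)
    (hne : { r | ∃ γ, IsCoupling γ μ ν ∧
      HasSum (fun z : Ω × Ω => γ z * dist z.1 z.2) r }.Nonempty)
    (hW : W1 (fun a b : Ω => dist a b) μ ν ≤ B) :
    |(∑' x, μ x * h x) - ∑' y, ν y * h y| ≤ L' * B := by
  have key : ∀ ε : ℝ, 0 < ε → |(∑' x, μ x * h x) - ∑' y, ν y * h y| ≤ L' * B + L' * ε := by
    intro ε hε
    obtain ⟨r, hrS, hrlt⟩ := Real.lt_sInf_add_pos hne hε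
    obtain ⟨γ, hcoup, hcost⟩ := hrS
    have hrB : r ≤ B + ε := by
      have : sInf { r | ∃ γ, IsCoupling γ μ ν ∧
          HasSum (fun z : Ω × Ω => γ z * dist z.1 z.2) r } ≤ B := hW
      linarith
    obtain ⟨hs1, he1⟩ := coupling_tsum_fst (ν := ν) hcoup.1 hcoup.2.1 hμ.2.summable hb
    obtain ⟨hs2, he2⟩ := coupling_tsum_snd (μ := μ) hcoup.1 hcoup.2.2 hν.2.summable hb
    rw [← he1, ← he2, ← Summable.tsum_sub hs1 hs2]
    have hpt : ∀ z : Ω × Ω, γ z * h z.1 - γ z * h z.2 = γ z * (h z.1 - h z.2) :=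
      fun z => (mul_sub _ _ _).symm
    rw [tsum_congr hpt]
    have hcosts : Summable (fun z : Ω × Ω => γ z * dist z.1 z.2) := hcost.summable
    have hnorms : Summable (fun z : Ω × Ω => ‖γ z * (h z.1 - h z.2)‖) := by
      apply Summable.of_norm_bounded (g := fun z : Ω × Ω => L' * (γ z * dist z.1 z.2))
        (hcosts.mul_left L')
      intro z
      rw [norm_norm, Real.norm_eq_abs, abs_mul, abs_of_nonneg (hcoup.1 z)]
      calc γ z * |h z.1 - h z.2| ≤ γ z * (L' * dist z.1 z.2) :=
            mul_le_mul_of_nonneg_left (hlip _ _) (hcoup.1 z)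
        _ = L' * (γ z * dist z.1 z.2) := by ring
    calc |∑' z : Ω × Ω, γ z * (h z.1 - h z.2)|
        ≤ ∑' z : Ω × Ω, ‖γ z * (h z.1 - h z.2)‖ := by
          rw [← Real.norm_eq_abs]; exact norm_tsum_le_tsum_norm hnorms
      _ ≤ ∑' z : Ω × Ω, L' * (γ z * dist z.1 z.2) := by
          apply Summable.tsum_le_tsum _ hnorms (hcosts.mul_left L')
          intro z
          rw [Real.norm_eq_abs, abs_mul, abs_of_nonneg (hcoup.1 z)]
          calc γ z * |h z.1 - h z.2| ≤ γ z * (L' * dist z.1 z.2) :=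
                mul_le_mul_of_nonneg_left (hlip _ _) (hcoup.1 z)
            _ = L' * (γ z * dist z.1 z.2) := by ring
      _ = L' * r := by rw [tsum_mul_left, hcost.tsum_eq]
      _ ≤ L' * (B + ε) := mul_le_mul_of_nonneg_left hrB hL'
      _ = L' * B + L' * ε := by ring
  by_contra hcon
  push_neg at hcon
  rcases eq_or_lt_of_le hL' with hL0 | hLpos
  · have := key 1 one_pos
    rw [← hL0] at this hcon
    simp at this hcon
    exact hcon this
  · set δ := (|(∑' x, μ x * h x) - ∑' y, ν y * h y| - L' * B) / (2 * L') with hδ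
    have hδpos : 0 < δ := by
      apply div_pos (by linarith) (by linarith)
    have := key δ hδpos
    have hmul : L' * δ = (|(∑' x, μ x * h x) - ∑' y, ν y * h y| - L' * B) / 2 := by
      rw [hδ]; field_simp
    rw [hmul] at this
    linarith

/-- Fubini-type identity using stationarity. -/
theorem stat_fubini {p : Ω → Ω → ℝ} {π : Ω → ℝ}
    (hp : ∀ x, IsProb (p x)) (hπ : IsProb π)
    (hstat : ∀ y, HasSum (fun x => π x * p x y) (π y))
    {h : Ω → ℝ} {M : ℝ} (hM : 0 ≤ M) (hb : ∀ x, |h x| ≤ M) :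
    ∑' y, π y * h y = ∑' x, π x * ∑' y, p x y * h y := by
  set F : Ω × Ω → ℝ := fun z => π z.1 * p z.1 z.2 * h z.2 with hF
  have hG : Summable (fun z : Ω × Ω => π z.1 * p z.1 z.2 * M) := by
    rw [summable_prod_of_nonneg (fun z => by
      have := mul_nonneg (mul_nonneg (hπ.1 z.1) ((hp z.1).1 z.2)) hM
      exact this)]
    constructor
    · intro x
      exact (((hp x).2.summable.mul_left (π x)).mul_right M)
    · have hrow : ∀ x, ∑' y, π x * p x y * M = π x * M := by
        intro x
        have : ∀ y, π x * p x y * M = π x * M * p x y := fun y => by ring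
        rw [tsum_congr this, tsum_mul_left, (hp x).2.tsum_eq, mul_one]
      simp only [hrow]
      exact hπ.2.summable.mul_right M
  have hFs : Summable F := by
    apply Summable.of_norm_bounded hG
    intro z
    rw [Real.norm_eq_abs, abs_mul, abs_of_nonneg (mul_nonneg (hπ.1 z.1) ((hp z.1).1 z.2))]
    exact mul_le_mul_of_nonneg_left (hb _) (mul_nonneg (hπ.1 z.1) ((hp z.1).1 z.2))
  have h1 : ∑' z : Ω × Ω, F z = ∑' x, π x * ∑' y, p x y * h y := by
    rw [Summable.tsum_prod hFs]
    apply tsum_congr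
    intro x
    have : ∀ y, π x * p x y * h y = π x * (p x y * h y) := fun y => by ring
    rw [tsum_congr this, tsum_mul_left]
  have h2 : ∑' z : Ω × Ω, F z = ∑' y, π y * h y := by
    have hcomm := Summable.tsum_comm (f := fun x y => π x * p x y * h y) hFs
    rw [Summable.tsum_prod hFs, ← hcomm]
    apply tsum_congr
    intro y
    calc ∑' x, π x * p x y * h y = (∑' x, π x * p x y) * h y := tsum_mul_right
      _ = π y * h y := by rw [(hstat y).tsum_eq]
  rw [← h2, h1]

theorem gauss_bounded {Ω : Type*} [MetricSpace Ω]
    (p : Ω → Ω → ℝ) (π : Ω → ℝ) (α Δ : ℝ)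
    (hp : ∀ x, IsProb (p x)) (hα : 1 ≤ α) (hΔ : 0 ≤ Δ)
    (hdiam : ∀ x y z, p x y ≠ 0 → p x z ≠ 0 → dist y z ≤ Δ)
    (hcurv : ∀ x y : Ω, W1 (fun a b => dist a b) (p x) (p y) ≤ (1 - 1/α) * dist x y)
    (hπ : IsProb π)
    (hstat : ∀ y, HasSum (fun x => π x * p x y) (π y))
    (f : Ω → ℝ) (L M : ℝ) (hL : 0 ≤ L) (hM : 0 ≤ M)
    (hflip : LipWith (fun a b : Ω => dist a b) L f) (hfb : ∀ x, |f x| ≤ M) :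
    ∑' x, π x * Real.exp (f x) ≤
      Real.exp ((∑' x, π x * f x) + (Δ ^ 2 * α / (8 * (2 - 1/α))) * L ^ 2) := by
  have hα0 : (0:ℝ) < α := lt_of_lt_of_le one_pos hα
  have hinvpos : 0 < 1/α := by positivity
  have hinv1 : 1/α ≤ 1 := by
    rw [div_le_one hα0]; linarith
  set lam : ℝ := 1 - 1/α with hlamdef
  have hlam0 : 0 ≤ lam := by simp only [hlamdef]; linarith
  have hlam1 : lam < 1 := by simp only [hlamdef]; linarith
  have h2a : (0:ℝ) < 2 - 1/α := by linarith
  set c' : ℝ := Δ ^ 2 * α / (8 * (2 - 1/α)) with hc'def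
  set P : (Ω → ℝ) → Ω → ℝ := fun h x => ∑' y, p x y * h y with hPdef
  set H : ℕ → Ω → ℝ := fun k => P^[k] f with hHdef
  have hH0 : H 0 = f := rfl
  have hHsucc : ∀ k, H (k + 1) = P (H k) := fun k => Function.iterate_succ_apply' P k f
  -- basic summability facts
  have hPsum : ∀ (h : Ω → ℝ) (C : ℝ), (∀ y, |h y| ≤ C) → ∀ x,
      Summable (fun y => p x y * h y) := by
    intro h C hb x
    apply Summable.of_norm_bounded (g := fun y => p x y * C) ((hp x).2.summable.mul_right C)
    intro y
    rw [Real.norm_eq_abs, abs_mul, abs_of_nonneg ((hp x).1 y)]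
    exact mul_le_mul_of_nonneg_left (hb y) ((hp x).1 y)
  have hPone : ∀ (x : Ω) (C : ℝ), ∑' y, p x y * C = C := by
    intro x C
    rw [tsum_mul_right, (hp x).2.tsum_eq, one_mul]
  have hPbound : ∀ (h : Ω → ℝ) (C : ℝ), 0 ≤ C → (∀ y, |h y| ≤ C) → ∀ x, |P h x| ≤ C := by
    intro h C hC hb x
    have habs : Summable (fun y => ‖p x y * h y‖) := by
      apply Summable.of_norm_bounded (g := fun y => p x y * C) ((hp x).2.summable.mul_right C)
      intro y
      rw [norm_norm, Real.norm_eq_abs, abs_mul, abs_of_nonneg ((hp x).1 y)]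
      exact mul_le_mul_of_nonneg_left (hb y) ((hp x).1 y)
    calc |P h x| ≤ ∑' y, ‖p x y * h y‖ := by
          rw [← Real.norm_eq_abs]; exact norm_tsum_le_tsum_norm habs
      _ ≤ ∑' y, p x y * C := by
          apply Summable.tsum_le_tsum _ habs ((hp x).2.summable.mul_right C)
          intro y
          rw [Real.norm_eq_abs, abs_mul, abs_of_nonneg ((hp x).1 y)]
          exact mul_le_mul_of_nonneg_left (hb y) ((hp x).1 y)
      _ = C := hPone x C
  have hπsum : ∀ (h : Ω → ℝ) (C : ℝ), (∀ x, |h x| ≤ C) →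
      Summable (fun x => π x * h x) := by
    intro h C hb
    apply Summable.of_norm_bounded (g := fun x => π x * C) (hπ.2.summable.mul_right C)
    intro x
    rw [Real.norm_eq_abs, abs_mul, abs_of_nonneg (hπ.1 x)]
    exact mul_le_mul_of_nonneg_left (hb x) (hπ.1 x)
  have hπone : ∀ C : ℝ, ∑' x, π x * C = C := by
    intro C
    rw [tsum_mul_right, hπ.2.tsum_eq, one_mul]
  -- invariants
  have hbdd : ∀ k x, |H k x| ≤ M := by
    intro k
    induction k with
    | zero => intro x; rw [hH0]; exact hfb x
    | succ k ih =>
      intro x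
      rw [hHsucc k]
      exact hPbound (H k) M hM ih x
  have hlip : ∀ k, LipWith (fun a b : Ω => dist a b) (lam ^ k * L) (H k) := by
    intro k
    induction k with
    | zero => intro x y; rw [hH0]; simpa using hflip x y
    | succ k ih =>
      intro x y
      rw [hHsucc k]
      have hne := cost_set_nonempty (hp x) (hp y) hΔ (hdiam x) (hdiam y)
      have hcontr := P_contract (hp x) (hp y) (hbdd k)
        (by positivity : (0:ℝ) ≤ lam ^ k * L) ih hne (hcurv x y)
      calc |P (H k) x - P (H k) y| ≤ lam ^ k * L * ((1 - 1/α) * dist x y) := hcontr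
        _ = lam ^ (k + 1) * L * dist x y := by
            rw [← hlamdef, pow_succ]; ring
  have hmean : ∀ k, ∑' x, π x * H k x = ∑' x, π x * f x := by
    intro k
    induction k with
    | zero => rw [hH0]
    | succ k ih =>
      rw [hHsucc k, ← ih]
      exact (stat_fubini hp hπ hstat hM (hbdd k)).symm
  -- one Hoeffding step
  have hstep : ∀ k, ∑' x, π x * Real.exp (H k x) ≤
      Real.exp (Δ ^ 2 * L ^ 2 / 8 * (lam ^ 2) ^ k) * ∑' x, π x * Real.exp (H (k + 1) x) := by
    intro k
    set ℓ : ℝ := lam ^ k * L * Δ with hℓdef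
    have hℓ0 : 0 ≤ ℓ := by positivity
    have hexpb : ∀ x, |Real.exp (H k x)| ≤ Real.exp M := by
      intro x
      rw [abs_of_pos (Real.exp_pos _)]
      exact Real.exp_le_exp.2 ((abs_le.1 (hbdd k x)).2)
    have h1 : ∑' x, π x * Real.exp (H k x) =
        ∑' x, π x * ∑' y, p x y * Real.exp (H k y) :=
      stat_fubini hp hπ hstat (Real.exp_pos M).le hexpb
    have h2 : ∀ x, ∑' y, p x y * Real.exp (H k y) ≤ Real.exp (P (H k) x + ℓ ^ 2 / 8) := by
      intro x
      apply hoeffding_pmf (p x) (H k) ℓ (hp x).1 (hp x).2 hℓ0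
      intro y z hy hz
      calc |H k y - H k z| ≤ lam ^ k * L * dist y z := hlip k y z
        _ ≤ lam ^ k * L * Δ := mul_le_mul_of_nonneg_left (hdiam x y z hy hz) (by positivity)
    have hsum_lhs : Summable (fun x => π x * ∑' y, p x y * Real.exp (H k y)) := by
      apply hπsum _ (Real.exp M)
      intro x
      exact hPbound (fun y => Real.exp (H k y)) (Real.exp M) (Real.exp_pos M).le hexpb x
    have hsum_rhs : Summable (fun x => π x * Real.exp (P (H k) x + ℓ ^ 2 / 8)) := by
      apply hπsum _ (Real.exp (M + ℓ ^ 2 / 8))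
      intro x
      rw [abs_of_pos (Real.exp_pos _)]
      apply Real.exp_le_exp.2
      have := (abs_le.1 (hPbound (H k) M hM (hbdd k) x)).2
      linarith
    have h3 : ∑' x, π x * ∑' y, p x y * Real.exp (H k y) ≤
        ∑' x, π x * Real.exp (P (H k) x + ℓ ^ 2 / 8) := by
      apply Summable.tsum_le_tsum _ hsum_lhs hsum_rhs
      intro x
      exact mul_le_mul_of_nonneg_left (h2 x) (hπ.1 x)
    have h4 : ∑' x, π x * Real.exp (P (H k) x + ℓ ^ 2 / 8) =
        Real.exp (ℓ ^ 2 / 8) * ∑' x, π x * Real.exp (H (k + 1) x) := by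
      rw [← tsum_mul_left]
      apply tsum_congr
      intro x
      rw [hHsucc k, Real.exp_add]
      ring
    have hpow : (lam ^ 2) ^ k = (lam ^ k) ^ 2 := pow_right_comm lam 2 k
    have h5 : ℓ ^ 2 / 8 = Δ ^ 2 * L ^ 2 / 8 * (lam ^ 2) ^ k := by
      rw [hpow, hℓdef]; ring
    rw [h1, ← h5]
    exact h3.trans (le_of_eq h4)
  -- iterate
  have hmain : ∀ k, ∑' x, π x * Real.exp (f x) ≤
      Real.exp (Δ ^ 2 * L ^ 2 / 8 * ∑ j ∈ Finset.range k, (lam ^ 2) ^ j) *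
        ∑' x, π x * Real.exp (H k x) := by
    intro k
    induction k with
    | zero =>
      rw [hH0]
      simp
    | succ k ih =>
      have step := hstep k
      calc ∑' x, π x * Real.exp (f x)
          ≤ Real.exp (Δ ^ 2 * L ^ 2 / 8 * ∑ j ∈ Finset.range k, (lam ^ 2) ^ j) *
            ∑' x, π x * Real.exp (H k x) := ih
        _ ≤ Real.exp (Δ ^ 2 * L ^ 2 / 8 * ∑ j ∈ Finset.range k, (lam ^ 2) ^ j) *
            (Real.exp (Δ ^ 2 * L ^ 2 / 8 * (lam ^ 2) ^ k) *
              ∑' x, π x * Real.exp (H (k + 1) x)) :=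
            mul_le_mul_of_nonneg_left step (Real.exp_pos _).le
        _ = Real.exp (Δ ^ 2 * L ^ 2 / 8 * ∑ j ∈ Finset.range (k + 1), (lam ^ 2) ^ j) *
            ∑' x, π x * Real.exp (H (k + 1) x) := by
            rw [← mul_assoc, ← Real.exp_add, Finset.sum_range_succ, mul_add]
  have hl2 : lam ^ 2 < 1 := by nlinarith
  have hl2' : (0:ℝ) ≤ lam ^ 2 := sq_nonneg lam
  have hgeom : ∀ k, ∑ j ∈ Finset.range k, (lam ^ 2) ^ j ≤ (1 - lam ^ 2)⁻¹ := by
    intro k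
    have hs := summable_geometric_of_lt_one hl2' hl2
    calc ∑ j ∈ Finset.range k, (lam ^ 2) ^ j ≤ ∑' j : ℕ, (lam ^ 2) ^ j :=
          Summable.sum_le_tsum _ (fun i _ => pow_nonneg hl2' i) hs
      _ = (1 - lam ^ 2)⁻¹ := tsum_geometric_of_lt_one hl2' hl2
  have hconst : Δ ^ 2 * L ^ 2 / 8 * (1 - lam ^ 2)⁻¹ = c' * L ^ 2 := by
    have h1l : 1 - lam ^ 2 = (1/α) * (2 - 1/α) := by
      rw [hlamdef]; ring
    rw [h1l, hc'def]
    field_simp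
  have hmain2 : ∀ k, ∑' x, π x * Real.exp (f x) ≤
      Real.exp (c' * L ^ 2) * ∑' x, π x * Real.exp (H k x) := by
    intro k
    refine (hmain k).trans (mul_le_mul_of_nonneg_right (Real.exp_le_exp.2 ?_)
      (tsum_nonneg fun x => mul_nonneg (hπ.1 x) (Real.exp_pos _).le))
    rw [← hconst]
    exact mul_le_mul_of_nonneg_left (hgeom k) (by positivity)
  -- the limit step
  set m : ℝ := ∑' x, π x * f x with hmdef
  have hsumf : Summable (fun x => π x * f x) := hπsum f M hfb
  have hmabs : |m| ≤ M := by
    have habs : Summable (fun x => ‖π x * f x‖) := by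
      apply Summable.of_norm_bounded (g := fun x => π x * M) (hπ.2.summable.mul_right M)
      intro x
      rw [norm_norm, Real.norm_eq_abs, abs_mul, abs_of_nonneg (hπ.1 x)]
      exact mul_le_mul_of_nonneg_left (hfb x) (hπ.1 x)
    calc |m| ≤ ∑' x, ‖π x * f x‖ := by
          rw [hmdef, ← Real.norm_eq_abs]; exact norm_tsum_le_tsum_norm habs
      _ ≤ ∑' x, π x * M := by
          apply Summable.tsum_le_tsum _ habs (hπ.2.summable.mul_right M)
          intro x
          rw [Real.norm_eq_abs, abs_mul, abs_of_nonneg (hπ.1 x)]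
          exact mul_le_mul_of_nonneg_left (hfb x) (hπ.1 x)
      _ = M := hπone M
  set u : ℕ → Ω → ℝ := fun k x => ∑' y, π y * min (lam ^ k * L * dist x y) (2 * M)
    with hudef
  have hminnn : ∀ k (x y : Ω), 0 ≤ min (lam ^ k * L * dist x y) (2 * M) := by
    intro k x y
    apply le_min (by positivity) (by linarith)
  have husum : ∀ k x, Summable (fun y => π y * min (lam ^ k * L * dist x y) (2 * M)) := by
    intro k x
    apply Summable.of_norm_bounded (g := fun y => π y * (2 * M)) (hπ.2.summable.mul_right _)
    intro y
    rw [Real.norm_eq_abs, abs_mul, abs_of_nonneg (hπ.1 y),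
      abs_of_nonneg (hminnn k x y)]
    exact mul_le_mul_of_nonneg_left (min_le_right _ _) (hπ.1 y)
  have hu0 : ∀ k x, 0 ≤ u k x :=
    fun k x => tsum_nonneg fun y => mul_nonneg (hπ.1 y) (hminnn k x y)
  have hub : ∀ k x, u k x ≤ 2 * M := by
    intro k x
    calc u k x ≤ ∑' y, π y * (2 * M) := by
          apply Summable.tsum_le_tsum _ (husum k x) (hπ.2.summable.mul_right _)
          intro y
          exact mul_le_mul_of_nonneg_left (min_le_right _ _) (hπ.1 y)
      _ = 2 * M := hπone _
  have hs_bound : ∀ k x, |H k x - m| ≤ u k x := by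
    intro k x
    have hrepr : H k x - m = ∑' y, π y * (H k x - H k y) := by
      have hsub : ∀ y, π y * (H k x - H k y) = π y * H k x - π y * H k y :=
        fun y => mul_sub _ _ _
      rw [tsum_congr hsub, Summable.tsum_sub (hπ.2.summable.mul_right _) (hπsum (H k) M (hbdd k)),
        tsum_mul_right, hπ.2.tsum_eq, one_mul, hmean k]
    have habs2 : Summable (fun y => ‖π y * (H k x - H k y)‖) := by
      apply Summable.of_norm_bounded (g := fun y => π y * (2 * M)) (hπ.2.summable.mul_right _)
      intro y
      rw [norm_norm, Real.norm_eq_abs, abs_mul, abs_of_nonneg (hπ.1 y)]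
      apply mul_le_mul_of_nonneg_left _ (hπ.1 y)
      calc |H k x - H k y| ≤ |H k x| + |H k y| := abs_sub _ _
        _ ≤ 2 * M := by linarith [hbdd k x, hbdd k y]
    rw [hrepr]
    calc |∑' y, π y * (H k x - H k y)| ≤ ∑' y, ‖π y * (H k x - H k y)‖ := by
          rw [← Real.norm_eq_abs]; exact norm_tsum_le_tsum_norm habs2
      _ ≤ u k x := by
          simp only [hudef]
          apply Summable.tsum_le_tsum _ habs2 (husum k x)
          intro y
          rw [Real.norm_eq_abs, abs_mul, abs_of_nonneg (hπ.1 y)]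
          apply mul_le_mul_of_nonneg_left _ (hπ.1 y)
          apply le_min
          · exact (hlip k x y)
          · calc |H k x - H k y| ≤ |H k x| + |H k y| := abs_sub _ _
              _ ≤ 2 * M := by linarith [hbdd k x, hbdd k y]
  have hsabs : ∀ k x, |H k x - m| ≤ 2 * M := by
    intro k x
    calc |H k x - m| ≤ |H k x| + |m| := abs_sub _ _
      _ ≤ 2 * M := by linarith [hbdd k x]
  set W : ℕ → ℝ := fun k =>
    ∑' z : Ω × Ω, π z.1 * π z.2 * min (lam ^ k * L * dist z.1 z.2) (2 * M) with hWdef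
  have hWsum : ∀ k, Summable
      (fun z : Ω × Ω => π z.1 * π z.2 * min (lam ^ k * L * dist z.1 z.2) (2 * M)) := by
    intro k
    apply Summable.of_norm_bounded (g := fun z : Ω × Ω => π z.1 * π z.2 * (2 * M))
      ((hπ.2.summable.mul_of_nonneg hπ.2.summable hπ.1 hπ.1).mul_right _)
    intro z
    rw [Real.norm_eq_abs, abs_mul, abs_of_nonneg (mul_nonneg (hπ.1 _) (hπ.1 _)),
      abs_of_nonneg (hminnn k z.1 z.2)]
    exact mul_le_mul_of_nonneg_left (min_le_right _ _) (mul_nonneg (hπ.1 _) (hπ.1 _))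
  have hWu : ∀ k, ∑' x, π x * u k x = W k := by
    intro k
    simp only [hWdef]
    rw [Summable.tsum_prod (hWsum k)]
    apply tsum_congr
    intro x
    simp only [hudef]
    rw [← tsum_mul_left]
    apply tsum_congr
    intro y
    ring
  have hW0 : ∀ k, 0 ≤ W k := by
    intro k
    rw [← hWu k]
    exact tsum_nonneg fun x => mul_nonneg (hπ.1 x) (hu0 k x)
  -- key per-k bound
  have keybound : ∀ k, ∑' x, π x * Real.exp (H k x) ≤
      Real.exp m * (1 + Real.exp (2 * M) * (2 * M) * W k) := by
    intro k
    have hpt : ∀ x, π x * Real.exp (H k x) ≤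
        Real.exp m * π x + Real.exp m * (π x * (H k x - m)) +
          (Real.exp m * Real.exp (2 * M) * (2 * M)) * (π x * u k x) := by
      intro x
      set s : ℝ := H k x - m with hsdef
      have hexp : Real.exp (H k x) = Real.exp m * Real.exp s := by
        rw [← Real.exp_add]; congr 1; rw [hsdef]; ring
      have hq := exp_quad s
      have hs2 : s ^ 2 * Real.exp |s| ≤ (2 * M * u k x) * Real.exp (2 * M) := by
        apply mul_le_mul _ (Real.exp_le_exp.2 (hsabs k x)) (Real.exp_pos _).le
          (by nlinarith [hu0 k x, hM])
        calc s ^ 2 = |s| * |s| := by rw [sq, ← abs_mul_abs_self]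
          _ ≤ (2 * M) * u k x := by
              apply mul_le_mul (hsabs k x) (hs_bound k x) (abs_nonneg _) (by linarith)
      have hes : Real.exp s ≤ 1 + s + (2 * M * u k x) * Real.exp (2 * M) := by
        calc Real.exp s ≤ 1 + s + s ^ 2 * Real.exp |s| := hq
          _ ≤ _ := by linarith
      calc π x * Real.exp (H k x) = π x * (Real.exp m * Real.exp s) := by rw [hexp]
        _ ≤ π x * (Real.exp m * (1 + s + (2 * M * u k x) * Real.exp (2 * M))) := by
            apply mul_le_mul_of_nonneg_left _ (hπ.1 x)
            exact mul_le_mul_of_nonneg_left hes (Real.exp_pos m).le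
        _ = Real.exp m * π x + Real.exp m * (π x * s) +
            (Real.exp m * Real.exp (2 * M) * (2 * M)) * (π x * u k x) := by ring
    have hsum1 : Summable (fun x => Real.exp m * π x) := hπ.2.summable.mul_left _
    have hsum2 : Summable (fun x => Real.exp m * (π x * (H k x - m))) :=
      (hπsum (fun x => H k x - m) (2 * M) (hsabs k)).mul_left _
    have hsum3 : Summable (fun x => (Real.exp m * Real.exp (2 * M) * (2 * M)) * (π x * u k x)) := by
      apply Summable.mul_left
      apply hπsum (u k) (2 * M)
      intro x
      rw [abs_of_nonneg (hu0 k x)]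
      exact hub k x
    have hsumexp : Summable (fun x => π x * Real.exp (H k x)) := by
      apply hπsum _ (Real.exp M)
      intro x
      rw [abs_of_pos (Real.exp_pos _)]
      exact Real.exp_le_exp.2 ((abs_le.1 (hbdd k x)).2)
    have hmean0 : ∑' x, π x * (H k x - m) = 0 := by
      have hsub : ∀ x, π x * (H k x - m) = π x * H k x - π x * m := fun x => mul_sub _ _ _
      rw [tsum_congr hsub, Summable.tsum_sub (hπsum (H k) M (hbdd k)) (hπ.2.summable.mul_right m),
        hmean k, hπone m, sub_self]
    calc ∑' x, π x * Real.exp (H k x)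
        ≤ ∑' x, (Real.exp m * π x + Real.exp m * (π x * (H k x - m)) +
            (Real.exp m * Real.exp (2 * M) * (2 * M)) * (π x * u k x)) :=
          Summable.tsum_le_tsum hpt hsumexp ((hsum1.add hsum2).add hsum3)
      _ = Real.exp m * (1 + Real.exp (2 * M) * (2 * M) * W k) := by
          rw [Summable.tsum_add (hsum1.add hsum2) hsum3, Summable.tsum_add hsum1 hsum2,
            tsum_mul_left, tsum_mul_left, tsum_mul_left, hπ.2.tsum_eq, hmean0, hWu k]
          ring
  -- W k → 0
  have hWlim : Filter.Tendsto W Filter.atTop (nhds 0) := by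
    have hz : (0:ℝ) = ∑' _z : Ω × Ω, (0:ℝ) := by rw [tsum_zero]
    simp only [hWdef]
    rw [hz]
    apply tendsto_tsum_of_dominated_convergence
      (bound := fun z : Ω × Ω => π z.1 * π z.2 * (2 * M))
      ((hπ.2.summable.mul_of_nonneg hπ.2.summable hπ.1 hπ.1).mul_right _)
    · intro z
      have h1 : Filter.Tendsto (fun k : ℕ => lam ^ k * L * dist z.1 z.2)
          Filter.atTop (nhds 0) := by
        have := (tendsto_pow_atTop_nhds_zero_of_lt_one hlam0 hlam1).mul_const
          (L * dist z.1 z.2)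
        simpa [mul_assoc, zero_mul] using this
      have h2 : Filter.Tendsto (fun k : ℕ => min (lam ^ k * L * dist z.1 z.2) (2 * M))
          Filter.atTop (nhds 0) := by
        have := h1.min (tendsto_const_nhds (x := (2 * M : ℝ)))
        rwa [min_eq_left (by linarith : (0:ℝ) ≤ 2 * M)] at this
      have := h2.const_mul (π z.1 * π z.2)
      simpa [mul_assoc, mul_zero] using this
    · apply Filter.Eventually.of_forall
      intro k z
      rw [Real.norm_eq_abs, abs_mul, abs_of_nonneg (mul_nonneg (hπ.1 _) (hπ.1 _)),
        abs_of_nonneg (hminnn k z.1 z.2)]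
      exact mul_le_mul_of_nonneg_left (min_le_right _ _) (mul_nonneg (hπ.1 _) (hπ.1 _))
  -- conclude
  have hRlim : Filter.Tendsto
      (fun k => Real.exp (c' * L ^ 2) * (Real.exp m * (1 + Real.exp (2 * M) * (2 * M) * W k)))
      Filter.atTop
      (nhds (Real.exp (c' * L ^ 2) * (Real.exp m * (1 + Real.exp (2 * M) * (2 * M) * 0)))) := by
    apply Filter.Tendsto.const_mul
    apply Filter.Tendsto.const_mul
    apply Filter.Tendsto.const_add
    exact hWlim.const_mul _
  have hineq : ∀ k, ∑' x, π x * Real.exp (f x) ≤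
      Real.exp (c' * L ^ 2) * (Real.exp m * (1 + Real.exp (2 * M) * (2 * M) * W k)) := by
    intro k
    exact (hmain2 k).trans (mul_le_mul_of_nonneg_left (keybound k) (Real.exp_pos _).le)
  have hfin := ge_of_tendsto' hRlim hineq
  calc ∑' x, π x * Real.exp (f x)
      ≤ Real.exp (c' * L ^ 2) * (Real.exp m * (1 + Real.exp (2 * M) * (2 * M) * 0)) := hfin
    _ = Real.exp (m + c' * L ^ 2) := by
        rw [Real.exp_add]; ring

end StatAux

theorem stationary_gaussian_concentration' {Ω : Type*} [MetricSpace Ω] [Countable Ω]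
    (p : Ω → Ω → ℝ) (π : Ω → ℝ) (α Δ : ℝ)
    (hp : ∀ x, IsProb (p x)) (hα : 1 ≤ α) (hΔ : 0 ≤ Δ)
    (hdiam : ∀ x y z, p x y ≠ 0 → p x z ≠ 0 → dist y z ≤ Δ)
    (hcurv : ∀ x y : Ω, W1 (fun a b => dist a b) (p x) (p y) ≤ (1 - 1/α) * dist x y)
    (hπ : IsProb π)
    (hstat : ∀ y, HasSum (fun x => π x * p x y) (π y)) :
    GaussConc (fun a b => dist a b) π (Δ ^ 2 * α / (8 * (2 - 1/α))) := by
  intro f L hL hflip hsf hsef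
  set c' : ℝ := Δ ^ 2 * α / (8 * (2 - 1/α)) with hc'
  set fc : ℕ → Ω → ℝ := fun n x => max (min (f x) (n:ℝ)) (-(n : ℝ)) with hfc
  have hfcb : ∀ (n : ℕ) x, |fc n x| ≤ (n : ℝ) := by
    intro n x
    rw [abs_le]
    constructor
    · simp only [hfc]
      exact le_max_right _ _
    simp only [hfc]
    apply max_le (min_le_right _ _)
    simpa using (neg_le_self (Nat.cast_nonneg n : (0:ℝ) ≤ n)).trans (le_refl _)
  have hfclip : ∀ n : ℕ, LipWith (fun a b : Ω => dist a b) L (fc n) := by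
    intro n x y
    simp only [hfc]
    calc |max (min (f x) (n:ℝ)) (-(n:ℝ)) - max (min (f y) (n:ℝ)) (-(n:ℝ))|
        ≤ |min (f x) n - min (f y) n| := abs_max_sub_max_le_abs _ _ _
      _ ≤ max |f x - f y| |(n:ℝ) - n| := abs_min_sub_min_le_max _ _ _ _
      _ = |f x - f y| := by simp [abs_nonneg]
      _ ≤ L * dist x y := hflip x y
  have hbc : ∀ n : ℕ, ∑' x, π x * Real.exp (fc n x) ≤
      Real.exp ((∑' x, π x * fc n x) + c' * L ^ 2) := fun n =>
    StatAux.gauss_bounded p π α Δ hp hα hΔ hdiam hcurv hπ hstat (fc n) L n hL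
      (Nat.cast_nonneg n) (hfclip n) (hfcb n)
  have hptf : ∀ x, ∀ n : ℕ, ⌈|f x|⌉₊ ≤ n → fc n x = f x := by
    intro x n hn
    have hn' : |f x| ≤ (n : ℝ) := by
      calc |f x| ≤ (⌈|f x|⌉₊ : ℝ) := Nat.le_ceil _
        _ ≤ (n : ℝ) := by exact_mod_cast hn
    have h1 : f x ≤ (n : ℝ) := (abs_le.1 hn').2
    have h2 : -(n : ℝ) ≤ f x := (abs_le.1 hn').1
    simp only [hfc]
    rw [min_eq_left h1, max_eq_left h2]
  have habsle : ∀ (n : ℕ) x, |fc n x| ≤ |f x| := by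
    intro n x
    rw [abs_le]
    constructor
    · apply le_max_of_le_left
      exact le_min (neg_abs_le _) ((neg_nonpos.2 (abs_nonneg _)).trans (Nat.cast_nonneg n))
    · apply max_le
      · exact (min_le_left _ _).trans (le_abs_self _)
      · exact (neg_nonpos.2 (Nat.cast_nonneg n)).trans (abs_nonneg _)
  have hfcle : ∀ (n : ℕ) x, fc n x ≤ max (f x) 0 := by
    intro n x
    apply max_le
    · exact (min_le_left _ _).trans (le_max_left _ _)
    · exact (neg_nonpos.2 (Nat.cast_nonneg n)).trans (le_max_right _ _)
  have T1 : Filter.Tendsto (fun n => ∑' x, π x * fc n x)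
      Filter.atTop (nhds (∑' x, π x * f x)) := by
    apply tendsto_tsum_of_dominated_convergence (bound := fun x => |π x * f x|) hsf.abs
    · intro x
      apply tendsto_atTop_of_eventually_const (i₀ := ⌈|f x|⌉₊)
      intro n hn
      rw [hptf x n hn]
    · apply Filter.Eventually.of_forall
      intro n x
      rw [Real.norm_eq_abs, abs_mul, abs_mul, abs_of_nonneg (hπ.1 x)]
      exact mul_le_mul_of_nonneg_left (habsle n x) (hπ.1 x)
  have T2 : Filter.Tendsto (fun n => ∑' x, π x * Real.exp (fc n x))
      Filter.atTop (nhds (∑' x, π x * Real.exp (f x))) := by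
    apply tendsto_tsum_of_dominated_convergence
      (bound := fun x => π x * Real.exp (f x) + π x) (hsef.add hπ.2.summable)
    · intro x
      apply tendsto_atTop_of_eventually_const (i₀ := ⌈|f x|⌉₊)
      intro n hn
      rw [hptf x n hn]
    · apply Filter.Eventually.of_forall
      intro n x
      rw [Real.norm_eq_abs, abs_mul, abs_of_nonneg (hπ.1 x),
        abs_of_pos (Real.exp_pos _)]
      have hexp : Real.exp (fc n x) ≤ Real.exp (f x) + 1 := by
        calc Real.exp (fc n x) ≤ Real.exp (max (f x) 0) := Real.exp_le_exp.2 (hfcle n x)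
          _ ≤ Real.exp (f x) + 1 := by
            rcases le_total (f x) 0 with h | h
            · rw [max_eq_right h, Real.exp_zero]
              linarith [Real.exp_pos (f x)]
            · rw [max_eq_left h]
              linarith [Real.exp_pos (0:ℝ)]
      calc π x * Real.exp (fc n x) ≤ π x * (Real.exp (f x) + 1) :=
            mul_le_mul_of_nonneg_left hexp (hπ.1 x)
        _ = π x * Real.exp (f x) + π x := by ring
  have Tr : Filter.Tendsto (fun n => Real.exp ((∑' x, π x * fc n x) + c' * L ^ 2))
      Filter.atTop (nhds (Real.exp ((∑' x, π x * f x) + c' * L ^ 2))) :=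
    (Real.continuous_exp.tendsto _).comp (T1.add tendsto_const_nhds)
  exact le_of_tendsto_of_tendsto' T2 Tr hbc


/-- if every one-step distribution `p(x,·)` is supported on a set of
diameter at most `Δ` and the coarse Ricci curvature is at least `1/α`, then the
stationary measure `π` satisfies Gaussian concentration with constant
`Δ²α/(8(2−1/α))`. -/
theorem stationary_gaussian_concentration {Ω : Type*} [MetricSpace Ω] [Countable Ω]
    (p : Ω → Ω → ℝ) (π : Ω → ℝ) (α Δ : ℝ)
    (hp : ∀ x, IsProb (p x)) (hα : 1 ≤ α) (hΔ : 0 ≤ Δ)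
    (hdiam : ∀ x y z, p x y ≠ 0 → p x z ≠ 0 → dist y z ≤ Δ)
    (hcurv : ∀ x y : Ω, W1 (fun a b => dist a b) (p x) (p y) ≤ (1 - 1/α) * dist x y)
    (hπ : IsProb π)
    (hstat : ∀ y, HasSum (fun x => π x * p x y) (π y)) :
    GaussConc (fun a b => dist a b) π (Δ ^ 2 * α / (8 * (2 - 1/α))) := by
  exact stationary_gaussian_concentration' p π α Δ hp hα hΔ hdiam hcurv hπ hstat
end
end
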